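/- arXiv:2102.07876 — 6 statements merged into one kernel-verified Lean document; each statement's English description precedes it below -/
import Mathlib

section
/- Let Q ⊂ ℝ^D be a bounded domain and let V_n : Q → ℝ be a sequence of measurable functions with sup_n ‖V_n‖_{L^∞(Q)} < ∞, and let {s_{n,N}} be a regular summation method. Suppose there exists V ∈ L^∞(Q) such that for every ε > 0 the set S(ε) = { (n,m) ∈ ℕ×ℕ : s_{n,M} s_{m,M} |∫_Q (V_n − V)(V_m − V) dx| < ε for all M ∈ ℕ } is statistically significant. Then the weighted averages (1/N) Σ_{n=1}^N s_{n,N} V_n converge to V in L^q(Q) as N → ∞, for every 1 ≤ q < ∞. -/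
open MeasureTheory Filter Finset
open scoped ENNReal

/-- A regular summation method with uniform bound `sbar`. -/
def IsRegularSummation (s : ℕ → ℕ → ℝ) (sbar : ℝ) : Prop :=
  (∀ n N, 0 ≤ s n N) ∧ (∀ n N, s n N ≤ sbar) ∧
  (∀ n N, N < n → s n N = 0) ∧
  (∀ N : ℕ, ∑ n ∈ Finset.Icc 1 N, s n N = (N : ℝ))

/-- A set `S ⊆ ℕ × ℕ` is statistically significant if
`#{(n,m) ∈ S : n, m ≤ N} / N² → 1` as `N → ∞`. -/
def StatSignificant (S : Set (ℕ × ℕ)) : Prop :=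
  Filter.Tendsto
    (fun N : ℕ => ((S ∩ {p : ℕ × ℕ | p.1 ≤ N ∧ p.2 ≤ N}).ncard : ℝ) / (N : ℝ) ^ 2)
    Filter.atTop (nhds 1)

/-- Lemma 3.2 of the paper: if for every `ε > 0` the set
`S(ε) = {(n,m) : s_{n,M} s_{m,M} |∫_Q (V_n − V)(V_m − V)| < ε for all M}`
is statistically significant, then the weighted averages `(1/N) ∑_{n=1}^N s_{n,N} V_n`
converge to `V` in `L^q(Q)` for every `1 ≤ q < ∞`. -/
theorem weighted_averages_tendsto_of_statSignificant
    {D : ℕ} (Q : Set (EuclideanSpace ℝ (Fin D)))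
    (hQopen : IsOpen Q) (hQbdd : Bornology.IsBounded Q)
    (V : ℕ → EuclideanSpace ℝ (Fin D) → ℝ)
    (hVmeas : ∀ n, Measurable (V n))
    (C : ℝ) (hC : ∀ n, ∀ᵐ x ∂(volume.restrict Q), |V n x| ≤ C)
    (s : ℕ → ℕ → ℝ) (sbar : ℝ) (hreg : IsRegularSummation s sbar)
    (Vlim : EuclideanSpace ℝ (Fin D) → ℝ)
    (hVlim : MemLp Vlim ⊤ (volume.restrict Q))
    (hsig : ∀ ε : ℝ, 0 < ε → StatSignificant
      {p : ℕ × ℕ | ∀ M : ℕ, s p.1 M * s p.2 M *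
        |∫ x in Q, (V p.1 x - Vlim x) * (V p.2 x - Vlim x)| < ε}) :
    ∀ q : ℝ≥0∞, 1 ≤ q → q ≠ ⊤ →
      Filter.Tendsto (fun N : ℕ =>
        eLpNorm (fun x => (1 / (N : ℝ)) * ∑ n ∈ Finset.Icc 1 N, s n N * V n x - Vlim x)
          q (volume.restrict Q)) Filter.atTop (nhds 0) := by
  classical
  intro q hq1 hqtop
  obtain ⟨hs0, hsb, hsz, hssum⟩ := hreg
  have hsbar0 : 0 ≤ sbar := (hs0 0 0).trans (hsb 0 0)
  set μ : Measure (EuclideanSpace ℝ (Fin D)) := volume.restrict Q with hμdef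
  haveI : IsFiniteMeasure μ := ⟨by
    rw [hμdef, Measure.restrict_apply_univ]; exact hQbdd.measure_lt_top⟩
  -- a.e. bound on Vlim
  set C' : ℝ := (eLpNorm Vlim ⊤ μ).toReal with hC'def
  have hC'0 : 0 ≤ C' := ENNReal.toReal_nonneg
  have hVlimae : ∀ᵐ x ∂μ, |Vlim x| ≤ C' := by
    have h1 : ∀ᵐ x ∂μ, (‖Vlim x‖₊ : ℝ≥0∞) ≤ eLpNormEssSup Vlim μ := ae_le_eLpNormEssSup
    have hne : eLpNormEssSup Vlim μ ≠ ∞ := by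
      have := hVlim.2
      rwa [eLpNorm_exponent_top, lt_top_iff_ne_top] at this
    filter_upwards [h1] with x hx
    have : ((‖Vlim x‖₊ : ℝ≥0∞)).toReal ≤ (eLpNormEssSup Vlim μ).toReal :=
      ENNReal.toReal_mono hne hx
    simpa [hC'def, eLpNorm_exponent_top, Real.norm_eq_abs] using this
  set C₀ : ℝ := max C 0 with hC₀def
  have hC₀0 : 0 ≤ C₀ := le_max_right _ _
  have hVae : ∀ n, ∀ᵐ x ∂μ, |V n x| ≤ C₀ :=
    fun n => (hC n).mono fun x hx => hx.trans (le_max_left _ _)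
  set K : ℝ := C₀ + C' with hKdef
  have hK0 : 0 ≤ K := add_nonneg hC₀0 hC'0
  have hfae : ∀ n, ∀ᵐ x ∂μ, |V n x - Vlim x| ≤ K := by
    intro n
    filter_upwards [hVae n, hVlimae] with x h1 h2
    calc |V n x - Vlim x| ≤ |V n x| + |Vlim x| := abs_sub _ _
    _ ≤ C₀ + C' := add_le_add h1 h2
  have hfmeas : ∀ n, AEStronglyMeasurable (fun x => V n x - Vlim x) μ :=
    fun n => (hVmeas n).aestronglyMeasurable.sub hVlim.aestronglyMeasurable
  -- the correlation integrals
  set I : ℕ → ℕ → ℝ := fun n m => ∫ x, (V n x - Vlim x) * (V m x - Vlim x) ∂μ with hIdef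
  have hprodmeas : ∀ n m, AEStronglyMeasurable (fun x => (V n x - Vlim x) * (V m x - Vlim x)) μ :=
    fun n m => (hfmeas n).mul (hfmeas m)
  have hprodbound : ∀ n m, ∀ᵐ x ∂μ, ‖(V n x - Vlim x) * (V m x - Vlim x)‖ ≤ K * K := by
    intro n m
    filter_upwards [hfae n, hfae m] with x h1 h2
    rw [Real.norm_eq_abs, abs_mul]
    exact mul_le_mul h1 h2 (abs_nonneg _) hK0
  have hInt : ∀ n m, Integrable (fun x => (V n x - Vlim x) * (V m x - Vlim x)) μ :=
    fun n m => memLp_one_iff_integrable.mp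
      (MemLp.of_bound (hprodmeas n m) (K * K) (hprodbound n m))
  set B : ℝ := K * K * (μ Set.univ).toReal with hBdef
  have hB0 : 0 ≤ B := mul_nonneg (mul_nonneg hK0 hK0) ENNReal.toReal_nonneg
  have hIbound : ∀ n m, |I n m| ≤ B := by
    intro n m
    have := norm_integral_le_of_norm_le_const (μ := μ) (hprodbound n m)
    simpa [hIdef, Real.norm_eq_abs, hBdef, Measure.real] using this
  -- the averaged functions
  set F : ℕ → EuclideanSpace ℝ (Fin D) → ℝ :=
    fun N x => (1 / (N : ℝ)) * ∑ n ∈ Finset.Icc 1 N, s n N * V n x with hFdef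
  have hFmeas : ∀ N, AEStronglyMeasurable (F N) μ := by
    intro N
    exact ((Finset.measurable_sum _ fun n _ => (measurable_const.mul (hVmeas n))).const_mul
      _).aestronglyMeasurable
  have hFbound : ∀ N, ∀ᵐ x ∂μ, ‖F N x‖ ≤ C₀ := by
    intro N
    have hall : ∀ᵐ x ∂μ, ∀ n, |V n x| ≤ C₀ := (ae_all_iff).2 hVae
    filter_upwards [hall] with x hx
    rcases Nat.eq_zero_or_pos N with h0 | hpos
    · subst h0; simp [hFdef, hC₀0]
    have hNne : (N : ℝ) ≠ 0 := Nat.cast_ne_zero.mpr hpos.ne'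
    have h1 : |∑ n ∈ Finset.Icc 1 N, s n N * V n x| ≤ (N : ℝ) * C₀ := by
      calc |∑ n ∈ Finset.Icc 1 N, s n N * V n x|
          ≤ ∑ n ∈ Finset.Icc 1 N, |s n N * V n x| := Finset.abs_sum_le_sum_abs _ _
      _ ≤ ∑ n ∈ Finset.Icc 1 N, s n N * C₀ := by
          refine Finset.sum_le_sum fun n _ => ?_
          rw [abs_mul, abs_of_nonneg (hs0 n N)]
          exact mul_le_mul_of_nonneg_left (hx n) (hs0 n N)
      _ = (N : ℝ) * C₀ := by rw [← Finset.sum_mul, hssum N]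
    rw [Real.norm_eq_abs, hFdef]
    rw [abs_mul, abs_of_nonneg (by positivity : (0:ℝ) ≤ 1 / (N:ℝ))]
    calc 1 / (N : ℝ) * |∑ n ∈ Finset.Icc 1 N, s n N * V n x|
        ≤ 1 / (N : ℝ) * ((N : ℝ) * C₀) := by
          exact mul_le_mul_of_nonneg_left h1 (by positivity)
    _ = C₀ := by field_simp
  -- expansion of the square of the sum
  have hexp : ∀ N : ℕ,
      (∫ x, (∑ n ∈ Finset.Icc 1 N, s n N * (V n x - Vlim x)) ^ 2 ∂μ)
        = ∑ p ∈ Finset.Icc 1 N ×ˢ Finset.Icc 1 N, s p.1 N * s p.2 N * I p.1 p.2 := by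
    intro N
    have h1 : ∀ x, (∑ n ∈ Finset.Icc 1 N, s n N * (V n x - Vlim x)) ^ 2
        = ∑ p ∈ Finset.Icc 1 N ×ˢ Finset.Icc 1 N,
            (s p.1 N * s p.2 N) * ((V p.1 x - Vlim x) * (V p.2 x - Vlim x)) := by
      intro x
      rw [sq, Finset.sum_mul_sum, Finset.sum_product]
      exact Finset.sum_congr rfl fun n _ => Finset.sum_congr rfl fun m _ => by ring
    simp_rw [h1]
    rw [integral_finset_sum]
    · exact Finset.sum_congr rfl fun p _ => by
        rw [integral_const_mul]
    · intro p _
      exact (hInt p.1 p.2).const_mul _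
  -- the key L² quantity
  set u : ℕ → ℝ := fun N =>
    ∫ x, ((1 / (N : ℝ)) * ∑ n ∈ Finset.Icc 1 N, s n N * (V n x - Vlim x)) ^ 2 ∂μ with hudef
  have hu0 : ∀ N, 0 ≤ u N := fun N => integral_nonneg fun x => sq_nonneg _
  have huexp : ∀ N, u N = (1 / (N : ℝ)) ^ 2 *
      ∑ p ∈ Finset.Icc 1 N ×ˢ Finset.Icc 1 N, s p.1 N * s p.2 N * I p.1 p.2 := by
    intro N
    rw [hudef, ← hexp N]
    simp_rw [mul_pow]
    rw [integral_const_mul]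
  -- the key convergence: u → 0
  have key : Tendsto u atTop (nhds 0) := by
    rw [NormedAddCommGroup.tendsto_nhds_zero]
    intro ε hε
    have hε2 : 0 < ε / 2 := half_pos hε
    set S : Set (ℕ × ℕ) := {p : ℕ × ℕ | ∀ M : ℕ, s p.1 M * s p.2 M *
        |∫ x, (V p.1 x - Vlim x) * (V p.2 x - Vlim x) ∂μ| < ε / 2} with hSdef
    have hS : StatSignificant S := hsig (ε / 2) hε2
    -- counting
    set bad : ℕ → Finset (ℕ × ℕ) :=
      fun N => (Finset.Icc 1 N ×ˢ Finset.Icc 1 N).filter (fun p => p ∉ S) with hbaddef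
    have hcount : ∀ N : ℕ,
        (S ∩ {p : ℕ × ℕ | p.1 ≤ N ∧ p.2 ≤ N}).ncard + (bad N).card ≤ (N + 1) ^ 2 := by
      intro N
      have hbox : (S ∩ {p : ℕ × ℕ | p.1 ≤ N ∧ p.2 ≤ N}) =
          ↑((Finset.range (N+1) ×ˢ Finset.range (N+1)).filter (fun p => p ∈ S)) := by
        ext p
        simp [Finset.mem_filter, Finset.mem_product, Finset.mem_range, Nat.lt_succ_iff,
          Set.mem_inter_iff, and_comm]
      rw [hbox, Set.ncard_coe_finset]
      have hsub : ((Finset.range (N+1) ×ˢ Finset.range (N+1)).filter (fun p => p ∈ S)) ∪ bad N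
          ⊆ Finset.range (N+1) ×ˢ Finset.range (N+1) := by
        intro p hp
        rcases Finset.mem_union.mp hp with hp | hp
        · exact (Finset.mem_filter.mp hp).1
        · have := (Finset.mem_filter.mp hp).1
          rw [Finset.mem_product] at this ⊢
          rw [Finset.mem_Icc, Finset.mem_Icc] at this
          exact ⟨Finset.mem_range.mpr (Nat.lt_succ_of_le this.1.2),
            Finset.mem_range.mpr (Nat.lt_succ_of_le this.2.2)⟩
      have hdisj : Disjoint ((Finset.range (N+1) ×ˢ Finset.range (N+1)).filter
          (fun p => p ∈ S)) (bad N) := by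
        refine Finset.disjoint_left.mpr fun p hp hp' => ?_
        exact (Finset.mem_filter.mp hp').2 (Finset.mem_filter.mp hp).2
      calc _ = (((Finset.range (N+1) ×ˢ Finset.range (N+1)).filter (fun p => p ∈ S))
            ∪ bad N).card := (Finset.card_union_of_disjoint hdisj).symm
      _ ≤ (Finset.range (N+1) ×ˢ Finset.range (N+1)).card := Finset.card_le_card hsub
      _ = (N + 1) ^ 2 := by rw [Finset.card_product, Finset.card_range]; ring
    -- the upper bound function
    set r : ℕ → ℝ := fun N => ε / 2 + ((bad N).card : ℝ) / (N : ℝ) ^ 2 * (sbar * sbar * B)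
      with hrdef
    have hbadtends : Tendsto (fun N : ℕ => ((bad N).card : ℝ) / (N : ℝ) ^ 2) atTop (nhds 0) := by
      have hupper : Tendsto (fun N : ℕ => ((N : ℝ) + 1) ^ 2 / (N : ℝ) ^ 2
          - ((S ∩ {p : ℕ × ℕ | p.1 ≤ N ∧ p.2 ≤ N}).ncard : ℝ) / (N : ℝ) ^ 2)
          atTop (nhds 0) := by
        have h1 : Tendsto (fun N : ℕ => ((N : ℝ) + 1) ^ 2 / (N : ℝ) ^ 2) atTop (nhds 1) := by
          have h2 : Tendsto (fun N : ℕ => (1 + 1 / (N : ℝ)) ^ 2) atTop (nhds 1) := by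
            have := ((tendsto_const_nhds (x := (1:ℝ))
              (f := (atTop : Filter ℕ))).add
              tendsto_one_div_atTop_nhds_zero_nat).pow 2
            simpa using this
          refine h2.congr' ?_
          filter_upwards [eventually_ge_atTop 1] with N hN
          have hNne : (N : ℝ) ≠ 0 := Nat.cast_ne_zero.mpr (by omega)
          field_simp
        have := h1.sub hS
        simpa using this
      refine tendsto_of_tendsto_of_tendsto_of_le_of_le' tendsto_const_nhds hupper ?_ ?_
      · filter_upwards with N
        exact div_nonneg (Nat.cast_nonneg _) (sq_nonneg _)
      · filter_upwards [eventually_ge_atTop 1] with N hN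
        have hN2 : (0:ℝ) < (N : ℝ) ^ 2 := by
          have : (0:ℝ) < (N:ℝ) := by exact_mod_cast Nat.pos_of_ne_zero (by omega)
          positivity
        rw [← sub_div]
        gcongr
        have := hcount N
        have hcast : ((S ∩ {p : ℕ × ℕ | p.1 ≤ N ∧ p.2 ≤ N}).ncard : ℝ) + ((bad N).card : ℝ)
            ≤ ((N : ℝ) + 1) ^ 2 := by exact_mod_cast this
        linarith
    have hrtends : Tendsto r atTop (nhds (ε / 2)) := by
      have := (tendsto_const_nhds (x := ε / 2)
        (f := (atTop : Filter ℕ))).add (hbadtends.mul_const (sbar * sbar * B))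
      simpa using this
    have hrlt : ∀ᶠ N in atTop, r N < ε := hrtends.eventually_lt_const (by linarith)
    -- main estimate
    have hmain : ∀ N : ℕ, 1 ≤ N → u N ≤ r N := by
      intro N hN
      have hNne : (N : ℝ) ≠ 0 := Nat.cast_ne_zero.mpr (by omega)
      have hsumest : ∑ p ∈ Finset.Icc 1 N ×ˢ Finset.Icc 1 N, s p.1 N * s p.2 N * I p.1 p.2
          ≤ (N : ℝ) ^ 2 * (ε / 2) + ((bad N).card : ℝ) * (sbar * sbar * B) := by
        have habs : ∀ p : ℕ × ℕ, |s p.1 N * s p.2 N * I p.1 p.2|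
            = s p.1 N * s p.2 N * |I p.1 p.2| := by
          intro p
          rw [abs_mul, abs_mul, abs_of_nonneg (hs0 _ _), abs_of_nonneg (hs0 _ _)]
        calc ∑ p ∈ Finset.Icc 1 N ×ˢ Finset.Icc 1 N, s p.1 N * s p.2 N * I p.1 p.2
            ≤ ∑ p ∈ Finset.Icc 1 N ×ˢ Finset.Icc 1 N, |s p.1 N * s p.2 N * I p.1 p.2| :=
              Finset.sum_le_sum fun p _ => le_abs_self _
        _ = (∑ p ∈ (Finset.Icc 1 N ×ˢ Finset.Icc 1 N).filter (fun p => p ∈ S),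
              |s p.1 N * s p.2 N * I p.1 p.2|)
            + ∑ p ∈ bad N, |s p.1 N * s p.2 N * I p.1 p.2| :=
              (Finset.sum_filter_add_sum_filter_not _ _ _).symm
        _ ≤ (N : ℝ) ^ 2 * (ε / 2) + ((bad N).card : ℝ) * (sbar * sbar * B) := by
            gcongr ?_ + ?_
            · calc (∑ p ∈ (Finset.Icc 1 N ×ˢ Finset.Icc 1 N).filter (fun p => p ∈ S),
                    |s p.1 N * s p.2 N * I p.1 p.2|)
                  ≤ ∑ _p ∈ (Finset.Icc 1 N ×ˢ Finset.Icc 1 N).filter (fun p => p ∈ S),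
                    (ε / 2) := by
                    refine Finset.sum_le_sum fun p hp => ?_
                    have hpS : p ∈ S := (Finset.mem_filter.mp hp).2
                    rw [habs p]
                    exact le_of_lt (hpS N)
              _ = (((Finset.Icc 1 N ×ˢ Finset.Icc 1 N).filter
                    (fun p => p ∈ S)).card : ℝ) * (ε / 2) := by
                    rw [Finset.sum_const, nsmul_eq_mul]
              _ ≤ (N : ℝ) ^ 2 * (ε / 2) := by
                    gcongr
                    have h1 : ((Finset.Icc 1 N ×ˢ Finset.Icc 1 N).filter
                        (fun p => p ∈ S)).card ≤ N ^ 2 := by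
                      calc _ ≤ (Finset.Icc 1 N ×ˢ Finset.Icc 1 N).card :=
                            Finset.card_filter_le _ _
                      _ = N ^ 2 := by
                            rw [Finset.card_product, Nat.card_Icc, Nat.add_sub_cancel, sq]
                    exact_mod_cast h1
            · calc ∑ p ∈ bad N, |s p.1 N * s p.2 N * I p.1 p.2|
                  ≤ ∑ _p ∈ bad N, sbar * sbar * B := by
                    refine Finset.sum_le_sum fun p _ => ?_
                    rw [habs p]
                    have h1 : s p.1 N * s p.2 N ≤ sbar * sbar :=
                      mul_le_mul (hsb _ _) (hsb _ _) (hs0 _ _) hsbar0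
                    exact mul_le_mul h1 (hIbound _ _) (abs_nonneg _)
                      (mul_nonneg hsbar0 hsbar0)
              _ = ((bad N).card : ℝ) * (sbar * sbar * B) := by
                    rw [Finset.sum_const, nsmul_eq_mul]
      rw [huexp N]
      calc (1 / (N : ℝ)) ^ 2 *
          ∑ p ∈ Finset.Icc 1 N ×ˢ Finset.Icc 1 N, s p.1 N * s p.2 N * I p.1 p.2
          ≤ (1 / (N : ℝ)) ^ 2 *
            ((N : ℝ) ^ 2 * (ε / 2) + ((bad N).card : ℝ) * (sbar * sbar * B)) := by
            exact mul_le_mul_of_nonneg_left hsumest (by positivity)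
      _ = r N := by rw [hrdef]; field_simp
    filter_upwards [hrlt, eventually_ge_atTop 1] with N h1 h2
    rw [Real.norm_eq_abs, abs_of_nonneg (hu0 N)]
    exact lt_of_le_of_lt (hmain N h2) h1
  -- upgrade to L² eLpNorm convergence
  have hmemF2 : ∀ N, MemLp (F N) 2 μ :=
    fun N => MemLp.of_bound (hFmeas N) C₀ (hFbound N)
  have hVlim2 : MemLp Vlim 2 μ := hVlim.mono_exponent le_top
  have hsub2 : ∀ N, MemLp (F N - Vlim) 2 μ := fun N => (hmemF2 N).sub hVlim2
  have hL2 : Tendsto (fun N => eLpNorm (F N - Vlim) 2 μ) atTop (nhds 0) := by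
    have heq : ∀ N : ℕ, 1 ≤ N → eLpNorm (F N - Vlim) 2 μ
        = ENNReal.ofReal ((u N) ^ ((2:ℝ))⁻¹) := by
      intro N hN
      have hNne : (N : ℝ) ≠ 0 := Nat.cast_ne_zero.mpr (by omega)
      have h1 := (hsub2 N).eLpNorm_eq_integral_rpow_norm two_ne_zero ENNReal.ofNat_ne_top
      rw [h1]
      congr 1
      have h2 : (∫ x, ‖(F N - Vlim) x‖ ^ (2:ℝ≥0∞).toReal ∂μ) = u N := by
        rw [hudef]
        refine integral_congr_ae (Eventually.of_forall fun x => ?_)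
        simp only [Pi.sub_apply, hFdef]
        have h4 : ∑ n ∈ Finset.Icc 1 N, s n N * (V n x - Vlim x)
            = (∑ n ∈ Finset.Icc 1 N, s n N * V n x) - (N : ℝ) * Vlim x := by
          simp_rw [mul_sub]
          rw [Finset.sum_sub_distrib, ← Finset.sum_mul, hssum N]
        have h3 : (1 / (N : ℝ)) * ∑ n ∈ Finset.Icc 1 N, s n N * V n x - Vlim x
            = (1 / (N : ℝ)) * ∑ n ∈ Finset.Icc 1 N, s n N * (V n x - Vlim x) := by
          rw [h4, mul_sub]
          congr 1
          field_simp
        rw [h3]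
        have h5 : (2:ℝ≥0∞).toReal = (2:ℝ) := by simp
        rw [h5, Real.norm_eq_abs, Real.rpow_two, sq_abs]
      rw [h2]
      norm_num
    have h6 : Tendsto (fun N => ENNReal.ofReal ((u N) ^ ((2:ℝ))⁻¹)) atTop (nhds 0) := by
      have h7 : Tendsto (fun N => (u N) ^ ((2:ℝ))⁻¹) atTop (nhds 0) := by
        have h8 : ContinuousAt (fun x : ℝ => x ^ ((2:ℝ))⁻¹) 0 :=
          Real.continuousAt_rpow_const 0 _ (Or.inr (by norm_num))
        have := h8.tendsto.comp key
        simpa [Function.comp_def, Real.zero_rpow (by norm_num : ((2:ℝ))⁻¹ ≠ 0)] using this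
      have := (ENNReal.continuous_ofReal.tendsto 0).comp h7
      simpa [Function.comp_def] using this
    refine h6.congr' ?_
    filter_upwards [eventually_ge_atTop 1] with N hN
    exact (heq N hN).symm
  -- convergence in measure
  have hTIM : TendstoInMeasure μ F atTop Vlim :=
    tendstoInMeasure_of_tendsto_eLpNorm (two_ne_zero) hFmeas
      hVlim.aestronglyMeasurable hL2
  -- uniform integrability
  have hui : UnifIntegrable F q μ := by
    refine unifIntegrable_of hq1 hqtop hFmeas fun ε hε => ?_
    refine ⟨C₀.toNNReal + 1, fun i => ?_⟩
    have hzero : {x | (C₀.toNNReal + 1 : NNReal) ≤ ‖F i x‖₊}.indicator (F i) =ᵐ[μ] 0 := by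
      filter_upwards [hFbound i] with x hx
      rw [Set.indicator_of_notMem]
      · rfl
      · intro hmem
        simp only [Set.mem_setOf_eq] at hmem
        have h2 : ((C₀.toNNReal + 1 : NNReal) : ℝ) ≤ ‖F i x‖ := by
          exact_mod_cast hmem
        have h3 : C₀ ≤ (C₀.toNNReal : ℝ) := Real.le_coe_toNNReal C₀
        push_cast at h2
        linarith
    calc eLpNorm ({x | (C₀.toNNReal + 1 : NNReal) ≤ ‖F i x‖₊}.indicator (F i)) q μ
        = 0 := by rw [eLpNorm_congr_ae hzero, eLpNorm_zero]
    _ ≤ ENNReal.ofReal ε := by positivity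
  -- Vitali
  have hfinal := tendsto_Lp_finite_of_tendstoInMeasure hq1 hqtop hFmeas
    (hVlim.mono_exponent le_top) hui hTIM
  exact hfinal.congr fun N => rfl
end

section
/- Let Q ⊂ ℝ^D be a bounded domain and let V_n : Q → ℝ be a sequence of measurable functions with sup_n ‖V_n‖_{L^∞(Q)} < ∞. Suppose there exists V ∈ L^∞(Q) such that for every ε > 0 the set S_ε = { (n,m) ∈ ℕ×ℕ : |∫_Q (V_n − V)(V_m − V) dx| < ε } is statistically significant. Then for every regular summation method {s_{n,N}} and every 1 ≤ q < ∞, the weighted averages (1/N) Σ_{n=1}^N s_{n,N} V_n converge to V in L^q(Q) as N → ∞. -/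
open MeasureTheory Filter Finset
open scoped ENNReal
open scoped Topology NNReal

/-- Corollary 3.3 of the paper: if for every `ε > 0` the set
`S_ε = {(n,m) : |∫_Q (V_n − V)(V_m − V)| < ε}` is statistically significant, then
for every regular summation method the weighted averages `(1/N) ∑_{n=1}^N s_{n,N} V_n`
converge to `V` in `L^q(Q)` for every `1 ≤ q < ∞`. -/
theorem weighted_averages_tendsto_of_statSignificant_all_methods
    {D : ℕ} (Q : Set (EuclideanSpace ℝ (Fin D)))
    (hQopen : IsOpen Q) (hQbdd : Bornology.IsBounded Q)
    (V : ℕ → EuclideanSpace ℝ (Fin D) → ℝ)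
    (hVmeas : ∀ n, Measurable (V n))
    (C : ℝ) (hC : ∀ n, ∀ᵐ x ∂(volume.restrict Q), |V n x| ≤ C)
    (Vlim : EuclideanSpace ℝ (Fin D) → ℝ)
    (hVlim : MemLp Vlim ⊤ (volume.restrict Q))
    (hsig : ∀ ε : ℝ, 0 < ε → StatSignificant
      {p : ℕ × ℕ |
        |∫ x in Q, (V p.1 x - Vlim x) * (V p.2 x - Vlim x)| < ε}) :
    ∀ (s : ℕ → ℕ → ℝ) (sbar : ℝ), IsRegularSummation s sbar →
      ∀ q : ℝ≥0∞, 1 ≤ q → q ≠ ⊤ →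
        Filter.Tendsto (fun N : ℕ =>
          eLpNorm (fun x => (1 / (N : ℝ)) * ∑ n ∈ Finset.Icc 1 N, s n N * V n x - Vlim x)
            q (volume.restrict Q)) Filter.atTop (nhds 0) := by
  classical
  intro s sbar hreg q hq1 hqtop
  obtain ⟨hs0, hsb, -, hssum⟩ := hreg
  set μ := volume.restrict Q with hμdef
  haveI hfin : IsFiniteMeasure μ := by
    constructor
    rw [hμdef, Measure.restrict_apply_univ]
    exact hQbdd.measure_lt_top
  -- `sbar ≥ 1`
  have hsbar1 : (1 : ℝ) ≤ sbar := by
    have h1 := hssum 1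
    rw [Finset.Icc_self, Finset.sum_singleton] at h1
    have := hsb 1 1
    rw [h1] at this
    exact_mod_cast this
  have hsbarpos : (0 : ℝ) < sbar := lt_of_lt_of_le one_pos hsbar1
  -- uniform bounds
  set C' := max C 0 with hC'def
  have hC'0 : (0 : ℝ) ≤ C' := le_max_right _ _
  have haeV : ∀ᵐ x ∂μ, ∀ n, |V n x| ≤ C' := by
    rw [ae_all_iff]
    intro n
    filter_upwards [hC n] with x hx using hx.trans (le_max_left _ _)
  set D0 := (eLpNormEssSup Vlim μ).toReal with hD0def
  have hD00 : (0 : ℝ) ≤ D0 := ENNReal.toReal_nonneg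
  have htopne : eLpNormEssSup Vlim μ ≠ ⊤ := by
    have h := hVlim.2
    rw [eLpNorm_exponent_top] at h
    exact h.ne
  have haeVlim : ∀ᵐ x ∂μ, |Vlim x| ≤ D0 := by
    filter_upwards [ae_le_eLpNormEssSup (f := Vlim) (μ := μ)] with x hx
    have h2 : ((‖Vlim x‖₊ : ℝ≥0∞)).toReal ≤ D0 := ENNReal.toReal_mono htopne hx
    simpa [Real.norm_eq_abs] using h2
  set K := C' + D0 with hKdef
  have hK0 : (0 : ℝ) ≤ K := add_nonneg hC'0 hD00
  have hWmeas : ∀ n, AEStronglyMeasurable (fun x => V n x - Vlim x) μ := fun n =>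
    ((hVmeas n).aestronglyMeasurable).sub hVlim.aestronglyMeasurable
  have haeW : ∀ᵐ x ∂μ, ∀ n, |V n x - Vlim x| ≤ K := by
    filter_upwards [haeV, haeVlim] with x h1 h2 n
    have := abs_sub (V n x) (Vlim x)
    have h1n := h1 n
    rw [hKdef]
    linarith
  have hWint : ∀ n m, Integrable (fun x => (V n x - Vlim x) * (V m x - Vlim x)) μ := by
    intro n m
    have hm : Integrable (fun x => V m x - Vlim x) μ := by
      have hmem : MemLp (fun x => V m x - Vlim x) ⊤ μ :=
        memLp_top_of_bound (hWmeas m) K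
          (by filter_upwards [haeW] with x hx using by simpa [Real.norm_eq_abs] using hx m)
      exact memLp_one_iff_integrable.1 (hmem.mono_exponent le_top)
    exact hm.bdd_mul (hWmeas n)
      (by filter_upwards [haeW] with x hx using by simpa [Real.norm_eq_abs] using hx n)
  set M := K ^ 2 * (μ Set.univ).toReal with hMdef
  have hM0 : (0 : ℝ) ≤ M := mul_nonneg (sq_nonneg _) ENNReal.toReal_nonneg
  have hIbdd : ∀ n m, |∫ x, (V n x - Vlim x) * (V m x - Vlim x) ∂μ| ≤ M := by
    intro n m
    have h := norm_integral_le_of_norm_le_const (μ := μ)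
      (f := fun x => (V n x - Vlim x) * (V m x - Vlim x)) (C := K ^ 2) ?_
    · simpa [Real.norm_eq_abs, hMdef, measureReal_def] using h
    · filter_upwards [haeW] with x hx
      rw [Real.norm_eq_abs, abs_mul, sq]
      exact mul_le_mul (hx n) (hx m) (abs_nonneg _) hK0
  -- the averaged functions
  set F : ℕ → EuclideanSpace ℝ (Fin D) → ℝ :=
    fun N x => (1 / (N : ℝ)) * ∑ n ∈ Finset.Icc 1 N, s n N * V n x with hFdef
  have hFmeas : ∀ N, AEStronglyMeasurable (F N) μ := by
    intro N
    have : Measurable (F N) := by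
      rw [hFdef]
      exact measurable_const.mul (Finset.measurable_sum _ fun n _ => measurable_const.mul (hVmeas n))
    exact this.aestronglyMeasurable
  have hFbound : ∀ N, ∀ᵐ x ∂μ, |F N x| ≤ C' := by
    intro N
    filter_upwards [haeV] with x hx
    have h1 : |F N x| ≤ (1 / (N : ℝ)) * ∑ n ∈ Finset.Icc 1 N, s n N * C' := by
      rw [hFdef]
      simp only []
      rw [abs_mul, abs_of_nonneg (by positivity : (0:ℝ) ≤ 1 / (N : ℝ))]
      refine mul_le_mul_of_nonneg_left ?_ (by positivity)
      refine (Finset.abs_sum_le_sum_abs _ _).trans (Finset.sum_le_sum fun n _ => ?_)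
      rw [abs_mul, abs_of_nonneg (hs0 n N)]
      exact mul_le_mul_of_nonneg_left (hx n) (hs0 n N)
    rw [← Finset.sum_mul, hssum N] at h1
    rcases Nat.eq_zero_or_pos N with h | h
    · subst h
      refine h1.trans ?_
      norm_num
      exact hC'0
    · have hN0 : (N : ℝ) ≠ 0 := Nat.cast_ne_zero.2 h.ne'
      refine h1.trans (le_of_eq ?_)
      field_simp
  have hhmeas : ∀ N, AEStronglyMeasurable (fun x => F N x - Vlim x) μ := fun N =>
    (hFmeas N).sub hVlim.aestronglyMeasurable
  have hhbound : ∀ N, ∀ᵐ x ∂μ, ‖F N x - Vlim x‖ ≤ K := by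
    intro N
    filter_upwards [hFbound N, haeVlim] with x h1 h2
    rw [Real.norm_eq_abs, hKdef]
    have := abs_sub (F N x) (Vlim x)
    linarith
  have hhmem2 : ∀ N, MemLp (fun x => F N x - Vlim x) 2 μ := fun N =>
    (memLp_top_of_bound (hhmeas N) K (hhbound N)).mono_exponent le_top
  -- the quadratic quantity
  set T : ℕ → ℝ := fun N => ∫ x, (F N x - Vlim x) ^ 2 ∂μ with hTdef
  have hT0 : ∀ N, 0 ≤ T N := fun N => integral_nonneg fun x => sq_nonneg _
  -- main L² estimate
  have hTlim : Tendsto T atTop (𝓝 0) := by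
    rw [tendsto_order]
    constructor
    · intro a ha
      exact Eventually.of_forall fun N => lt_of_lt_of_le ha (hT0 N)
    · intro δ hδ
      set ε := δ / (2 * sbar ^ 2) with hεdef
      have hε : 0 < ε := div_pos hδ (by positivity)
      set S := {p : ℕ × ℕ |
        |∫ x, (V p.1 x - Vlim x) * (V p.2 x - Vlim x) ∂μ| < ε} with hSdef
      have hS : Tendsto
          (fun N : ℕ => ((S ∩ {p : ℕ × ℕ | p.1 ≤ N ∧ p.2 ≤ N}).ncard : ℝ) / (N : ℝ) ^ 2)
          atTop (𝓝 1) := hsig ε hε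
      set c : ℕ → ℕ := fun N =>
        ((Finset.range (N + 1) ×ˢ Finset.range (N + 1)).filter (fun p => p ∈ S)).card with hcdef
      have hceq : ∀ N : ℕ, (S ∩ {p : ℕ × ℕ | p.1 ≤ N ∧ p.2 ≤ N}).ncard = c N := by
        intro N
        rw [hcdef]
        rw [show S ∩ {p : ℕ × ℕ | p.1 ≤ N ∧ p.2 ≤ N}
            = (((Finset.range (N + 1) ×ˢ Finset.range (N + 1)).filter (fun p => p ∈ S) :
                Finset (ℕ × ℕ)) : Set (ℕ × ℕ)) from ?_, Set.ncard_coe_finset]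
        ext p
        simp only [Set.mem_inter_iff, Set.mem_setOf_eq, Finset.coe_filter,
          Finset.mem_product, Finset.mem_range, Nat.lt_succ_iff]
        tauto
      have hclim : Tendsto (fun N : ℕ => (c N : ℝ) / (N : ℝ) ^ 2) atTop (𝓝 1) :=
        hS.congr fun N => by rw [hceq N]
      have hrlim : Tendsto (fun N : ℕ => (((N : ℝ) + 1) ^ 2 - (c N : ℝ)) / (N : ℝ) ^ 2)
          atTop (𝓝 0) := by
        have h1 : Tendsto (fun N : ℕ => ((N : ℝ) + 1) ^ 2 / (N : ℝ) ^ 2) atTop (𝓝 1) := by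
          have h2 : Tendsto (fun N : ℕ => (1 + ((N : ℝ))⁻¹) ^ 2) atTop (𝓝 1) := by
            have h3 := ((tendsto_const_nhds (x := (1:ℝ)) (f := (atTop : Filter ℕ))).add
              tendsto_one_div_atTop_nhds_zero_nat).pow 2
            norm_num [one_div] at h3
            exact h3
          refine h2.congr' ?_
          filter_upwards [eventually_ge_atTop 1] with N hN
          have hN0 : (N : ℝ) ≠ 0 := Nat.cast_ne_zero.2 (by omega)
          field_simp
        have h4 := h1.sub hclim
        norm_num at h4
        exact h4.congr fun N => (sub_div _ _ _).symm
      have hRlim : Tendsto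
          (fun N : ℕ => sbar ^ 2 * ε + sbar ^ 2 * M * ((((N : ℝ) + 1) ^ 2 - (c N : ℝ)) / (N : ℝ) ^ 2))
          atTop (𝓝 (sbar ^ 2 * ε)) := by
        have h5 := hrlim.const_mul (sbar ^ 2 * M)
        have h6 := (tendsto_const_nhds (x := sbar ^ 2 * ε) (f := (atTop : Filter ℕ))).add h5
        simpa using h6
      have hlt : sbar ^ 2 * ε < δ := by
        have he : sbar ^ 2 * ε = δ / 2 := by
          rw [hεdef]
          field_simp
        rw [he]
        linarith
      have hev1 := hRlim.eventually_lt_const hlt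
      have hev2 : ∀ᶠ N in atTop,
          T N ≤ sbar ^ 2 * ε + sbar ^ 2 * M * ((((N : ℝ) + 1) ^ 2 - (c N : ℝ)) / (N : ℝ) ^ 2) := by
        filter_upwards [eventually_ge_atTop 1] with N hN
        have hNpos : 0 < N := hN
        have hN0 : (N : ℝ) ≠ 0 := Nat.cast_ne_zero.2 (by omega)
        have hNpos' : (0 : ℝ) < (N : ℝ) := by positivity
        set P := Finset.Icc 1 N ×ˢ Finset.Icc 1 N with hPdef
        set I : ℕ × ℕ → ℝ := fun p =>
          ∫ x, (V p.1 x - Vlim x) * (V p.2 x - Vlim x) ∂μ with hIdef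
        -- pointwise representation
        have hrep : ∀ x, F N x - Vlim x
            = ∑ n ∈ Finset.Icc 1 N, (s n N / (N : ℝ)) * (V n x - Vlim x) := by
          intro x
          have e1 : (1 / (N : ℝ)) * (∑ n ∈ Finset.Icc 1 N, s n N * V n x)
                - ((∑ n ∈ Finset.Icc 1 N, s n N) / (N : ℝ)) * Vlim x
              = ∑ n ∈ Finset.Icc 1 N, (s n N / (N : ℝ)) * (V n x - Vlim x) := by
            rw [Finset.mul_sum, Finset.sum_div, Finset.sum_mul, ← Finset.sum_sub_distrib]
            exact Finset.sum_congr rfl fun n _ => by ring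
          show (1 / (N : ℝ)) * (∑ n ∈ Finset.Icc 1 N, s n N * V n x) - Vlim x = _
          rw [← e1, hssum N, div_self hN0, one_mul]
        -- expanding the square
        have hTN : T N = ∑ p ∈ P, ((s p.1 N / (N : ℝ)) * (s p.2 N / (N : ℝ))) * I p := by
          have hTint : T N = ∫ x, ∑ p ∈ P,
              ((s p.1 N / (N : ℝ)) * (s p.2 N / (N : ℝ)))
                * ((V p.1 x - Vlim x) * (V p.2 x - Vlim x)) ∂μ := by
            show (∫ x, (F N x - Vlim x) ^ 2 ∂μ) = _
            refine integral_congr_ae (Eventually.of_forall fun x => ?_)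
            show (F N x - Vlim x) ^ 2 = _
            rw [hrep x, sq, Finset.sum_mul_sum]
            rw [hPdef, ← Finset.sum_product']
            exact Finset.sum_congr rfl fun p _ => by ring
          rw [hTint, integral_finset_sum _ fun p _ => (hWint p.1 p.2).const_mul _]
          exact Finset.sum_congr rfl fun p _ => integral_const_mul _ _
        have hb1 : T N ≤ ∑ p ∈ P, (sbar / (N : ℝ)) ^ 2 * |I p| := by
          rw [hTN]
          refine Finset.sum_le_sum fun p _ => ?_
          refine (le_abs_self _).trans ?_
          rw [abs_mul]
          refine mul_le_mul_of_nonneg_right ?_ (abs_nonneg _)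
          rw [abs_mul, sq]
          rw [abs_of_nonneg (div_nonneg (hs0 _ _) hNpos'.le),
            abs_of_nonneg (div_nonneg (hs0 _ _) hNpos'.le)]
          exact mul_le_mul ((div_le_div_iff_of_pos_right hNpos').2 (hsb _ _))
            ((div_le_div_iff_of_pos_right hNpos').2 (hsb _ _)) (div_nonneg (hs0 _ _) hNpos'.le)
            (div_nonneg hsbarpos.le hNpos'.le)
        have hcardP : ((P.card : ℝ)) = (N : ℝ) ^ 2 := by
          rw [hPdef, Finset.card_product, Nat.card_Icc]
          push_cast [Nat.add_sub_cancel]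
          ring
        have hA : ∑ p ∈ P.filter (fun p => p ∈ S), |I p| ≤ (N : ℝ) ^ 2 * ε := by
          have h7 := Finset.sum_le_card_nsmul (P.filter (fun p => p ∈ S)) (fun p => |I p|) ε
            (fun p hp => by
              have hm := (Finset.mem_filter.1 hp).2
              rw [hSdef, Set.mem_setOf_eq] at hm
              exact le_of_lt hm)
          rw [nsmul_eq_mul] at h7
          refine h7.trans (mul_le_mul_of_nonneg_right ?_ hε.le)
          calc ((P.filter (fun p => p ∈ S)).card : ℝ) ≤ (P.card : ℝ) := by
                exact_mod_cast Finset.card_filter_le P _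
            _ = (N : ℝ) ^ 2 := hcardP
        have hB : ∑ p ∈ P.filter (fun p => p ∉ S), |I p|
            ≤ (((N : ℝ) + 1) ^ 2 - (c N : ℝ)) * M := by
          have hsub : P.filter (fun p => p ∉ S)
              ⊆ (Finset.range (N + 1) ×ˢ Finset.range (N + 1)).filter (fun p => p ∉ S) := by
            refine Finset.filter_subset_filter _ ?_
            intro p hp
            rw [Finset.mem_product] at hp
            rw [Finset.mem_product, Finset.mem_range, Finset.mem_range]
            exact ⟨Nat.lt_succ_of_le (Finset.mem_Icc.1 hp.1).2,
              Nat.lt_succ_of_le (Finset.mem_Icc.1 hp.2).2⟩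
          have h1 : (P.filter (fun p => p ∉ S)).card
              ≤ ((Finset.range (N + 1) ×ˢ Finset.range (N + 1)).filter (fun p => p ∉ S)).card :=
            Finset.card_le_card hsub
          have h2 : c N + ((Finset.range (N + 1) ×ˢ Finset.range (N + 1)).filter
              (fun p => p ∉ S)).card = (N + 1) ^ 2 := by
            rw [hcdef]
            rw [Finset.card_filter_add_card_filter_not]
            rw [Finset.card_product, Finset.card_range]
            ring
          have h2' : (c N : ℝ) + (((Finset.range (N + 1) ×ˢ Finset.range (N + 1)).filter
              (fun p => p ∉ S)).card : ℝ) = ((N : ℝ) + 1) ^ 2 := by exact_mod_cast h2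
          have h1' : ((P.filter (fun p => p ∉ S)).card : ℝ)
              ≤ (((Finset.range (N + 1) ×ˢ Finset.range (N + 1)).filter
                (fun p => p ∉ S)).card : ℝ) := by exact_mod_cast h1
          have h8 := Finset.sum_le_card_nsmul (P.filter (fun p => p ∉ S)) (fun p => |I p|) M
            (fun p _ => hIbdd p.1 p.2)
          rw [nsmul_eq_mul] at h8
          refine h8.trans (mul_le_mul_of_nonneg_right ?_ hM0)
          linarith
        have hsplit : ∑ p ∈ P, |I p| ≤ (N : ℝ) ^ 2 * ε + (((N : ℝ) + 1) ^ 2 - (c N : ℝ)) * M := by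
          rw [← Finset.sum_filter_add_sum_filter_not P (fun p => p ∈ S)]
          exact add_le_add hA hB
        calc T N ≤ ∑ p ∈ P, (sbar / (N : ℝ)) ^ 2 * |I p| := hb1
          _ = (sbar / (N : ℝ)) ^ 2 * ∑ p ∈ P, |I p| := by rw [Finset.mul_sum]
          _ ≤ (sbar / (N : ℝ)) ^ 2 * ((N : ℝ) ^ 2 * ε + (((N : ℝ) + 1) ^ 2 - (c N : ℝ)) * M) :=
            mul_le_mul_of_nonneg_left hsplit (sq_nonneg _)
          _ = sbar ^ 2 * ε + sbar ^ 2 * M * ((((N : ℝ) + 1) ^ 2 - (c N : ℝ)) / (N : ℝ) ^ 2) := by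
            field_simp
      filter_upwards [hev1, hev2] with N h1 h2 using lt_of_le_of_lt h2 h1
  -- from T → 0 to L² convergence
  have hL2 : Tendsto (fun N => eLpNorm (fun x => F N x - Vlim x) 2 μ) atTop (𝓝 0) := by
    have heq : ∀ N, eLpNorm (fun x => F N x - Vlim x) 2 μ
        = ENNReal.ofReal ((T N) ^ ((2 : ℝ)⁻¹)) := by
      intro N
      rw [(hhmem2 N).eLpNorm_eq_integral_rpow_norm two_ne_zero ENNReal.ofNat_ne_top]
      have h9 : (∫ x, ‖F N x - Vlim x‖ ^ ((2 : ℝ≥0∞)).toReal ∂μ) = T N := by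
        show _ = (∫ x, (F N x - Vlim x) ^ 2 ∂μ)
        refine integral_congr_ae (Eventually.of_forall fun x => ?_)
        simp only [ENNReal.toReal_ofNat, Real.norm_eq_abs, Real.rpow_two, sq_abs]
      rw [h9, show ((2 : ℝ≥0∞)).toReal⁻¹ = (2 : ℝ)⁻¹ by simp]
    have h1 : Tendsto (fun N => (T N) ^ ((2 : ℝ)⁻¹)) atTop (𝓝 0) := by
      have hcont : ContinuousAt (fun x : ℝ => x ^ ((2 : ℝ)⁻¹)) 0 :=
        Real.continuousAt_rpow_const 0 _ (Or.inr (by norm_num))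
      have h10 := hcont.tendsto.comp hTlim
      rw [Real.zero_rpow (by norm_num : ((2 : ℝ)⁻¹) ≠ 0)] at h10
      exact h10
    have h11 := (ENNReal.continuous_ofReal.tendsto 0).comp h1
    simp only [Function.comp, ENNReal.ofReal_zero] at h11
    exact h11.congr fun N => (heq N).symm
  -- convergence in measure
  have hmeasconv : TendstoInMeasure μ F atTop Vlim := by
    refine tendstoInMeasure_of_tendsto_eLpNorm (p := 2) two_ne_zero hFmeas
      hVlim.aestronglyMeasurable (hL2.congr fun N => ?_)
    rfl
  -- uniform integrability
  have hui : UnifIntegrable F q μ := by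
    refine unifIntegrable_of hq1 hqtop hFmeas fun ε hε => ⟨C'.toNNReal + 1, fun i => ?_⟩
    have hzero : ({x | C'.toNNReal + 1 ≤ ‖F i x‖₊}.indicator (F i))
        =ᵐ[μ] (fun _ => (0 : ℝ)) := by
      filter_upwards [hFbound i] with x hx
      rw [Set.indicator_of_notMem]
      intro hmem
      simp only [Set.mem_setOf_eq] at hmem
      have h1 : ‖F i x‖ ≤ (C'.toNNReal : ℝ) := by
        rw [Real.norm_eq_abs, Real.coe_toNNReal']
        exact hx.trans (le_max_left _ _)
      have h2 : ((C'.toNNReal + 1 : ℝ≥0) : ℝ) ≤ (‖F i x‖₊ : ℝ) := by exact_mod_cast hmem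
      rw [coe_nnnorm] at h2
      push_cast at h2
      linarith
    rw [eLpNorm_congr_ae hzero, eLpNorm_zero']
    exact bot_le
  have hVq : MemLp Vlim q μ := hVlim.mono_exponent le_top
  have final := tendsto_Lp_finite_of_tendstoInMeasure hq1 hqtop hFmeas hVq hui hmeasconv
  exact final.congr fun N => rfl
end

section
/- Let Q ⊂ ℝ^D be a bounded domain and let V_n : Q → ℝ be a sequence of measurable functions with sup_n ‖V_n‖_{L^∞(Q)} < ∞, converging weakly-* in L^∞(Q) to some V ∈ L^∞(Q) (i.e., ∫_Q V_n g dx → ∫_Q V g dx for every g ∈ L^1(Q)). Suppose in addition that for every ε > 0 and every K ≥ 1 there exists k = k(ε,K) ≥ K such that the set { (n,m) ∈ ℕ×ℕ : |∫_Q ( V_n V_m − V_{k+|n−m|} V_k ) dx| < ε } is statistically significant. Then for every regular summation method {s_{n,N}} and every 1 ≤ q < ∞, the weighted averages (1/N) Σ_{n=1}^N s_{n,N} V_n converge to V in L^q(Q) as N → ∞. -/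
open MeasureTheory Filter Finset
open scoped ENNReal Classical

lemma aux_rpow_tendsto_zero {f : ℕ → ℝ≥0∞} {r : ℝ} (hr : 0 < r)
    (h : Tendsto f atTop (nhds 0)) : Tendsto (fun n => f n ^ r) atTop (nhds 0) := by
  rw [ENNReal.tendsto_nhds_zero] at h ⊢
  intro ε hε
  rcases eq_or_ne ε ⊤ with rfl | hεt
  · filter_upwards with n using le_top
  · have hε' : 0 < ε ^ (1/r) := ENNReal.rpow_pos hε hεt
    filter_upwards [h _ hε'] with n hn
    calc f n ^ r ≤ (ε ^ (1/r)) ^ r := ENNReal.rpow_le_rpow hn hr.le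
      _ = ε := by
        rw [← ENNReal.rpow_mul, one_div, inv_mul_cancel₀ hr.ne', ENNReal.rpow_one]

lemma aux_ncard_eq (G : Set (ℕ × ℕ)) (N : ℕ) [DecidablePred (fun p => p ∈ G)] :
    ((G ∩ {p : ℕ × ℕ | p.1 ≤ N ∧ p.2 ≤ N}).ncard : ℝ)
      = ((((Finset.range (N+1)) ×ˢ (Finset.range (N+1))).filter
          (fun p => p ∈ G)).card : ℝ) := by
  congr 1
  rw [← Set.ncard_coe_finset]
  congr 1
  ext p
  simp only [Finset.coe_filter, Finset.mem_product, Finset.mem_range, Nat.lt_succ_iff,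
    Set.mem_inter_iff, Set.mem_setOf_eq]
  tauto

lemma aux_one_add_div : Tendsto (fun N : ℕ => (1 + 1/(N:ℝ))^2) atTop (nhds 1) := by
  have h : Tendsto (fun N : ℕ => 1 + 1/(N:ℝ)) atTop (nhds (1 + 0)) :=
    tendsto_const_nhds.add tendsto_one_div_atTop_nhds_zero_nat
  have h2 := h.pow 2
  simpa [one_div] using h2

lemma aux_statInter {A B : Set (ℕ × ℕ)} (hA : StatSignificant A) (hB : StatSignificant B) :
    StatSignificant (A ∩ B) := by
  unfold StatSignificant at *
  have hlow := (hA.add hB).sub aux_one_add_div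
  have e0 : (1:ℝ) + 1 - 1 = 1 := by norm_num
  rw [e0] at hlow
  refine tendsto_of_tendsto_of_tendsto_of_le_of_le' hlow hA ?_ ?_
  · filter_upwards [Filter.eventually_ge_atTop 1] with N hN
    have hNne : ((N:ℝ))^2 ≠ 0 := by positivity
    have hNpos : (0:ℝ) < (N:ℝ)^2 := by positivity
    have hcard : (((Finset.range (N+1)) ×ˢ (Finset.range (N+1))).filter
          (fun p => p ∈ A)).card
        + (((Finset.range (N+1)) ×ˢ (Finset.range (N+1))).filter
          (fun p => p ∈ B)).card
        ≤ (N+1)*(N+1) + (((Finset.range (N+1)) ×ˢ (Finset.range (N+1))).filter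
          (fun p => p ∈ A ∩ B)).card := by
      set boxF := (Finset.range (N+1)) ×ˢ (Finset.range (N+1)) with hbox
      set aF := boxF.filter (fun p => p ∈ A) with haF
      set bF := boxF.filter (fun p => p ∈ B) with hbF
      have hiF : (aF ∩ bF).card = (boxF.filter (fun p => p ∈ A ∩ B)).card := by
        congr 1
        ext p
        simp only [haF, hbF, Finset.mem_inter, Finset.mem_filter, Set.mem_inter_iff]
        tauto
      have h1 := Finset.card_union_add_card_inter aF bF
      have h2 : (aF ∪ bF).card ≤ boxF.card :=
        Finset.card_le_card (Finset.union_subset (Finset.filter_subset _ _)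
          (Finset.filter_subset _ _))
      have h3 : boxF.card = (N+1)*(N+1) := by
        simp [hbox, Finset.card_product]
      omega
    have hcast : ((((Finset.range (N+1)) ×ˢ (Finset.range (N+1))).filter
          (fun p => p ∈ A)).card : ℝ)
        + ((((Finset.range (N+1)) ×ˢ (Finset.range (N+1))).filter
          (fun p => p ∈ B)).card : ℝ)
        ≤ ((N:ℝ)+1)*((N:ℝ)+1) + ((((Finset.range (N+1)) ×ˢ (Finset.range (N+1))).filter
          (fun p => p ∈ A ∩ B)).card : ℝ) := by
      exact_mod_cast hcard
    rw [aux_ncard_eq A N, aux_ncard_eq B N, aux_ncard_eq (A ∩ B) N]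
    have e1 : ((N:ℝ)+1)*((N:ℝ)+1) / (N:ℝ)^2 = (1 + 1/(N:ℝ))^2 := by
      field_simp
    rw [← add_div, ← e1, div_sub_div_same, div_le_div_iff_of_pos_right hNpos]
    linarith
  · filter_upwards with N
    rcases Nat.eq_zero_or_pos N with rfl | hN
    · simp
    have hNpos : (0:ℝ) < (N:ℝ)^2 := by positivity
    rw [aux_ncard_eq (A ∩ B) N, aux_ncard_eq A N, div_le_div_iff_of_pos_right hNpos]
    have hsub : (((Finset.range (N+1)) ×ˢ (Finset.range (N+1))).filter
          (fun p => p ∈ A ∩ B)).card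
        ≤ (((Finset.range (N+1)) ×ˢ (Finset.range (N+1))).filter
          (fun p => p ∈ A)).card := by
      apply Finset.card_le_card
      intro p hp
      simp only [Finset.mem_filter, Set.mem_inter_iff] at hp ⊢
      exact ⟨hp.1, hp.2.1⟩
    exact_mod_cast hsub

lemma aux_statDist (J : ℕ) : StatSignificant {p : ℕ × ℕ | J ≤ Nat.dist p.1 p.2} := by
  unfold StatSignificant
  have hone : Tendsto (fun N : ℕ => 1 + 1/(N:ℝ)) atTop (nhds 1) := by
    have h : Tendsto (fun N : ℕ => 1 + 1/(N:ℝ)) atTop (nhds (1 + 0)) :=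
      tendsto_const_nhds.add tendsto_one_div_atTop_nhds_zero_nat
    simpa using h
  have hlow : Tendsto (fun N : ℕ =>
      (1 + 1/(N:ℝ))^2 - (1 + 1/(N:ℝ)) * (2*J+1) * (1/(N:ℝ))) atTop (nhds 1) := by
    have h2 : Tendsto (fun N : ℕ => (1 + 1/(N:ℝ)) * (2*(J:ℝ)+1) * (1/(N:ℝ)))
        atTop (nhds (1 * (2*(J:ℝ)+1) * 0)) :=
      (hone.mul tendsto_const_nhds).mul tendsto_one_div_atTop_nhds_zero_nat
    have := aux_one_add_div.sub h2
    norm_num at this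
    convert this using 2
    norm_num
  refine tendsto_of_tendsto_of_tendsto_of_le_of_le' hlow aux_one_add_div ?_ ?_
  · filter_upwards [Filter.eventually_ge_atTop 1] with N hN
    have hNpos : (0:ℝ) < (N:ℝ)^2 := by positivity
    rw [aux_ncard_eq]
    set boxF := (Finset.range (N+1)) ×ˢ (Finset.range (N+1)) with hbox
    -- bad set count
    have hbad : (boxF.filter (fun p => ¬ (J ≤ Nat.dist p.1 p.2))).card ≤ (N+1)*(2*J+1) := by
      have hinj : ∀ p ∈ boxF.filter (fun p => ¬ (J ≤ Nat.dist p.1 p.2)),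
          (p.1, p.2 + J - p.1) ∈ (Finset.range (N+1)) ×ˢ (Finset.range (2*J+1)) := by
        intro p hp
        simp only [Finset.mem_filter, hbox, Finset.mem_product, Finset.mem_range,
          Nat.lt_succ_iff, not_le, Nat.dist] at hp ⊢
        omega
      have := Finset.card_le_card_of_injOn _ hinj ?_
      · calc (boxF.filter (fun p => ¬ (J ≤ Nat.dist p.1 p.2))).card
            ≤ ((Finset.range (N+1)) ×ˢ (Finset.range (2*J+1))).card := this
          _ = (N+1)*(2*J+1) := by simp [Finset.card_product]
      · intro p hp q hq heq
        simp only [Finset.coe_filter, Set.mem_setOf_eq, hbox, Finset.mem_product,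
          Finset.mem_range, Nat.lt_succ_iff, not_le, Nat.dist] at hp hq
        simp only [Prod.mk.injEq] at heq
        obtain ⟨h1, h2⟩ := heq
        have : p.2 = q.2 := by omega
        exact Prod.ext h1 this
    have hgood : (N+1)*(N+1) ≤ (boxF.filter (fun p => J ≤ Nat.dist p.1 p.2)).card
        + (N+1)*(2*J+1) := by
      have hsplit := Finset.card_filter_add_card_filter_not
        (s := boxF) (p := fun p => J ≤ Nat.dist p.1 p.2)
      have h3 : boxF.card = (N+1)*(N+1) := by simp [hbox, Finset.card_product]
      omega
    have hgoodR : ((N:ℝ)+1)*((N:ℝ)+1) - ((N:ℝ)+1)*(2*(J:ℝ)+1)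
        ≤ ((boxF.filter (fun p => J ≤ Nat.dist p.1 p.2)).card : ℝ) := by
      have : (((N+1)*(N+1) : ℕ) : ℝ) ≤ ((boxF.filter (fun p => J ≤ Nat.dist p.1 p.2)).card : ℝ)
          + (((N+1)*(2*J+1) : ℕ) : ℝ) := by exact_mod_cast hgood
      push_cast at this ⊢
      linarith
    simp only [Set.mem_setOf_eq]
    have hNne : (N:ℝ) ≠ 0 := by positivity
    have key : (1 + 1/(N:ℝ))^2 - (1 + 1/(N:ℝ)) * (2*(J:ℝ)+1) * (1/(N:ℝ))
        = (((N:ℝ)+1)*((N:ℝ)+1) - ((N:ℝ)+1)*(2*(J:ℝ)+1))/(N:ℝ)^2 := by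
      field_simp
    rw [key, div_le_div_iff_of_pos_right hNpos]
    exact hgoodR
  · filter_upwards [Filter.eventually_ge_atTop 1] with N hN
    have hNpos : (0:ℝ) < (N:ℝ)^2 := by positivity
    rw [aux_ncard_eq, div_le_iff₀ hNpos]
    have hle : (((Finset.range (N+1)) ×ˢ (Finset.range (N+1))).filter
        (fun p => p ∈ {p : ℕ × ℕ | J ≤ Nat.dist p.1 p.2})).card ≤ (N+1)*(N+1) := by
      calc _ ≤ ((Finset.range (N+1)) ×ˢ (Finset.range (N+1))).card :=
            Finset.card_le_card (Finset.filter_subset _ _)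
        _ = (N+1)*(N+1) := by simp [Finset.card_product]
    calc ((((Finset.range (N+1)) ×ˢ (Finset.range (N+1))).filter
          (fun p => p ∈ {p : ℕ × ℕ | J ≤ Nat.dist p.1 p.2})).card : ℝ)
        ≤ ((N:ℝ)+1)*((N:ℝ)+1) := by exact_mod_cast hle
      _ = (1 + 1/(N:ℝ))^2 * (N:ℝ)^2 := by
          have hNne : (N:ℝ) ≠ 0 := by positivity
          field_simp

lemma aux_avg1 {s : ℕ → ℕ → ℝ} {sbar : ℝ} (hs : IsRegularSummation s sbar)
    {a : ℕ → ℝ} {L : ℝ} (ha : Tendsto a atTop (nhds L)) :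
    Tendsto (fun N : ℕ => (1/(N:ℝ)) * ∑ n ∈ Finset.Icc 1 N, s n N * a n)
      atTop (nhds L) := by
  obtain ⟨hs0, hsb, _, hsum⟩ := hs
  have hsbar0 : 0 ≤ sbar := le_trans (hs0 0 0) (hsb 0 0)
  have hb : Tendsto (fun n => |a n - L|) atTop (nhds 0) := by
    have := (ha.sub (tendsto_const_nhds (x := L))).abs
    simpa using this
  have hces : Tendsto (fun M : ℕ => (M:ℝ)⁻¹ * ∑ i ∈ Finset.range M, |a i - L|)
      atTop (nhds 0) := by
    have := hb.cesaro
    simpa using this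
  have hces' : Tendsto (fun N : ℕ => (((N+1:ℕ)):ℝ)⁻¹ * ∑ i ∈ Finset.range (N+1), |a i - L|)
      atTop (nhds 0) := hces.comp (tendsto_add_atTop_nat 1)
  have hfrac : Tendsto (fun N : ℕ => ((N:ℝ)+1)/(N:ℝ)) atTop (nhds 1) := by
    have h : Tendsto (fun N : ℕ => 1 + 1/(N:ℝ)) atTop (nhds (1 + 0)) :=
      tendsto_const_nhds.add tendsto_one_div_atTop_nhds_zero_nat
    apply Tendsto.congr' ?_ (by simpa using h)
    filter_upwards [Filter.eventually_ge_atTop 1] with N hN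
    have hNne : (N:ℝ) ≠ 0 := by positivity
    field_simp
  have hu : Tendsto (fun N : ℕ => sbar * (((N:ℝ)+1)/(N:ℝ)) *
      ((((N+1:ℕ)):ℝ)⁻¹ * ∑ i ∈ Finset.range (N+1), |a i - L|)) atTop (nhds 0) := by
    have := (tendsto_const_nhds (x := sbar)).mul hfrac |>.mul hces'
    simpa using this
  rw [tendsto_iff_dist_tendsto_zero]
  apply squeeze_zero' (Filter.Eventually.of_forall fun N => dist_nonneg) ?_ hu
  filter_upwards [Filter.eventually_ge_atTop 1] with N hN
  have hNpos : (0:ℝ) < (N:ℝ) := by exact_mod_cast hN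
  have hNne : (N:ℝ) ≠ 0 := ne_of_gt hNpos
  have e1 : ∑ n ∈ Finset.Icc 1 N, s n N * (a n - L)
      = (∑ n ∈ Finset.Icc 1 N, s n N * a n) - N * L := by
    simp only [mul_sub]
    rw [Finset.sum_sub_distrib, ← Finset.sum_mul, hsum]
  have e2 : dist ((1/(N:ℝ)) * ∑ n ∈ Finset.Icc 1 N, s n N * a n) L
      = |(1/(N:ℝ)) * ∑ n ∈ Finset.Icc 1 N, s n N * (a n - L)| := by
    rw [Real.dist_eq, e1]
    congr 1
    field_simp
  rw [e2]
  have step1 : |(1/(N:ℝ)) * ∑ n ∈ Finset.Icc 1 N, s n N * (a n - L)|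
      ≤ (1/(N:ℝ)) * ∑ n ∈ Finset.Icc 1 N, sbar * |a n - L| := by
    rw [abs_mul, abs_of_nonneg (by positivity : (0:ℝ) ≤ 1/(N:ℝ))]
    apply mul_le_mul_of_nonneg_left ?_ (by positivity)
    calc |∑ n ∈ Finset.Icc 1 N, s n N * (a n - L)|
        ≤ ∑ n ∈ Finset.Icc 1 N, |s n N * (a n - L)| := Finset.abs_sum_le_sum_abs _ _
      _ ≤ ∑ n ∈ Finset.Icc 1 N, sbar * |a n - L| := by
          apply Finset.sum_le_sum
          intro n _
          rw [abs_mul, abs_of_nonneg (hs0 n N)]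
          exact mul_le_mul_of_nonneg_right (hsb n N) (abs_nonneg _)
  have step2 : (1/(N:ℝ)) * ∑ n ∈ Finset.Icc 1 N, sbar * |a n - L|
      ≤ (1/(N:ℝ)) * ∑ n ∈ Finset.range (N+1), sbar * |a n - L| := by
    apply mul_le_mul_of_nonneg_left ?_ (by positivity)
    apply Finset.sum_le_sum_of_subset_of_nonneg
    · intro n hn
      simp only [Finset.mem_Icc] at hn
      simp only [Finset.mem_range]
      omega
    · intro n _ _
      positivity
  have step3 : (1/(N:ℝ)) * ∑ n ∈ Finset.range (N+1), sbar * |a n - L|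
      = sbar * (((N:ℝ)+1)/(N:ℝ)) *
        ((((N+1:ℕ)):ℝ)⁻¹ * ∑ i ∈ Finset.range (N+1), |a i - L|) := by
    rw [← Finset.mul_sum]
    have : (((N+1:ℕ)):ℝ) = (N:ℝ)+1 := by push_cast; ring
    rw [this]
    field_simp
  calc |(1/(N:ℝ)) * ∑ n ∈ Finset.Icc 1 N, s n N * (a n - L)|
      ≤ (1/(N:ℝ)) * ∑ n ∈ Finset.Icc 1 N, sbar * |a n - L| := step1
    _ ≤ (1/(N:ℝ)) * ∑ n ∈ Finset.range (N+1), sbar * |a n - L| := step2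
    _ = _ := step3

lemma aux_avg2 {s : ℕ → ℕ → ℝ} {sbar : ℝ} (hs : IsRegularSummation s sbar)
    (t : ℕ → ℕ → ℝ) (L B' : ℝ) (hB : ∀ n m, |t n m - L| ≤ B')
    (hG : ∀ ε : ℝ, 0 < ε → ∃ G : Set (ℕ × ℕ), StatSignificant G ∧
      ∀ p : ℕ × ℕ, p ∈ G → |t p.1 p.2 - L| < ε) :
    Tendsto (fun N : ℕ => (1/(N:ℝ)^2) * ∑ n ∈ Finset.Icc 1 N, ∑ m ∈ Finset.Icc 1 N,
      s n N * s m N * t n m) atTop (nhds L) := by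
  obtain ⟨hs0, hsb, _, hsum⟩ := hs
  have hsbar0 : 0 ≤ sbar := le_trans (hs0 0 0) (hsb 0 0)
  have hB'0 : 0 ≤ B' := le_trans (abs_nonneg _) (hB 0 0)
  rw [Metric.tendsto_atTop]
  intro ε hε
  obtain ⟨G, hGsig, hGε⟩ := hG (ε/2) (by positivity)
  -- the error sequence tends to 0
  have herr : Tendsto (fun N : ℕ => sbar^2 * B' * ((1 + 1/(N:ℝ))^2 -
      ((G ∩ {p : ℕ × ℕ | p.1 ≤ N ∧ p.2 ≤ N}).ncard : ℝ) / (N : ℝ) ^ 2))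
      atTop (nhds 0) := by
    have h1 := aux_one_add_div.sub hGsig
    have h2 := (tendsto_const_nhds (x := sbar^2 * B')).mul h1
    simpa using h2
  have herr2 : ∀ᶠ N : ℕ in atTop, sbar^2 * B' * ((1 + 1/(N:ℝ))^2 -
      ((G ∩ {p : ℕ × ℕ | p.1 ≤ N ∧ p.2 ≤ N}).ncard : ℝ) / (N : ℝ) ^ 2) < ε/4 := by
    have := herr.eventually (eventually_lt_nhds (show (0:ℝ) < ε/4 by positivity))
    exact this
  rw [Filter.eventually_atTop] at herr2
  obtain ⟨N₁, hN₁⟩ := herr2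
  refine ⟨max N₁ 1, fun N hN => ?_⟩
  have hN1 : 1 ≤ N := le_trans (le_max_right _ _) hN
  have hNN₁ : N₁ ≤ N := le_trans (le_max_left _ _) hN
  have hNpos : (0:ℝ) < (N:ℝ) := by exact_mod_cast hN1
  have hNne : (N:ℝ) ≠ 0 := ne_of_gt hNpos
  have hN2pos : (0:ℝ) < (N:ℝ)^2 := by positivity
  set P := (Finset.Icc 1 N) ×ˢ (Finset.Icc 1 N) with hP
  -- rewrite double sum as sum over product
  have hprod : ∑ n ∈ Finset.Icc 1 N, ∑ m ∈ Finset.Icc 1 N, s n N * s m N * t n m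
      = ∑ p ∈ P, s p.1 N * s p.2 N * t p.1 p.2 := by
    rw [hP, Finset.sum_product]
  have hsumP : ∑ p ∈ P, s p.1 N * s p.2 N = (N:ℝ)^2 := by
    rw [hP, Finset.sum_product]
    calc ∑ n ∈ Finset.Icc 1 N, ∑ m ∈ Finset.Icc 1 N, s n N * s m N
        = ∑ n ∈ Finset.Icc 1 N, s n N * (N:ℝ) := by
          refine Finset.sum_congr rfl fun n _ => ?_
          rw [← Finset.mul_sum, hsum]
      _ = (N:ℝ)^2 := by rw [← Finset.sum_mul, hsum]; ring
  -- difference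
  have ediff : (1/(N:ℝ)^2) * (∑ p ∈ P, s p.1 N * s p.2 N * t p.1 p.2) - L
      = (1/(N:ℝ)^2) * ∑ p ∈ P, s p.1 N * s p.2 N * (t p.1 p.2 - L) := by
    have : ∑ p ∈ P, s p.1 N * s p.2 N * (t p.1 p.2 - L)
        = (∑ p ∈ P, s p.1 N * s p.2 N * t p.1 p.2) - (N:ℝ)^2 * L := by
      simp only [mul_sub]
      rw [Finset.sum_sub_distrib, ← Finset.sum_mul, hsumP]
    rw [this]
    field_simp
  -- split into good and bad parts
  have hsplit : ∑ p ∈ P, s p.1 N * s p.2 N * |t p.1 p.2 - L|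
      = ∑ p ∈ P.filter (fun p => p ∈ G), s p.1 N * s p.2 N * |t p.1 p.2 - L|
      + ∑ p ∈ P.filter (fun p => p ∉ G), s p.1 N * s p.2 N * |t p.1 p.2 - L| :=
    (Finset.sum_filter_add_sum_filter_not P _ _).symm
  have hgood : ∑ p ∈ P.filter (fun p => p ∈ G), s p.1 N * s p.2 N * |t p.1 p.2 - L|
      ≤ (ε/2) * (N:ℝ)^2 := by
    calc ∑ p ∈ P.filter (fun p => p ∈ G), s p.1 N * s p.2 N * |t p.1 p.2 - L|
        ≤ ∑ p ∈ P.filter (fun p => p ∈ G), s p.1 N * s p.2 N * (ε/2) := by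
          apply Finset.sum_le_sum
          intro p hp
          have hpG : p ∈ G := (Finset.mem_filter.mp hp).2
          exact mul_le_mul_of_nonneg_left (le_of_lt (hGε p hpG))
            (mul_nonneg (hs0 _ _) (hs0 _ _))
      _ ≤ ∑ p ∈ P, s p.1 N * s p.2 N * (ε/2) := by
          apply Finset.sum_le_sum_of_subset_of_nonneg (Finset.filter_subset _ _)
          intro p _ _
          have := mul_nonneg (mul_nonneg (hs0 p.1 N) (hs0 p.2 N)) (le_of_lt (half_pos hε))
          exact this
      _ = (ε/2) * (N:ℝ)^2 := by
          rw [← Finset.sum_mul, hsumP]; ring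
  -- bad part
  set cardGood := ((((Finset.range (N+1)) ×ˢ (Finset.range (N+1))).filter
          (fun p => p ∈ G)).card) with hcg
  have hbadcard : ((P.filter (fun p => p ∉ G)).card : ℝ) ≤ ((N:ℝ)+1)^2 - (cardGood : ℝ) := by
    have hsubs : P.filter (fun p => p ∉ G) ⊆
        ((Finset.range (N+1)) ×ˢ (Finset.range (N+1))) \
        (((Finset.range (N+1)) ×ˢ (Finset.range (N+1))).filter (fun p => p ∈ G)) := by
      intro p hp
      simp only [Finset.mem_filter, hP, Finset.mem_product, Finset.mem_Icc,
        Finset.mem_sdiff, Finset.mem_range, Nat.lt_succ_iff] at hp ⊢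
      refine ⟨⟨hp.1.1.2, hp.1.2.2⟩, fun hc => hp.2 hc.2⟩
    have h1 := Finset.card_le_card hsubs
    have h2 : (((Finset.range (N+1)) ×ˢ (Finset.range (N+1))) \
        (((Finset.range (N+1)) ×ˢ (Finset.range (N+1))).filter (fun p => p ∈ G))).card
        = (N+1)*(N+1) - cardGood := by
      rw [Finset.card_sdiff_of_subset (Finset.filter_subset _ _)]
      simp [Finset.card_product]
      rfl
    have h3 : cardGood ≤ (N+1)*(N+1) := by
      apply le_trans (Finset.card_le_card (Finset.filter_subset _ _))
      simp [Finset.card_product]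
    have : (P.filter (fun p => p ∉ G)).card + cardGood ≤ (N+1)*(N+1) := by omega
    have hcast : ((P.filter (fun p => p ∉ G)).card : ℝ) + (cardGood : ℝ)
        ≤ (((N+1)*(N+1) : ℕ) : ℝ) := by exact_mod_cast this
    push_cast at hcast ⊢
    nlinarith [hcast]
  have hbad : ∑ p ∈ P.filter (fun p => p ∉ G), s p.1 N * s p.2 N * |t p.1 p.2 - L|
      ≤ (((N:ℝ)+1)^2 - (cardGood : ℝ)) * (sbar^2 * B') := by
    calc ∑ p ∈ P.filter (fun p => p ∉ G), s p.1 N * s p.2 N * |t p.1 p.2 - L|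
        ≤ ∑ p ∈ P.filter (fun p => p ∉ G), sbar^2 * B' := by
          apply Finset.sum_le_sum
          intro p _
          have h1 : s p.1 N * s p.2 N ≤ sbar * sbar :=
            mul_le_mul (hsb _ _) (hsb _ _) (hs0 _ _) hsbar0
          have h2 : |t p.1 p.2 - L| ≤ B' := hB _ _
          calc s p.1 N * s p.2 N * |t p.1 p.2 - L| ≤ (sbar * sbar) * B' := by
                apply mul_le_mul h1 h2 (abs_nonneg _)
                positivity
            _ = sbar^2 * B' := by ring
      _ = ((P.filter (fun p => p ∉ G)).card : ℝ) * (sbar^2 * B') := by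
          rw [Finset.sum_const, nsmul_eq_mul]
      _ ≤ (((N:ℝ)+1)^2 - (cardGood : ℝ)) * (sbar^2 * B') := by
          apply mul_le_mul_of_nonneg_right hbadcard
          positivity
  -- combine
  have hmain : dist ((1/(N:ℝ)^2) * ∑ n ∈ Finset.Icc 1 N, ∑ m ∈ Finset.Icc 1 N,
      s n N * s m N * t n m) L ≤ ε/2 + sbar^2 * B' * ((1 + 1/(N:ℝ))^2 -
      ((G ∩ {p : ℕ × ℕ | p.1 ≤ N ∧ p.2 ≤ N}).ncard : ℝ) / (N : ℝ) ^ 2) := by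
    rw [Real.dist_eq, hprod, ediff]
    have habs : |(1/(N:ℝ)^2) * ∑ p ∈ P, s p.1 N * s p.2 N * (t p.1 p.2 - L)|
        ≤ (1/(N:ℝ)^2) * ∑ p ∈ P, s p.1 N * s p.2 N * |t p.1 p.2 - L| := by
      rw [abs_mul, abs_of_nonneg (by positivity : (0:ℝ) ≤ 1/(N:ℝ)^2)]
      apply mul_le_mul_of_nonneg_left ?_ (by positivity)
      calc |∑ p ∈ P, s p.1 N * s p.2 N * (t p.1 p.2 - L)|
          ≤ ∑ p ∈ P, |s p.1 N * s p.2 N * (t p.1 p.2 - L)| := Finset.abs_sum_le_sum_abs _ _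
        _ ≤ ∑ p ∈ P, s p.1 N * s p.2 N * |t p.1 p.2 - L| := by
            apply Finset.sum_le_sum
            intro p _
            rw [abs_mul, abs_mul, abs_of_nonneg (hs0 _ _), abs_of_nonneg (hs0 _ _)]
    have hcount : ((G ∩ {p : ℕ × ℕ | p.1 ≤ N ∧ p.2 ≤ N}).ncard : ℝ) = (cardGood : ℝ) := by
      rw [aux_ncard_eq G N, hcg]
    apply le_trans habs
    rw [hsplit]
    have e2 : (1 + 1/(N:ℝ))^2 = ((N:ℝ)+1)^2 / (N:ℝ)^2 := by
      field_simp
    rw [hcount, e2]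
    rw [mul_add]
    have t1 : (1/(N:ℝ)^2) * ∑ p ∈ P.filter (fun p => p ∈ G),
        s p.1 N * s p.2 N * |t p.1 p.2 - L| ≤ ε/2 := by
      calc (1/(N:ℝ)^2) * ∑ p ∈ P.filter (fun p => p ∈ G),
          s p.1 N * s p.2 N * |t p.1 p.2 - L|
          ≤ (1/(N:ℝ)^2) * ((ε/2) * (N:ℝ)^2) :=
            mul_le_mul_of_nonneg_left hgood (by positivity)
        _ = ε/2 := by field_simp
    have t2 : (1/(N:ℝ)^2) * ∑ p ∈ P.filter (fun p => p ∉ G),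
        s p.1 N * s p.2 N * |t p.1 p.2 - L|
        ≤ (((N:ℝ)+1)^2 - (cardGood:ℝ))/(N:ℝ)^2 * (sbar^2 * B') := by
      calc (1/(N:ℝ)^2) * ∑ p ∈ P.filter (fun p => p ∉ G),
          s p.1 N * s p.2 N * |t p.1 p.2 - L|
          ≤ (1/(N:ℝ)^2) * ((((N:ℝ)+1)^2 - (cardGood:ℝ)) * (sbar^2 * B')) :=
            mul_le_mul_of_nonneg_left hbad (by positivity)
        _ = (((N:ℝ)+1)^2 - (cardGood:ℝ))/(N:ℝ)^2 * (sbar^2 * B') := by ring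
    have t3 : sbar^2 * B' * (((N:ℝ)+1)^2/(N:ℝ)^2 - (cardGood:ℝ)/(N:ℝ)^2)
        = (((N:ℝ)+1)^2 - (cardGood:ℝ))/(N:ℝ)^2 * (sbar^2 * B') := by ring
    linarith
  calc dist _ L ≤ _ := hmain
    _ < ε/2 + ε/4 := by
        have := hN₁ N hNN₁
        linarith
    _ < ε := by linarith

/-- Proposition 3.5 of the paper (asymptotic stationarity): if `V_n → V` weakly-* in
`L^∞(Q)` and for every `ε > 0`, `K ≥ 1` there is `k ≥ K` such that the set
`{(n,m) : |∫_Q (V_n V_m − V_{k+|n−m|} V_k)| < ε}` is statistically significant, then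
for every regular summation method the weighted averages converge to `V` in `L^q(Q)`,
`1 ≤ q < ∞`. -/
theorem weighted_averages_tendsto_of_asymptotic_stationarity
    {D : ℕ} (Q : Set (EuclideanSpace ℝ (Fin D)))
    (hQopen : IsOpen Q) (hQbdd : Bornology.IsBounded Q)
    (V : ℕ → EuclideanSpace ℝ (Fin D) → ℝ)
    (hVmeas : ∀ n, Measurable (V n))
    (C : ℝ) (hC : ∀ n, ∀ᵐ x ∂(volume.restrict Q), |V n x| ≤ C)
    (Vlim : EuclideanSpace ℝ (Fin D) → ℝ)
    (hVlim : MemLp Vlim ⊤ (volume.restrict Q))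
    (hweak : ∀ g : EuclideanSpace ℝ (Fin D) → ℝ, Integrable g (volume.restrict Q) →
      Filter.Tendsto (fun n : ℕ => ∫ x in Q, V n x * g x) Filter.atTop
        (nhds (∫ x in Q, Vlim x * g x)))
    (hstat : ∀ ε : ℝ, 0 < ε → ∀ K : ℕ, 1 ≤ K → ∃ k : ℕ, K ≤ k ∧
      StatSignificant
        {p : ℕ × ℕ |
          |∫ x in Q, (V p.1 x * V p.2 x - V (k + Nat.dist p.1 p.2) x * V k x)| < ε}) :
    ∀ (s : ℕ → ℕ → ℝ) (sbar : ℝ), IsRegularSummation s sbar →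
      ∀ q : ℝ≥0∞, 1 ≤ q → q ≠ ⊤ →
        Filter.Tendsto (fun N : ℕ =>
          eLpNorm (fun x => (1 / (N : ℝ)) * ∑ n ∈ Finset.Icc 1 N, s n N * V n x - Vlim x)
            q (volume.restrict Q)) Filter.atTop (nhds 0) := by
  intro s sbar hs q hq1 hqt
  have hs0 := hs.1
  have hsb := hs.2.1
  have hssum := hs.2.2.2
  set μ : Measure (EuclideanSpace ℝ (Fin D)) := volume.restrict Q with hμdef
  haveI hfin : IsFiniteMeasure μ := by
    constructor
    rw [hμdef, Measure.restrict_apply_univ]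
    exact hQbdd.measure_lt_top
  -- bounds
  set C' : ℝ := max C 0 with hC'def
  have hC'0 : 0 ≤ C' := le_max_right _ _
  have hC' : ∀ n, ∀ᵐ x ∂μ, |V n x| ≤ C' := fun n => by
    filter_upwards [hC n] with x hx using le_trans hx (le_max_left _ _)
  set C'' : ℝ := (eLpNormEssSup Vlim μ).toReal with hC''def
  have hVlimTop : eLpNormEssSup Vlim μ ≠ ⊤ := by
    have := hVlim.2
    rw [eLpNorm_exponent_top] at this
    exact this.ne
  have hVlimb : ∀ᵐ x ∂μ, |Vlim x| ≤ C'' := by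
    filter_upwards [ae_le_eLpNormEssSup (f := Vlim) (μ := μ)] with x hx
    have := ENNReal.toReal_mono hVlimTop hx
    simpa [Real.norm_eq_abs] using this
  have hC''0 : 0 ≤ C'' := ENNReal.toReal_nonneg
  have hVm : ∀ n, AEStronglyMeasurable (V n) μ := fun n => (hVmeas n).aestronglyMeasurable
  -- product integrability
  have hprodInt : ∀ (f g : EuclideanSpace ℝ (Fin D) → ℝ) (cf cg : ℝ),
      AEStronglyMeasurable f μ → AEStronglyMeasurable g μ →
      (∀ᵐ x ∂μ, |f x| ≤ cf) → (∀ᵐ x ∂μ, |g x| ≤ cg) →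
      Integrable (fun x => f x * g x) μ := by
    intro f g cf cg hf hg hbf hbg
    have hm : MemLp (fun x => f x * g x) ⊤ μ := by
      apply memLp_top_of_bound (hf.mul hg) (cf * cg)
      filter_upwards [hbf, hbg] with x h1 h2
      simp only [Pi.mul_apply, Real.norm_eq_abs, abs_mul]
      exact mul_le_mul h1 h2 (abs_nonneg _) (le_trans (abs_nonneg _) h1)
    exact hm.integrable le_top
  have hVlimInt : Integrable Vlim μ := hVlim.integrable le_top
  -- the correlation integrals
  set I : ℕ → ℕ → ℝ := fun n m => ∫ x, V n x * V m x ∂μ with hIdef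
  set a : ℕ → ℝ := fun n => ∫ x, V n x * Vlim x ∂μ with hadef
  set L : ℝ := ∫ x, Vlim x * Vlim x ∂μ with hLdef
  have hI : ∀ n m, I n m = ∫ x, V n x * V m x ∂μ := fun n m => by rw [hIdef]
  have ha' : ∀ n, a n = ∫ x, V n x * Vlim x ∂μ := fun n => by rw [hadef]
  have ha : Tendsto a atTop (nhds L) := by
    have := hweak Vlim hVlimInt
    exact this
  have hIb : ∀ n m, |I n m| ≤ C' * C' * (μ Set.univ).toReal := by
    intro n m
    rw [hIdef]
    rw [← Real.norm_eq_abs]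
    apply norm_integral_le_of_norm_le_const
    filter_upwards [hC' n, hC' m] with x h1 h2
    rw [Real.norm_eq_abs, abs_mul]
    exact mul_le_mul h1 h2 (abs_nonneg _) (le_trans (abs_nonneg _) h1)
  set B' : ℝ := C' * C' * (μ Set.univ).toReal + |L| with hB'def
  have hB : ∀ n m, |I n m - L| ≤ B' := by
    intro n m
    calc |I n m - L| ≤ |I n m| + |L| := abs_sub _ _
      _ ≤ B' := by rw [hB'def]; exact add_le_add_left (hIb n m) _
  -- good sets
  have hGmk : ∀ ε : ℝ, 0 < ε → ∃ G : Set (ℕ × ℕ), StatSignificant G ∧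
      ∀ p : ℕ × ℕ, p ∈ G → |I p.1 p.2 - L| < ε := by
    intro ε hε
    have hε3 : 0 < ε/3 := by positivity
    obtain ⟨K₀, hK₀⟩ := Metric.tendsto_atTop.mp ha (ε/3) hε3
    obtain ⟨k, hkK, hSsig⟩ := hstat (ε/3) hε3 (max K₀ 1) (le_max_right _ _)
    have hak : |a k - L| < ε/3 := by
      have := hK₀ k (le_trans (le_max_left _ _) hkK)
      rwa [Real.dist_eq] at this
    have hVkInt : Integrable (V k) μ :=
      (memLp_top_of_bound (hVm k) C' (by
        filter_upwards [hC' k] with x hx using by rwa [Real.norm_eq_abs])).integrable le_top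
    have hwk := hweak (V k) hVkInt
    have hshift : Tendsto (fun j : ℕ => k + j) atTop atTop := by
      simpa [Nat.add_comm] using tendsto_add_atTop_nat k
    have hwk2 : Tendsto (fun j : ℕ => I (k + j) k) atTop
        (nhds (∫ x, Vlim x * V k x ∂μ)) := hwk.comp hshift
    obtain ⟨J, hJ⟩ := Metric.tendsto_atTop.mp hwk2 (ε/3) hε3
    have hcomm : (∫ x, Vlim x * V k x ∂μ) = a k := by
      rw [hadef]
      congr 1
      funext x
      ring
    refine ⟨{p : ℕ × ℕ |
          |∫ x, (V p.1 x * V p.2 x - V (k + Nat.dist p.1 p.2) x * V k x) ∂μ| < ε/3}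
        ∩ {p : ℕ × ℕ | J ≤ Nat.dist p.1 p.2},
      aux_statInter hSsig (aux_statDist J), ?_⟩
    rintro ⟨n, m⟩ ⟨hpS, hpJ⟩
    simp only [Set.mem_setOf_eq] at hpS hpJ
    have hIntnm : Integrable (fun x => V n x * V m x) μ :=
      hprodInt _ _ C' C' (hVm n) (hVm m) (hC' n) (hC' m)
    have hIntkk : Integrable (fun x => V (k + Nat.dist n m) x * V k x) μ :=
      hprodInt _ _ C' C' (hVm _) (hVm k) (hC' _) (hC' k)
    have hsub : |I n m - I (k + Nat.dist n m) k| < ε/3 := by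
      rwa [integral_sub hIntnm hIntkk] at hpS
    have hmid : |I (k + Nat.dist n m) k - (∫ x, Vlim x * V k x ∂μ)| < ε/3 := by
      have := hJ (Nat.dist n m) hpJ
      rwa [Real.dist_eq] at this
    calc |I n m - L|
        ≤ |I n m - I (k + Nat.dist n m) k| + |I (k + Nat.dist n m) k - L| :=
          abs_sub_le _ _ _
      _ ≤ |I n m - I (k + Nat.dist n m) k|
          + (|I (k + Nat.dist n m) k - (∫ x, Vlim x * V k x ∂μ)|
            + |(∫ x, Vlim x * V k x ∂μ) - L|) :=
          add_le_add_right (abs_sub_le _ _ _) _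
      _ < ε/3 + (ε/3 + ε/3) := by
          apply add_lt_add hsub
          apply add_lt_add hmid
          rwa [hcomm]
      _ = ε := by ring
  have hII : Tendsto (fun N : ℕ => (1/(N:ℝ)^2) * ∑ n ∈ Finset.Icc 1 N,
      ∑ m ∈ Finset.Icc 1 N, s n N * s m N * I n m) atTop (nhds L) :=
    aux_avg2 hs I L B' hB hGmk
  have hIa : Tendsto (fun N : ℕ => (1/(N:ℝ)) * ∑ n ∈ Finset.Icc 1 N, s n N * a n)
      atTop (nhds L) := aux_avg1 hs ha
  -- the averaged functions
  set W : ℕ → EuclideanSpace ℝ (Fin D) → ℝ :=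
    fun N x => (1 / (N : ℝ)) * ∑ n ∈ Finset.Icc 1 N, s n N * V n x with hWdef
  have hWm : ∀ N, AEStronglyMeasurable (W N) μ := by
    intro N
    apply Measurable.aestronglyMeasurable
    apply Measurable.const_mul
    exact Finset.measurable_sum _ (fun n _ => (hVmeas n).const_mul _)
  have hWb : ∀ N, ∀ᵐ x ∂μ, |W N x| ≤ C' := by
    intro N
    have hall : ∀ᵐ x ∂μ, ∀ n, |V n x| ≤ C' := ae_all_iff.mpr hC'
    filter_upwards [hall] with x hx
    have h1 : |∑ n ∈ Finset.Icc 1 N, s n N * V n x|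
        ≤ ∑ n ∈ Finset.Icc 1 N, s n N * C' := by
      calc |∑ n ∈ Finset.Icc 1 N, s n N * V n x|
          ≤ ∑ n ∈ Finset.Icc 1 N, |s n N * V n x| := Finset.abs_sum_le_sum_abs _ _
        _ ≤ ∑ n ∈ Finset.Icc 1 N, s n N * C' := by
            apply Finset.sum_le_sum
            intro n _
            rw [abs_mul, abs_of_nonneg (hs0 n N)]
            exact mul_le_mul_of_nonneg_left (hx n) (hs0 n N)
    have h2 : ∑ n ∈ Finset.Icc 1 N, s n N * C' = (N:ℝ) * C' := by
      rw [← Finset.sum_mul, hssum]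
    simp only [hWdef]
    rw [abs_mul, abs_of_nonneg (by positivity : (0:ℝ) ≤ 1/(N:ℝ))]
    calc (1/(N:ℝ)) * |∑ n ∈ Finset.Icc 1 N, s n N * V n x|
        ≤ (1/(N:ℝ)) * ((N:ℝ) * C') := by
          apply mul_le_mul_of_nonneg_left _ (by positivity)
          rw [← h2]; exact h1
      _ ≤ C' := by
          rcases Nat.eq_zero_or_pos N with rfl | hN
          · simp [hC'0]
          · have : (N:ℝ) ≠ 0 := by positivity
            rw [one_div, inv_mul_cancel_left₀ this]
  -- integral identities
  have key2 : Tendsto (fun N : ℕ => ∫ x, W N x * W N x ∂μ) atTop (nhds L) := by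
    apply Tendsto.congr _ hII
    intro N
    have hInt : ∀ n m : ℕ, Integrable (fun x =>
        ((1/(N:ℝ)) * s n N) * ((1/(N:ℝ)) * s m N) * (V n x * V m x)) μ :=
      fun n m => (hprodInt _ _ C' C' (hVm n) (hVm m) (hC' n) (hC' m)).const_mul _
    have hpt : (fun x => W N x * W N x) = fun x =>
        ∑ n ∈ Finset.Icc 1 N, ∑ m ∈ Finset.Icc 1 N,
          ((1/(N:ℝ)) * s n N) * ((1/(N:ℝ)) * s m N) * (V n x * V m x) := by
      funext x
      simp only [hWdef]
      rw [Finset.mul_sum, Finset.sum_mul_sum]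
      exact Finset.sum_congr rfl fun n _ => Finset.sum_congr rfl fun m _ => by ring
    have e : ∫ x, W N x * W N x ∂μ = ∑ n ∈ Finset.Icc 1 N, ∑ m ∈ Finset.Icc 1 N,
        ((1/(N:ℝ)) * s n N) * ((1/(N:ℝ)) * s m N) * (I n m) := by
      rw [hpt, integral_finset_sum _ (fun n _ => integrable_finset_sum _ (fun m _ => hInt n m))]
      refine Finset.sum_congr rfl fun n _ => ?_
      rw [integral_finset_sum _ (fun m _ => hInt n m)]
      refine Finset.sum_congr rfl fun m _ => ?_
      rw [integral_const_mul, hI n m]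
    rw [e, Finset.mul_sum]
    refine Finset.sum_congr rfl fun n _ => ?_
    rw [Finset.mul_sum]
    exact Finset.sum_congr rfl fun m _ => by ring
  have key1 : Tendsto (fun N : ℕ => ∫ x, W N x * Vlim x ∂μ) atTop (nhds L) := by
    apply Tendsto.congr _ hIa
    intro N
    have hInt : ∀ n : ℕ, Integrable (fun x => ((1/(N:ℝ)) * s n N) * (V n x * Vlim x)) μ :=
      fun n => (hprodInt _ _ C' C'' (hVm n) hVlim.aestronglyMeasurable
        (hC' n) hVlimb).const_mul _
    have hpt : (fun x => W N x * Vlim x) = fun x =>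
        ∑ n ∈ Finset.Icc 1 N, ((1/(N:ℝ)) * s n N) * (V n x * Vlim x) := by
      funext x
      simp only [hWdef]
      rw [Finset.mul_sum, Finset.sum_mul]
      exact Finset.sum_congr rfl fun n _ => by ring
    have e : ∫ x, W N x * Vlim x ∂μ
        = ∑ n ∈ Finset.Icc 1 N, ((1/(N:ℝ)) * s n N) * a n := by
      rw [hpt, integral_finset_sum _ (fun n _ => hInt n)]
      exact Finset.sum_congr rfl fun n _ => by rw [integral_const_mul, ha' n]
    rw [e, Finset.mul_sum]
    exact Finset.sum_congr rfl fun n _ => by ring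
  -- L² convergence
  have hWWInt : ∀ N, Integrable (fun x => W N x * W N x) μ :=
    fun N => hprodInt _ _ C' C' (hWm N) (hWm N) (hWb N) (hWb N)
  have hWVInt : ∀ N, Integrable (fun x => W N x * Vlim x) μ :=
    fun N => hprodInt _ _ C' C'' (hWm N) hVlim.aestronglyMeasurable (hWb N) hVlimb
  have hVVInt : Integrable (fun x => Vlim x * Vlim x) μ :=
    hprodInt _ _ C'' C'' hVlim.aestronglyMeasurable hVlim.aestronglyMeasurable hVlimb hVlimb
  have hsq : Tendsto (fun N : ℕ => ∫ x, (W N x - Vlim x)^2 ∂μ) atTop (nhds 0) := by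
    have hcomb := (key2.sub (key1.const_mul 2)).add (tendsto_const_nhds (x := L))
    have e0 : L - 2*L + L = 0 := by ring
    rw [e0] at hcomb
    apply Tendsto.congr _ hcomb
    intro N
    have h12 : Integrable (fun x => W N x * W N x - 2 * (W N x * Vlim x)) μ :=
      (hWWInt N).sub ((hWVInt N).const_mul 2)
    rw [hLdef, ← integral_const_mul 2, ← integral_sub (hWWInt N) ((hWVInt N).const_mul 2),
      ← integral_add h12 hVVInt]
    congr 1
    funext x
    ring
  -- from L² to Lᵠ
  have hq0 : q ≠ 0 := (lt_of_lt_of_le zero_lt_one hq1).ne'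
  set qr : ℝ := q.toReal with hqrdef
  have hqr1 : 1 ≤ qr := by
    rw [hqrdef, ← ENNReal.toReal_one]
    exact ENNReal.toReal_mono hqt hq1
  have hqr0 : 0 < qr := lt_of_lt_of_le one_pos hqr1
  set M' : ℝ := max (C' + C'') 1 with hM'def
  have hM'1 : (1:ℝ) ≤ M' := le_max_right _ _
  have hM'0 : (0:ℝ) ≤ M' := le_trans zero_le_one hM'1
  have hhm : ∀ N, AEStronglyMeasurable (fun x => W N x - Vlim x) μ :=
    fun N => (hWm N).sub hVlim.aestronglyMeasurable
  have hhbR : ∀ N, ∀ᵐ x ∂μ, |W N x - Vlim x| ≤ C' + C'' := by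
    intro N
    filter_upwards [hWb N, hVlimb] with x h1 h2
    calc |W N x - Vlim x| ≤ |W N x| + |Vlim x| := abs_sub _ _
      _ ≤ C' + C'' := add_le_add h1 h2
  have hhb : ∀ N, ∀ᵐ x ∂μ, ((‖W N x - Vlim x‖₊ : ℝ≥0∞)) ≤ ENNReal.ofReal M' := by
    intro N
    filter_upwards [hhbR N] with x h1
    rw [← enorm_eq_nnnorm, Real.enorm_eq_ofReal_abs]
    exact ENNReal.ofReal_le_ofReal (le_trans h1 (le_max_left _ _))
  set BN : ℕ → ℝ≥0∞ := fun N => ∫⁻ x, (‖W N x - Vlim x‖₊ : ℝ≥0∞) ^ (2:ℝ) ∂μ with hBNdef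
  have hBNeq : ∀ N, BN N = ENNReal.ofReal (∫ x, (W N x - Vlim x)^2 ∂μ) := by
    intro N
    have hint : Integrable (fun x => (W N x - Vlim x)^2) μ := by
      have h0 := hprodInt (fun x => W N x - Vlim x) (fun x => W N x - Vlim x)
        (C' + C'') (C' + C'') (hhm N) (hhm N) (hhbR N) (hhbR N)
      have : (fun x => (W N x - Vlim x) * (W N x - Vlim x))
          = fun x => (W N x - Vlim x)^2 := by funext x; ring
      rwa [this] at h0
    rw [ofReal_integral_eq_lintegral_ofReal hint
      (Filter.Eventually.of_forall fun x => sq_nonneg _), hBNdef]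
    apply lintegral_congr
    intro x
    rw [← enorm_eq_nnnorm, Real.enorm_eq_ofReal_abs,
      ENNReal.ofReal_rpow_of_nonneg (abs_nonneg _) (by norm_num : (0:ℝ) ≤ 2)]
    congr 1
    rw [show ((2:ℝ)) = ((2:ℕ):ℝ) by norm_num, Real.rpow_natCast, sq_abs]
  have hBN0 : Tendsto BN atTop (nhds 0) := by
    have h1 := ENNReal.tendsto_ofReal hsq
    rw [ENNReal.ofReal_zero] at h1
    exact Tendsto.congr (fun N => (hBNeq N).symm) h1
  -- the uniform bound chain
  have hbound : ∀ N, eLpNorm (fun x => W N x - Vlim x) q μ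
      ≤ ((ENNReal.ofReal M') ^ (qr - 1)
        * ((BN N) ^ (1/2:ℝ) * (μ Set.univ) ^ (1/2:ℝ))) ^ (1/qr) := by
    intro N
    rw [eLpNorm_eq_lintegral_rpow_enorm_toReal hq0 hqt, ← hqrdef]
    apply ENNReal.rpow_le_rpow _ (by positivity : (0:ℝ) ≤ 1/qr)
    calc ∫⁻ x, (‖W N x - Vlim x‖₊ : ℝ≥0∞) ^ qr ∂μ
        ≤ ∫⁻ x, (ENNReal.ofReal M') ^ (qr - 1) * (‖W N x - Vlim x‖₊ : ℝ≥0∞) ∂μ := by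
          apply lintegral_mono_ae
          filter_upwards [hhb N] with x hx
          have e : (‖W N x - Vlim x‖₊ : ℝ≥0∞) ^ qr
              = (‖W N x - Vlim x‖₊ : ℝ≥0∞) ^ (qr - 1)
                * (‖W N x - Vlim x‖₊ : ℝ≥0∞) := by
            have h2 := ENNReal.rpow_add_of_nonneg
              (x := (‖W N x - Vlim x‖₊ : ℝ≥0∞)) (qr - 1) 1 (by linarith) zero_le_one
            rw [show qr - 1 + 1 = qr by ring] at h2
            rw [h2, ENNReal.rpow_one]
          rw [e]
          exact mul_le_mul_left (ENNReal.rpow_le_rpow hx (by linarith)) _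
      _ = (ENNReal.ofReal M') ^ (qr - 1)
            * ∫⁻ x, (‖W N x - Vlim x‖₊ : ℝ≥0∞) ∂μ := by
          rw [lintegral_const_mul' _ _
            (ENNReal.rpow_ne_top_of_nonneg (by linarith) ENNReal.ofReal_ne_top)]
      _ ≤ (ENNReal.ofReal M') ^ (qr - 1)
            * ((BN N) ^ (1/2:ℝ) * (μ Set.univ) ^ (1/2:ℝ)) := by
          apply mul_le_mul_right
          have hconj : Real.HolderConjugate 2 2 := Real.HolderConjugate.two_two
          have hCS := ENNReal.lintegral_mul_le_Lp_mul_Lq μ hconj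
            ((hhm N).enorm) (aemeasurable_const (b := (1:ℝ≥0∞)))
          simp only [Pi.mul_apply, mul_one, ENNReal.one_rpow, lintegral_const,
            one_mul] at hCS
          exact le_trans hCS (by rw [hBNdef]; exact le_rfl)
  have c1ne : (ENNReal.ofReal M') ^ (qr - 1) ≠ ⊤ :=
    ENNReal.rpow_ne_top_of_nonneg (by linarith) ENNReal.ofReal_ne_top
  have c2ne : (μ Set.univ) ^ (1/2:ℝ) ≠ ⊤ :=
    ENNReal.rpow_ne_top_of_nonneg (by norm_num) (measure_ne_top μ _)
  have hu : Tendsto (fun N => ((ENNReal.ofReal M') ^ (qr - 1)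
      * ((BN N) ^ (1/2:ℝ) * (μ Set.univ) ^ (1/2:ℝ))) ^ (1/qr)) atTop (nhds 0) := by
    have h1 : Tendsto (fun N => (BN N) ^ (1/2:ℝ)) atTop (nhds 0) :=
      aux_rpow_tendsto_zero (by norm_num) hBN0
    have h2 : Tendsto (fun N => (BN N) ^ (1/2:ℝ) * (μ Set.univ) ^ (1/2:ℝ))
        atTop (nhds 0) := by
      have := ENNReal.Tendsto.mul_const h1 (Or.inr c2ne)
      simpa using this
    have h3 : Tendsto (fun N => (ENNReal.ofReal M') ^ (qr - 1)
        * ((BN N) ^ (1/2:ℝ) * (μ Set.univ) ^ (1/2:ℝ))) atTop (nhds 0) := by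
      have := ENNReal.Tendsto.const_mul h2 (Or.inr c1ne)
      simpa using this
    exact aux_rpow_tendsto_zero (by positivity) h3
  have hfinal : Tendsto (fun N : ℕ => eLpNorm (fun x => W N x - Vlim x) q μ)
      atTop (nhds 0) :=
    tendsto_of_tendsto_of_tendsto_of_le_of_le tendsto_const_nhds hu
      (fun N => zero_le) hbound
  exact hfinal
end

section
/- Let Q ⊂ ℝ^D be a bounded domain and let U_n : Q → ℝ^D be measurable vector-valued functions with U_n → U weakly in L^1(Q; ℝ^D) (i.e., ∫_Q U_n · g dx → ∫_Q U · g dx for every g ∈ L^∞(Q; ℝ^D)). Suppose that for some regular summation method {s_{n,N}} and for every continuous compactly supported function b : ℝ^D → ℝ, the weighted averages (1/N) Σ_{n=1}^N s_{n,N} b(U_n) converge weakly-* in L^∞(Q) to b(U). Then there is a subsequence {U_{n_j}} such that U_{n_j} → U strongly in L^1(Q; ℝ^D). -/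
set_option maxHeartbeats 1000000
set_option synthInstance.maxHeartbeats 400000

open MeasureTheory Filter Finset
open scoped ENNReal RealInnerProductSpace Topology

/-- Choice of a strictly monotone sequence satisfying a family of properties. -/
lemma aux_exists_strictMono {Q : ℕ → ℕ → Prop}
    (h : ∀ l m : ℕ, ∃ n, m ≤ n ∧ Q l n) :
    ∃ φ : ℕ → ℕ, StrictMono φ ∧ ∀ l, Q l (φ l) := by
  choose F hF1 hF2 using h
  let φ : ℕ → ℕ := fun l => Nat.rec (F 0 0) (fun l ih => F (l + 1) (ih + 1)) l
  have hsucc : ∀ l, φ (l + 1) = F (l + 1) (φ l + 1) := fun l => rfl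
  refine ⟨φ, strictMono_nat_of_lt_succ fun l => ?_, fun l => ?_⟩
  · have := hF1 (l + 1) (φ l + 1); rw [hsucc]; omega
  · cases l with
    | zero => exact hF2 0 0
    | succ l => rw [hsucc]; exact hF2 _ _

/-- If the sum of the lintegrals is finite, the functions tend to zero a.e. -/
lemma aux_ae_tendsto_zero_of_tsum {X : Type*} [MeasurableSpace X] {μ : Measure X}
    {v : ℕ → X → ℝ≥0∞} (hm : ∀ l, AEMeasurable (v l) μ)
    (h : ∑' l, ∫⁻ x, v l x ∂μ ≠ ∞) :
    ∀ᵐ x ∂μ, Tendsto (fun l => v l x) atTop (𝓝 0) := by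
  have h1 : ∫⁻ x, ∑' l, v l x ∂μ ≠ ∞ := by
    rw [lintegral_tsum hm]; exact h
  have h2 : ∀ᵐ x ∂μ, ∑' l, v l x < ∞ := by
    refine ae_lt_top' (AEMeasurable.ennreal_tsum hm) h1
  filter_upwards [h2] with x hx
  exact ENNReal.tendsto_atTop_zero_of_tsum_ne_top hx.ne

/-- Absolute continuity of the integral of a single integrable function. -/
lemma aux_absCont {X : Type*} [MeasurableSpace X] {μ : Measure X}
    {f : X → ℝ} (hf : Integrable f μ) {ε : ℝ} (hε : 0 < ε) :
    ∃ δ : ℝ, 0 < δ ∧ ∀ A : Set X, MeasurableSet A → μ A ≤ ENNReal.ofReal δ →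
      ∫ x in A, |f x| ∂μ ≤ ε := by
  obtain ⟨δ, hδ, hδ'⟩ := (memLp_one_iff_integrable.mpr hf).eLpNorm_indicator_le le_rfl
    ENNReal.one_ne_top hε
  refine ⟨δ, hδ, fun A hA hAμ => ?_⟩
  have hint : Integrable (fun x => |f x|) (μ.restrict A) := (hf.restrict ).abs
  have h0 : ENNReal.ofReal (∫ x in A, |f x| ∂μ) = ∫⁻ x in A, ‖f x‖₊ ∂μ := by
    rw [ofReal_integral_eq_lintegral_ofReal hint (Filter.Eventually.of_forall fun x => abs_nonneg _)]
    congr 1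
    ext x
    rw [← Real.norm_eq_abs, ofReal_norm_eq_enorm, enorm_eq_nnnorm]
  have h1 : eLpNorm (A.indicator f) 1 μ = ∫⁻ x in A, ‖f x‖₊ ∂μ := by
    rw [eLpNorm_indicator_eq_eLpNorm_restrict hA, eLpNorm_one_eq_lintegral_enorm]
    rfl
  have h2 := hδ' A hA hAμ
  rw [h1] at h2
  rw [← h0] at h2
  rwa [ENNReal.ofReal_le_ofReal_iff hε.le] at h2






lemma aux_absCont_finite {X : Type*} [MeasurableSpace X] {μ : Measure X}
    {f : ℕ → X → ℝ} (hf : ∀ n, Integrable (f n) μ) {ε : ℝ} (hε : 0 < ε) (k : ℕ) :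
    ∃ δ : ℝ, 0 < δ ∧ ∀ n ≤ k, ∀ A : Set X, MeasurableSet A → μ A ≤ ENNReal.ofReal δ →
      ∫ x in A, |f n x| ∂μ ≤ ε := by
  induction k with
  | zero =>
    obtain ⟨δ, hδ, h⟩ := aux_absCont (hf 0) hε
    exact ⟨δ, hδ, fun n hn A hA hm => by rw [Nat.le_zero.mp hn]; exact h A hA hm⟩
  | succ k ih =>
    obtain ⟨δ1, h1, H1⟩ := ih
    obtain ⟨δ2, h2, H2⟩ := aux_absCont (hf (k + 1)) hε
    refine ⟨min δ1 δ2, lt_min h1 h2, fun n hn A hA hm => ?_⟩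
    rcases Nat.lt_succ_iff_lt_or_eq.mp (Nat.lt_succ_of_le hn) with h | h
    · exact H1 n (Nat.lt_succ_iff.mp h) A hA
        (hm.trans (ENNReal.ofReal_le_ofReal (min_le_left _ _)))
    · subst h
      exact H2 A hA (hm.trans (ENNReal.ofReal_le_ofReal (min_le_right _ _)))

/-- Vitali–Hahn–Saks style uniform absolute continuity, via Baire category. -/
lemma aux_vhs {X : Type*} [MeasurableSpace X] {μ : Measure X} [IsFiniteMeasure μ]
    {f : ℕ → X → ℝ} (hf : ∀ n, Integrable (f n) μ)
    (hconv : ∀ A : Set X, MeasurableSet A →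
      Tendsto (fun n => ∫ x in A, f n x ∂μ) atTop (𝓝 0))
    {ε : ℝ} (hε : 0 < ε) :
    ∃ δ : ℝ, 0 < δ ∧ ∀ n, ∀ A : Set X, MeasurableSet A → μ A ≤ ENNReal.ofReal δ →
      |∫ x in A, f n x ∂μ| ≤ ε := by
  have hε₀ : 0 < ε / 3 := by linarith
  set ε₀ := ε / 3 with hε₀def
  -- the space of (a.e.) indicator functions inside L¹
  set S : Set (Lp ℝ 1 μ) := {g | ∀ᵐ x ∂μ, (g : X → ℝ) x = 0 ∨ (g : X → ℝ) x = 1} with hSdef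
  have hS0 : (0 : Lp ℝ 1 μ) ∈ S := by
    filter_upwards [Lp.coeFn_zero ℝ 1 μ] with x hx
    left; exact hx
  have hg1 : ∀ g : Lp ℝ 1 μ, g ∈ S → ∀ᵐ x ∂μ, ‖(g : X → ℝ) x‖ ≤ 1 := by
    intro g hg
    filter_upwards [hg] with x hx
    rcases hx with h | h <;> rw [h] <;> norm_num
  -- S is closed
  have hSclosed : IsClosed S := by
    refine IsSeqClosed.isClosed ?_
    intro u g hu hug
    have h1 : Tendsto (fun n => eLpNorm ((u n : X → ℝ) - (g : X → ℝ)) 1 μ) atTop (𝓝 0) :=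
      (Lp.tendsto_Lp_iff_tendsto_eLpNorm' u g).mp hug
    have h2 : TendstoInMeasure μ (fun n => (u n : X → ℝ)) atTop (g : X → ℝ) :=
      tendstoInMeasure_of_tendsto_eLpNorm one_ne_zero
        (fun n => Lp.aestronglyMeasurable _) (Lp.aestronglyMeasurable _) h1
    obtain ⟨ns, _, hns⟩ := h2.exists_seq_tendsto_ae
    have hall : ∀ᵐ x ∂μ, ∀ i, (u (ns i) : X → ℝ) x = 0 ∨ (u (ns i) : X → ℝ) x = 1 :=
      ae_all_iff.mpr fun i => hu (ns i)
    filter_upwards [hns, hall] with x hx hvals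
    have hcl : IsClosed ({0, 1} : Set ℝ) := (Set.toFinite _).isClosed
    have : (g : X → ℝ) x ∈ ({0, 1} : Set ℝ) := by
      refine hcl.mem_of_tendsto hx (Eventually.of_forall fun i => ?_)
      rcases hvals i with h | h <;> simp [h]
    simpa using this
  -- the functionals
  set Λ : ℕ → S → ℝ := fun n g => ∫ x, ((g : Lp ℝ 1 μ) : X → ℝ) x * f n x ∂μ with hΛdef
  have hint : ∀ (n : ℕ) (g : S), Integrable (fun x => ((g : Lp ℝ 1 μ) : X → ℝ) x * f n x) μ :=
    fun n g => (hf n).bdd_mul (Lp.aestronglyMeasurable _) (hg1 _ g.2)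
  -- continuity of the functionals on S
  have hΛcont : ∀ n, Continuous (Λ n) := by
    intro n
    rw [Metric.continuous_iff]
    intro g εc hεc
    have hεc2 : 0 < εc / 2 := by linarith
    obtain ⟨δ, hδ, hδ'⟩ := aux_absCont (hf n) hεc2
    refine ⟨min δ 1, by positivity, fun g' hdist => ?_⟩
    set B : Set X := {x | ((g' : Lp ℝ 1 μ) : X → ℝ) x ≠ ((g : Lp ℝ 1 μ) : X → ℝ) x} with hBdef
    have hBmeas : MeasurableSet B := by
      have h := ((Lp.stronglyMeasurable (g' : Lp ℝ 1 μ)).measurable.sub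
        (Lp.stronglyMeasurable (g : Lp ℝ 1 μ)).measurable)
      have hB2 : B = (fun x => ((g' : Lp ℝ 1 μ) : X → ℝ) x - ((g : Lp ℝ 1 μ) : X → ℝ) x) ⁻¹'
          ({0}ᶜ) := by
        ext x; simp [hBdef, sub_eq_zero]
      rw [hB2]; exact h (measurableSet_singleton 0).compl
    -- μ B is at most ofReal (dist g' g)
    have hμB : μ B ≤ ENNReal.ofReal (dist g' g) := by
      have hae : ∀ᵐ x ∂μ, x ∈ B →
          (1 : ℝ≥0∞) ≤ (‖((g' : Lp ℝ 1 μ) : X → ℝ) x - ((g : Lp ℝ 1 μ) : X → ℝ) x‖₊ : ℝ≥0∞) := by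
        filter_upwards [g'.2, g.2] with x h1 h2 hxB
        have hne : ((g' : Lp ℝ 1 μ) : X → ℝ) x ≠ ((g : Lp ℝ 1 μ) : X → ℝ) x := hxB
        have habs : |((g' : Lp ℝ 1 μ) : X → ℝ) x - ((g : Lp ℝ 1 μ) : X → ℝ) x| = 1 := by
          rcases h1 with h1 | h1 <;> rcases h2 with h2 | h2 <;> rw [h1, h2] <;> simp_all
        rw [← enorm_eq_nnnorm, Real.enorm_eq_ofReal_abs, habs]; simp
      have h3 : μ B = ∫⁻ x in B, 1 ∂μ := by rw [setLIntegral_one]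
      have h4 : ∫⁻ x in B, 1 ∂μ ≤ ∫⁻ x in B,
          (‖((g' : Lp ℝ 1 μ) : X → ℝ) x - ((g : Lp ℝ 1 μ) : X → ℝ) x‖₊ : ℝ≥0∞) ∂μ :=
        lintegral_mono_ae ((ae_restrict_iff' hBmeas).mpr hae)
      have h5 : ∫⁻ x in B,
          (‖((g' : Lp ℝ 1 μ) : X → ℝ) x - ((g : Lp ℝ 1 μ) : X → ℝ) x‖₊ : ℝ≥0∞) ∂μ
          ≤ ∫⁻ x, (‖((g' : Lp ℝ 1 μ) : X → ℝ) x - ((g : Lp ℝ 1 μ) : X → ℝ) x‖₊ : ℝ≥0∞) ∂μ :=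
        setLIntegral_le_lintegral _ _
      have hne : eLpNorm ((((g' : Lp ℝ 1 μ) : X → ℝ)) - (((g : Lp ℝ 1 μ) : X → ℝ))) 1 μ ≠ ∞ := by
        rw [← eLpNorm_congr_ae (Lp.coeFn_sub (g' : Lp ℝ 1 μ) (g : Lp ℝ 1 μ))]
        exact Lp.eLpNorm_ne_top _
      have h6 : ∫⁻ x, (‖((g' : Lp ℝ 1 μ) : X → ℝ) x - ((g : Lp ℝ 1 μ) : X → ℝ) x‖₊ : ℝ≥0∞) ∂μ
          = ENNReal.ofReal (dist g' g) := by
        rw [Subtype.dist_eq, Lp.dist_def, ENNReal.ofReal_toReal hne,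
          eLpNorm_one_eq_lintegral_enorm]
        rfl
      calc μ B = ∫⁻ x in B, 1 ∂μ := h3
        _ ≤ _ := h4
        _ ≤ _ := h5
        _ = _ := h6
    -- the estimate
    have hsubint : Integrable (fun x => (((g' : Lp ℝ 1 μ) : X → ℝ) x
        - ((g : Lp ℝ 1 μ) : X → ℝ) x) * f n x) μ := by
      have : (fun x => (((g' : Lp ℝ 1 μ) : X → ℝ) x - ((g : Lp ℝ 1 μ) : X → ℝ) x) * f n x)
          = fun x => ((g' : Lp ℝ 1 μ) : X → ℝ) x * f n x
            - ((g : Lp ℝ 1 μ) : X → ℝ) x * f n x := by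
        funext x; ring
      rw [this]; exact (hint n g').sub (hint n g)
    have hsub : Λ n g' - Λ n g = ∫ x, (((g' : Lp ℝ 1 μ) : X → ℝ) x
        - ((g : Lp ℝ 1 μ) : X → ℝ) x) * f n x ∂μ := by
      rw [hΛdef]
      simp only
      rw [← integral_sub (hint n g') (hint n g)]
      congr 1; funext x; ring
    have hmono : ∫ x, |(((g' : Lp ℝ 1 μ) : X → ℝ) x - ((g : Lp ℝ 1 μ) : X → ℝ) x) * f n x| ∂μ
        ≤ ∫ x, B.indicator (fun y => |f n y|) x ∂μ := by
      refine integral_mono_ae hsubint.abs ((hf n).abs.indicator hBmeas) ?_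
      filter_upwards [g'.2, g.2] with x h1 h2
      by_cases hxB : x ∈ B
      · rw [Set.indicator_of_mem hxB, abs_mul]
        have : |((g' : Lp ℝ 1 μ) : X → ℝ) x - ((g : Lp ℝ 1 μ) : X → ℝ) x| ≤ 1 := by
          rcases h1 with h1 | h1 <;> rcases h2 with h2 | h2 <;> rw [h1, h2] <;> norm_num
        calc |((g' : Lp ℝ 1 μ) : X → ℝ) x - ((g : Lp ℝ 1 μ) : X → ℝ) x| * |f n x|
            ≤ 1 * |f n x| := by
              exact mul_le_mul_of_nonneg_right this (abs_nonneg _)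
          _ = |f n x| := one_mul _
      · rw [Set.indicator_of_notMem hxB]
        have hxeq : ((g' : Lp ℝ 1 μ) : X → ℝ) x = ((g : Lp ℝ 1 μ) : X → ℝ) x := by
          by_contra hne; exact hxB hne
        rw [hxeq, sub_self, zero_mul, abs_zero]
    have hfinal : dist (Λ n g') (Λ n g) ≤ εc / 2 := by
      rw [Real.dist_eq, hsub]
      calc |∫ x, (((g' : Lp ℝ 1 μ) : X → ℝ) x - ((g : Lp ℝ 1 μ) : X → ℝ) x) * f n x ∂μ|
          ≤ ∫ x, |(((g' : Lp ℝ 1 μ) : X → ℝ) x - ((g : Lp ℝ 1 μ) : X → ℝ) x) * f n x| ∂μ := by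
            have := norm_integral_le_integral_norm (μ := μ)
              (fun x => (((g' : Lp ℝ 1 μ) : X → ℝ) x - ((g : Lp ℝ 1 μ) : X → ℝ) x) * f n x)
            simp only [Real.norm_eq_abs] at this
            exact this
        _ ≤ ∫ x, B.indicator (fun y => |f n y|) x ∂μ := hmono
        _ = ∫ x in B, |f n x| ∂μ := integral_indicator hBmeas
        _ ≤ εc / 2 := by
            refine hδ' B hBmeas (hμB.trans (ENNReal.ofReal_le_ofReal ?_))
            exact le_trans hdist.le (min_le_left _ _)
    linarith [hfinal]
  -- pointwise convergence of the functionals to 0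
  have hΛconv : ∀ g : S, Tendsto (fun n => Λ n g) atTop (𝓝 0) := by
    intro g
    set A : Set X := {x | ((g : Lp ℝ 1 μ) : X → ℝ) x = 1} with hAdef
    have hA : MeasurableSet A :=
      (Lp.stronglyMeasurable (g : Lp ℝ 1 μ)).measurable (measurableSet_singleton 1)
    have heq : ∀ n, Λ n g = ∫ x in A, f n x ∂μ := by
      intro n
      rw [hΛdef]
      simp only
      rw [← integral_indicator hA]
      refine integral_congr_ae ?_
      filter_upwards [g.2] with x hx
      rcases hx with h | h
      · have hxA : x ∉ A := by simp [hAdef, h]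
        rw [h, Set.indicator_of_notMem hxA, zero_mul]
      · have hxA : x ∈ A := by simp [hAdef, h]
        rw [h, Set.indicator_of_mem hxA, one_mul]
    simp_rw [heq]
    exact hconv A hA
  -- Baire category
  haveI : Nonempty S := ⟨⟨0, hS0⟩⟩
  haveI : CompleteSpace S := hSclosed.completeSpace_coe
  set Fk : ℕ → Set S := fun k =>
    {g | ∀ m n, k ≤ m → k ≤ n → |Λ m g - Λ n g| ≤ ε₀} with hFkdef
  have hFclosed : ∀ k, IsClosed (Fk k) := by
    intro k
    have : Fk k = ⋂ (m) (n) (_ : k ≤ m) (_ : k ≤ n), {g : S | |Λ m g - Λ n g| ≤ ε₀} := by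
      ext g; simp [hFkdef]
    rw [this]
    exact isClosed_iInter fun m => isClosed_iInter fun n => isClosed_iInter fun _ =>
      isClosed_iInter fun _ => isClosed_le (((hΛcont m).sub (hΛcont n)).abs) continuous_const
  have hFunion : ⋃ k, Fk k = Set.univ := by
    ext g
    simp only [Set.mem_iUnion, Set.mem_univ, iff_true]
    have := (Metric.tendsto_atTop.mp (hΛconv g)) (ε₀ / 2) (by linarith)
    obtain ⟨k, hk⟩ := this
    refine ⟨k, fun m n hm hn => ?_⟩
    have h1 := hk m hm
    have h2 := hk n hn
    rw [Real.dist_eq, sub_zero] at h1 h2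
    calc |Λ m g - Λ n g| ≤ |Λ m g| + |Λ n g| := abs_sub _ _
      _ ≤ ε₀ := by linarith
  obtain ⟨k, hkint⟩ := nonempty_interior_of_iUnion_of_closed hFclosed hFunion
  obtain ⟨g₀, hg₀⟩ := hkint
  obtain ⟨ρ, hρ, hball⟩ := Metric.mem_nhds_iff.mp (mem_interior_iff_mem_nhds.mp hg₀)
  -- conclusion
  obtain ⟨δ₁, hδ₁, hδ₁'⟩ := aux_absCont_finite hf hε₀ k
  refine ⟨min δ₁ (ρ / 2), by positivity, fun n A hA hAμ => ?_⟩
  have hAδ₁ : μ A ≤ ENNReal.ofReal δ₁ :=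
    hAμ.trans (ENNReal.ofReal_le_ofReal (min_le_left _ _))
  have hAρ : μ A ≤ ENNReal.ofReal (ρ / 2) :=
    hAμ.trans (ENNReal.ofReal_le_ofReal (min_le_right _ _))
  by_cases hn : n ≤ k
  · have e1 : |∫ x in A, f n x ∂μ| ≤ ∫ x in A, |f n x| ∂μ := by
      simpa [Real.norm_eq_abs] using norm_integral_le_integral_norm (f n) (μ := μ.restrict A)
    have e2 : ∫ x in A, |f n x| ∂μ ≤ ε₀ := hδ₁' n hn A hA hAδ₁
    rw [hε₀def] at e2
    linarith
  push_neg at hn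
  -- the two indicator functions
  set A₀ : Set X := {x | ((g₀ : Lp ℝ 1 μ) : X → ℝ) x = 1} with hA₀def
  have hA₀ : MeasurableSet A₀ :=
    (Lp.stronglyMeasurable (g₀ : Lp ℝ 1 μ)).measurable (measurableSet_singleton 1)
  have hg₀eq : ((g₀ : Lp ℝ 1 μ) : X → ℝ) =ᵐ[μ] A₀.indicator (fun _ => (1 : ℝ)) := by
    filter_upwards [g₀.2] with x hx
    rcases hx with h | h
    · have : x ∉ A₀ := by simp [hA₀def, h]
      rw [h, Set.indicator_of_notMem this]
    · have : x ∈ A₀ := by simp [hA₀def, h]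
      rw [h, Set.indicator_of_mem this]
  set u₁ : Lp ℝ 1 μ := indicatorConstLp 1 (hA₀.union hA) (measure_ne_top μ _) (1 : ℝ) with hu₁def
  set u₂ : Lp ℝ 1 μ := indicatorConstLp 1 (hA₀.diff hA) (measure_ne_top μ _) (1 : ℝ) with hu₂def
  have hc₁ : ⇑u₁ =ᵐ[μ] (A₀ ∪ A).indicator (fun _ => (1 : ℝ)) := indicatorConstLp_coeFn
  have hc₂ : ⇑u₂ =ᵐ[μ] (A₀ \ A).indicator (fun _ => (1 : ℝ)) := indicatorConstLp_coeFn
  have hu₁S : u₁ ∈ S := by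
    filter_upwards [hc₁] with x hx
    rw [hx]
    by_cases h : x ∈ A₀ ∪ A
    · right; rw [Set.indicator_of_mem h]
    · left; rw [Set.indicator_of_notMem h]
  have hu₂S : u₂ ∈ S := by
    filter_upwards [hc₂] with x hx
    rw [hx]
    by_cases h : x ∈ A₀ \ A
    · right; rw [Set.indicator_of_mem h]
    · left; rw [Set.indicator_of_notMem h]
  have htoReal : ∀ (B : Set X), μ B ≤ ENNReal.ofReal (ρ / 2) →
      (μ B).toReal ≤ ρ / 2 := by
    intro B hB
    exact ENNReal.toReal_le_of_le_ofReal (by linarith) hB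
  have hdist₁ : dist (⟨u₁, hu₁S⟩ : S) g₀ < ρ := by
    rw [Subtype.dist_eq, Lp.dist_def]
    have he : (⇑u₁ - ⇑(g₀ : Lp ℝ 1 μ)) =ᵐ[μ] (A \ A₀).indicator (fun _ => (1 : ℝ)) := by
      filter_upwards [hc₁, hg₀eq] with x h1 h2
      simp only [Pi.sub_apply]
      rw [h1, h2]
      by_cases hx0 : x ∈ A₀ <;> by_cases hxA : x ∈ A <;>
        simp [Set.indicator_apply, hx0, hxA]
    rw [eLpNorm_congr_ae he,
      eLpNorm_indicator_const (hA.diff hA₀) one_ne_zero ENNReal.one_ne_top]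
    simp only [enorm_one, nnnorm_one, ENNReal.coe_one, one_mul, ENNReal.toReal_one, one_div, inv_one,
      ENNReal.rpow_one]
    have hle : μ (A \ A₀) ≤ ENNReal.ofReal (ρ / 2) :=
      le_trans (measure_mono Set.diff_subset) hAρ
    have := htoReal _ hle
    linarith
  have hdist₂ : dist (⟨u₂, hu₂S⟩ : S) g₀ < ρ := by
    rw [Subtype.dist_eq, Lp.dist_def]
    have he : (⇑u₂ - ⇑(g₀ : Lp ℝ 1 μ)) =ᵐ[μ] (A₀ ∩ A).indicator (fun _ => (-1 : ℝ)) := by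
      filter_upwards [hc₂, hg₀eq] with x h1 h2
      simp only [Pi.sub_apply]
      rw [h1, h2]
      by_cases hx0 : x ∈ A₀ <;> by_cases hxA : x ∈ A <;>
        simp [Set.indicator_apply, hx0, hxA]
    rw [eLpNorm_congr_ae he,
      eLpNorm_indicator_const (hA₀.inter hA) one_ne_zero ENNReal.one_ne_top]
    simp only [enorm_neg, enorm_one, nnnorm_neg, nnnorm_one, ENNReal.coe_one, one_mul, ENNReal.toReal_one, one_div,
      inv_one, ENNReal.rpow_one]
    have hle : μ (A₀ ∩ A) ≤ ENNReal.ofReal (ρ / 2) :=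
      le_trans (measure_mono Set.inter_subset_right) hAρ
    have := htoReal _ hle
    linarith
  have hmem₁ : (⟨u₁, hu₁S⟩ : S) ∈ Fk k := hball (Metric.mem_ball.mpr hdist₁)
  have hmem₂ : (⟨u₂, hu₂S⟩ : S) ∈ Fk k := hball (Metric.mem_ball.mpr hdist₂)
  have hΛu₁ : ∀ m, Λ m ⟨u₁, hu₁S⟩ = ∫ x in A₀ ∪ A, f m x ∂μ := by
    intro m
    rw [hΛdef]
    simp only
    rw [← integral_indicator (hA₀.union hA)]
    refine integral_congr_ae ?_
    filter_upwards [hc₁] with x hx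
    rw [hx]
    by_cases h : x ∈ A₀ ∪ A <;> simp [Set.indicator_apply, h]
  have hΛu₂ : ∀ m, Λ m ⟨u₂, hu₂S⟩ = ∫ x in A₀ \ A, f m x ∂μ := by
    intro m
    rw [hΛdef]
    simp only
    rw [← integral_indicator (hA₀.diff hA)]
    refine integral_congr_ae ?_
    filter_upwards [hc₂] with x hx
    rw [hx]
    by_cases h : x ∈ A₀ \ A <;> simp [Set.indicator_apply, h]
  have hkey : ∀ m, Λ m ⟨u₁, hu₁S⟩ - Λ m ⟨u₂, hu₂S⟩ = ∫ x in A, f m x ∂μ := by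
    intro m
    rw [hΛu₁, hΛu₂]
    have hd : Disjoint (A₀ \ A) A := disjoint_sdiff_self_left
    have hu : A₀ ∪ A = (A₀ \ A) ∪ A := (Set.diff_union_self).symm
    rw [hu, setIntegral_union hd hA ((hf m).integrableOn) ((hf m).integrableOn)]
    ring
  have h1 := hmem₁ n k hn.le le_rfl
  have h2 := hmem₂ n k hn.le le_rfl
  have h3 : |∫ x in A, f k x ∂μ| ≤ ε₀ := by
    have e1 : |∫ x in A, f k x ∂μ| ≤ ∫ x in A, |f k x| ∂μ := by
      simpa [Real.norm_eq_abs] using norm_integral_le_integral_norm (f k) (μ := μ.restrict A)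
    exact e1.trans (hδ₁' k le_rfl A hA hAδ₁)
  have hiden : ∫ x in A, f n x ∂μ = (Λ n ⟨u₁, hu₁S⟩ - Λ k ⟨u₁, hu₁S⟩)
      - (Λ n ⟨u₂, hu₂S⟩ - Λ k ⟨u₂, hu₂S⟩) + ∫ x in A, f k x ∂μ := by
    have e1 := hkey n
    have e2 := hkey k
    linarith
  have l1 := abs_le.mp h1
  have l2 := abs_le.mp h2
  have l3 := abs_le.mp h3
  rw [hiden]
  rw [hε₀def] at l1 l2 l3
  refine abs_le.mpr ⟨by linarith, by linarith⟩




/-- A countable dense sequence in Euclidean space. -/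
noncomputable def auxSeq (D : ℕ) : ℕ → EuclideanSpace ℝ (Fin D) :=
  TopologicalSpace.denseSeq (EuclideanSpace ℝ (Fin D))

/-- A countable family of bump functions separating points. -/
noncomputable def auxBump (D : ℕ) (k : ℕ) : EuclideanSpace ℝ (Fin D) → ℝ :=
  fun v => max 0 (1 - ((k.unpair.2 : ℝ) + 1) * dist v (auxSeq D k.unpair.1))

lemma auxBump_cont (D k : ℕ) : Continuous (auxBump D k) :=
  continuous_const.max
    (continuous_const.sub (continuous_const.mul (continuous_id.dist continuous_const)))

lemma auxBump_nonneg (D k : ℕ) (v : EuclideanSpace ℝ (Fin D)) : 0 ≤ auxBump D k v :=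
  le_max_left _ _

lemma auxBump_le_one (D k : ℕ) (v : EuclideanSpace ℝ (Fin D)) : auxBump D k v ≤ 1 := by
  refine max_le zero_le_one ?_
  have h1 : 0 ≤ ((k.unpair.2 : ℝ) + 1) * dist v (auxSeq D k.unpair.1) := by positivity
  linarith

lemma auxBump_support (D k : ℕ) : HasCompactSupport (auxBump D k) := by
  refine HasCompactSupport.intro (isCompact_closedBall (auxSeq D k.unpair.1)
    (1 / ((k.unpair.2 : ℝ) + 1))) (fun x hx => ?_)
  simp only [Metric.mem_closedBall, not_le] at hx
  have hpos : (0 : ℝ) < (k.unpair.2 : ℝ) + 1 := by positivity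
  have : (1 : ℝ) ≤ ((k.unpair.2 : ℝ) + 1) * dist x (auxSeq D k.unpair.1) := by
    rw [div_lt_iff₀ hpos] at hx
    nlinarith [dist_nonneg (x := x) (y := auxSeq D k.unpair.1)]
  unfold auxBump
  refine max_eq_left (by linarith)

/-- The bump functions separate points: pointwise convergence of all bumps implies convergence. -/
lemma auxBump_tendsto {D : ℕ} {v : ℕ → EuclideanSpace ℝ (Fin D)} {w : EuclideanSpace ℝ (Fin D)}
    (h : ∀ k, Tendsto (fun j => auxBump D k (v j)) atTop (𝓝 (auxBump D k w))) :
    Tendsto v atTop (𝓝 w) := by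
  rw [Metric.tendsto_atTop]
  intro ε hε
  obtain ⟨m, hm⟩ := exists_nat_one_div_lt (show (0 : ℝ) < ε / 2 by linarith)
  set r : ℝ := 1 / ((m : ℝ) + 1) with hrdef
  have hr : 0 < r := by positivity
  obtain ⟨q, hq⟩ := (TopologicalSpace.denseRange_denseSeq
    (EuclideanSpace ℝ (Fin D))).exists_dist_lt w (show (0 : ℝ) < r / 2 by linarith)
  set k := Nat.pair q m with hkdef
  have hku : k.unpair = (q, m) := Nat.unpair_pair q m
  have heq : auxSeq D k.unpair.1 = auxSeq D q := by rw [hku]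
  have heq2 : ((k.unpair.2 : ℝ) + 1) = (m : ℝ) + 1 := by rw [hku]
  have hbw : 1 / 2 ≤ auxBump D k w := by
    unfold auxBump
    rw [heq, heq2]
    have hd : dist w (auxSeq D q) < r / 2 := hq
    have : 1 - ((m : ℝ) + 1) * dist w (auxSeq D q) ≥ 1 / 2 := by
      have h1 : ((m : ℝ) + 1) * dist w (auxSeq D q) ≤ ((m : ℝ) + 1) * (r / 2) :=
        mul_le_mul_of_nonneg_left hd.le (by positivity)
      have h2 : ((m : ℝ) + 1) * (r / 2) = 1 / 2 := by
        rw [hrdef]; field_simp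
      linarith
    exact le_max_of_le_right this
  have hev := (Metric.tendsto_atTop.mp (h k)) (1 / 4) (by norm_num)
  obtain ⟨N, hN⟩ := hev
  refine ⟨N, fun j hj => ?_⟩
  have h1 := hN j hj
  rw [Real.dist_eq] at h1
  have h2 : 1 / 4 < auxBump D k (v j) := by
    have := abs_lt.mp h1
    linarith
  have h3 : 1 - ((m : ℝ) + 1) * dist (v j) (auxSeq D q) > 1 / 4 := by
    unfold auxBump at h2
    rw [heq, heq2] at h2
    rcases max_cases (0 : ℝ) (1 - ((m : ℝ) + 1) * dist (v j) (auxSeq D q)) with ⟨he, _⟩ | ⟨he, _⟩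
    · rw [he] at h2; norm_num at h2
    · rw [he] at h2; linarith
  have h4 : dist (v j) (auxSeq D q) < (3 / 4) * r := by
    have hpos : (0 : ℝ) < (m : ℝ) + 1 := by positivity
    have : ((m : ℝ) + 1) * dist (v j) (auxSeq D q) < 3 / 4 := by linarith
    have hr1 : ((m : ℝ) + 1) * r = 1 := by rw [hrdef]; field_simp
    nlinarith [dist_nonneg (x := v j) (y := auxSeq D q)]
  calc dist (v j) w ≤ dist (v j) (auxSeq D q) + dist (auxSeq D q) w := dist_triangle _ _ _
    _ < (3 / 4) * r + r / 2 := by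
        have : dist (auxSeq D q) w < r / 2 := by rw [dist_comm]; exact hq
        linarith
    _ ≤ ε := by
        have : r < ε / 2 := hm
        linarith

/-- Euclidean norm is at most the sum of the absolute values of the coordinates. -/
lemma aux_norm_le_sum {D : ℕ} (v : EuclideanSpace ℝ (Fin D)) :
    ‖v‖ ≤ ∑ i : Fin D, |v i| := by
  rw [EuclideanSpace.norm_eq]
  have h1 : ∑ i : Fin D, ‖v i‖ ^ 2 ≤ (∑ i : Fin D, |v i|) ^ 2 := by
    have h2 : ∀ i : Fin D, ‖v i‖ ^ 2 ≤ |v i| * ∑ j : Fin D, |v j| := by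
      intro i
      have h3 : |v i| ≤ ∑ j : Fin D, |v j| :=
        Finset.single_le_sum (fun j _ => abs_nonneg (v j)) (Finset.mem_univ i)
      rw [Real.norm_eq_abs, sq]
      exact mul_le_mul_of_nonneg_left h3 (abs_nonneg _)
    calc ∑ i : Fin D, ‖v i‖ ^ 2 ≤ ∑ i : Fin D, |v i| * ∑ j : Fin D, |v j| :=
          Finset.sum_le_sum (fun i _ => h2 i)
      _ = (∑ i : Fin D, |v i|) ^ 2 := by rw [← Finset.sum_mul, sq]
  calc Real.sqrt (∑ i : Fin D, ‖v i‖ ^ 2) ≤ Real.sqrt ((∑ i : Fin D, |v i|) ^ 2) :=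
        Real.sqrt_le_sqrt h1
    _ = ∑ i : Fin D, |v i| := Real.sqrt_sq (Finset.sum_nonneg fun i _ => abs_nonneg _)

/-- Coordinates are bounded by the norm. -/
lemma aux_coord_le {D : ℕ} (v : EuclideanSpace ℝ (Fin D)) (i : Fin D) : |v i| ≤ ‖v‖ := by
  rw [EuclideanSpace.norm_eq]
  have h1 : |v i| = Real.sqrt (‖v i‖ ^ 2) := by
    rw [Real.sqrt_sq_eq_abs, Real.norm_eq_abs, abs_abs]
  rw [h1]
  refine Real.sqrt_le_sqrt ?_
  exact Finset.single_le_sum (fun j _ => sq_nonneg ‖v j‖) (Finset.mem_univ i)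
lemma aux_geom (M : ℕ) : ∑ k ∈ Finset.range M, (1 / 2 : ℝ) ^ (k + 1) = 1 - (1 / 2) ^ M := by
  induction M with
  | zero => simp
  | succ M ih => rw [Finset.sum_range_succ, ih, pow_succ]; ring

/-- Lemma 3.8 of the paper: if `U_n → U` weakly in `L¹(Q; ℝ^D)` and for some regular
summation method the weighted averages `(1/N) ∑_{n=1}^N s_{n,N} b(U_n)` converge
weakly-* in `L^∞(Q)` to `b(U)` for every `b ∈ C_c(ℝ^D)`, then some subsequence of
`U_n` converges to `U` strongly in `L¹(Q; ℝ^D)`. -/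
theorem strong_L1_subsequence_of_weighted_averages
    {D : ℕ} (Q : Set (EuclideanSpace ℝ (Fin D)))
    (hQopen : IsOpen Q) (hQbdd : Bornology.IsBounded Q)
    (U : ℕ → EuclideanSpace ℝ (Fin D) → EuclideanSpace ℝ (Fin D))
    (Ulim : EuclideanSpace ℝ (Fin D) → EuclideanSpace ℝ (Fin D))
    (hUmeas : ∀ n, Measurable (U n))
    (hUint : ∀ n, Integrable (U n) (volume.restrict Q))
    (hUlimint : Integrable Ulim (volume.restrict Q))
    (hweak : ∀ g : EuclideanSpace ℝ (Fin D) → EuclideanSpace ℝ (Fin D),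
      Measurable g → (∃ Cg : ℝ, ∀ᵐ x ∂(volume.restrict Q), ‖g x‖ ≤ Cg) →
      Filter.Tendsto (fun n : ℕ => ∫ x in Q, ⟪U n x, g x⟫) Filter.atTop
        (nhds (∫ x in Q, ⟪Ulim x, g x⟫)))
    (s : ℕ → ℕ → ℝ) (sbar : ℝ) (hreg : IsRegularSummation s sbar)
    (havg : ∀ b : EuclideanSpace ℝ (Fin D) → ℝ, Continuous b → HasCompactSupport b →
      ∀ g : EuclideanSpace ℝ (Fin D) → ℝ, Integrable g (volume.restrict Q) →
        Filter.Tendsto (fun N : ℕ =>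
            ∫ x in Q, ((1 / (N : ℝ)) * ∑ n ∈ Finset.Icc 1 N, s n N * b (U n x)) * g x)
          Filter.atTop (nhds (∫ x in Q, b (Ulim x) * g x))) :
    ∃ φ : ℕ → ℕ, StrictMono φ ∧
      Filter.Tendsto (fun j : ℕ => ∫ x in Q, ‖U (φ j) x - Ulim x‖)
        Filter.atTop (nhds 0) := by
  classical
  obtain ⟨hs0, hssbar, hs_supp, hs_sum⟩ := hreg
  have hsbar0 : 0 ≤ sbar := le_trans (hs0 1 1) (hssbar 1 1)
  set μ : Measure (EuclideanSpace ℝ (Fin D)) := volume.restrict Q with hμdef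
  have hQfin : volume Q < ∞ := hQbdd.measure_lt_top
  haveI hfin : IsFiniteMeasure μ := by
    constructor
    rw [hμdef, Measure.restrict_apply_univ]
    exact hQfin
  -- measurable representative of the limit
  have hUlimsm : AEStronglyMeasurable Ulim μ := hUlimint.aestronglyMeasurable
  set W : EuclideanSpace ℝ (Fin D) → EuclideanSpace ℝ (Fin D) := hUlimsm.mk Ulim with hWdef
  have hWmeas : Measurable W := hUlimsm.stronglyMeasurable_mk.measurable
  have hWae : Ulim =ᵐ[μ] W := hUlimsm.ae_eq_mk
  have hWint : Integrable W μ := hUlimint.congr hWae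
  -- abbreviations
  set bb : ℕ → EuclideanSpace ℝ (Fin D) → ℝ := auxBump D with hbbdef
  -- integrability of bounded measurable functions
  have hbint : ∀ (h : EuclideanSpace ℝ (Fin D) → ℝ) (C : ℝ), Measurable h →
      (∀ x, |h x| ≤ C) → Integrable h μ := by
    intro h C hm hb
    exact Integrable.mono' (integrable_const C) hm.aestronglyMeasurable
      (Eventually.of_forall (by simpa [Real.norm_eq_abs] using hb))
  -- Step A: the weighted averages of the L² distances of b ∘ U n to b ∘ W tend to zero
  set c : ℕ → ℕ → ℝ := fun k n => ∫ x, (bb k (U n x) - bb k (W x)) ^ 2 ∂μ with hcdef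
  have hc_nonneg : ∀ k n, 0 ≤ c k n := fun k n =>
    integral_nonneg fun x => sq_nonneg _
  have hA : ∀ k, Tendsto (fun N : ℕ =>
      (1 / (N : ℝ)) * ∑ n ∈ Finset.Icc 1 N, s n N * c k n) atTop (𝓝 0) := by
    intro k
    have hbb01 : ∀ v, |bb k v| ≤ 1 := fun v =>
      abs_le.mpr ⟨by linarith [auxBump_nonneg D k v], auxBump_le_one D k v⟩
    set b2 : EuclideanSpace ℝ (Fin D) → ℝ := fun v => bb k v * bb k v with hb2def
    have hb2c : Continuous b2 := (auxBump_cont D k).mul (auxBump_cont D k)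
    have hb2s : HasCompactSupport b2 := (auxBump_support D k).mul_left
    have hb21 : ∀ v, |b2 v| ≤ 1 := by
      intro v
      rw [hb2def]
      simp only
      rw [abs_mul]
      exact mul_le_one₀ (hbb01 v) (abs_nonneg _) (hbb01 v)
    have hgW : Integrable (fun x => bb k (W x)) μ :=
      hbint _ 1 ((auxBump_cont D k).measurable.comp hWmeas) (fun x => hbb01 (W x))
    -- swap integral and sum in the averaged quantity
    have hswap : ∀ b : EuclideanSpace ℝ (Fin D) → ℝ, Continuous b → (∀ v, |b v| ≤ 1) →
        ∀ g : EuclideanSpace ℝ (Fin D) → ℝ, Integrable g μ → ∀ N : ℕ,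
        (∫ x, ((1 / (N : ℝ)) * ∑ n ∈ Finset.Icc 1 N, s n N * b (U n x)) * g x ∂μ)
          = (1 / (N : ℝ)) * ∑ n ∈ Finset.Icc 1 N, s n N * ∫ x, b (U n x) * g x ∂μ := by
      intro b hb hb1 g hg N
      have hbgint : ∀ n : ℕ, Integrable (fun x => b (U n x) * g x) μ := fun n =>
        hg.bdd_mul ((hb.measurable.comp (hUmeas n)).aestronglyMeasurable)
          (Eventually.of_forall fun x => by
            simpa [Real.norm_eq_abs] using hb1 (U n x))
      have heq : (fun x => ((1 / (N : ℝ)) * ∑ n ∈ Finset.Icc 1 N, s n N * b (U n x)) * g x)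
          = fun x => ∑ n ∈ Finset.Icc 1 N,
              ((1 / (N : ℝ)) * s n N) * (b (U n x) * g x) := by
        funext x
        rw [mul_assoc, Finset.sum_mul, Finset.mul_sum]
        exact Finset.sum_congr rfl fun n _ => by ring
      rw [heq, integral_finset_sum _ (fun n _ => ((hbgint n).const_mul _))]
      simp_rw [integral_const_mul, mul_assoc]
      rw [← Finset.mul_sum]
    set L : ℝ := ∫ x, bb k (W x) * bb k (W x) ∂μ with hLdef
    -- first averaged limit
    have hT1 := havg b2 hb2c hb2s (fun _ => (1 : ℝ)) (integrable_const 1)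
    have he1 : (fun N : ℕ => ∫ x, ((1 / (N : ℝ))
        * ∑ n ∈ Finset.Icc 1 N, s n N * b2 (U n x)) * (1 : ℝ) ∂μ)
        = fun N : ℕ => (1 / (N : ℝ)) * ∑ n ∈ Finset.Icc 1 N,
            s n N * ∫ x, b2 (U n x) * (1 : ℝ) ∂μ :=
      funext fun N => hswap b2 hb2c hb21 _ (integrable_const 1) N
    rw [he1] at hT1
    have hL1 : (∫ x, b2 (Ulim x) * (1 : ℝ) ∂μ) = L := by
      refine integral_congr_ae ?_
      filter_upwards [hWae] with x hx
      rw [hb2def]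
      simp only
      rw [hx, mul_one]
    rw [hL1] at hT1
    -- second averaged limit
    have hT2 := havg (bb k) (auxBump_cont D k) (auxBump_support D k)
      (fun x => bb k (W x)) hgW
    have he2 : (fun N : ℕ => ∫ x, ((1 / (N : ℝ))
        * ∑ n ∈ Finset.Icc 1 N, s n N * bb k (U n x)) * bb k (W x) ∂μ)
        = fun N : ℕ => (1 / (N : ℝ)) * ∑ n ∈ Finset.Icc 1 N,
            s n N * ∫ x, bb k (U n x) * bb k (W x) ∂μ :=
      funext fun N => hswap (bb k) (auxBump_cont D k) hbb01 _ hgW N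
    rw [he2] at hT2
    have hL2 : (∫ x, bb k (Ulim x) * bb k (W x) ∂μ) = L := by
      refine integral_congr_ae ?_
      filter_upwards [hWae] with x hx
      rw [hx]
    rw [hL2] at hT2
    -- expansion of c k n
    have hexp : ∀ n, c k n = (∫ x, b2 (U n x) * (1 : ℝ) ∂μ)
        - 2 * (∫ x, bb k (U n x) * bb k (W x) ∂μ) + L := by
      intro n
      have hm1 : Measurable fun x => b2 (U n x) * (1 : ℝ) := by
        have : Measurable fun x => bb k (U n x) :=
          (auxBump_cont D k).measurable.comp (hUmeas n)
        exact (this.mul this).mul measurable_const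
      have hm2 : Measurable fun x => bb k (U n x) * bb k (W x) :=
        ((auxBump_cont D k).measurable.comp (hUmeas n)).mul
          ((auxBump_cont D k).measurable.comp hWmeas)
      have hm3 : Measurable fun x => bb k (W x) * bb k (W x) := by
        have : Measurable fun x => bb k (W x) :=
          (auxBump_cont D k).measurable.comp hWmeas
        exact this.mul this
      have i1 : Integrable (fun x => b2 (U n x) * (1 : ℝ)) μ :=
        hbint _ 1 hm1 (fun x => by
          rw [mul_one]; exact hb21 (U n x))
      have i2 : Integrable (fun x => bb k (U n x) * bb k (W x)) μ :=
        hbint _ 1 hm2 (fun x => by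
          rw [abs_mul]
          exact mul_le_one₀ (hbb01 _) (abs_nonneg _) (hbb01 _))
      have i3 : Integrable (fun x => bb k (W x) * bb k (W x)) μ :=
        hbint _ 1 hm3 (fun x => by
          rw [abs_mul]
          exact mul_le_one₀ (hbb01 _) (abs_nonneg _) (hbb01 _))
      have hptw : (fun x => (bb k (U n x) - bb k (W x)) ^ 2)
          = fun x => (b2 (U n x) * (1 : ℝ) - 2 * (bb k (U n x) * bb k (W x)))
            + bb k (W x) * bb k (W x) := by
        funext x
        rw [hb2def]
        simp only
        ring
      have i12 : Integrable (fun x => b2 (U n x) * (1 : ℝ)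
          - 2 * (bb k (U n x) * bb k (W x))) μ := i1.sub (i2.const_mul 2)
      rw [hcdef]
      simp only
      rw [hptw, integral_add i12 i3, integral_sub i1 (i2.const_mul 2),
        integral_const_mul, hLdef]
    -- combining
    have hsum_eq : ∀ N : ℕ, 1 ≤ N →
        (1 / (N : ℝ)) * ∑ n ∈ Finset.Icc 1 N, s n N * c k n
        = ((1 / (N : ℝ)) * ∑ n ∈ Finset.Icc 1 N, s n N * ∫ x, b2 (U n x) * (1 : ℝ) ∂μ)
          - 2 * ((1 / (N : ℝ)) * ∑ n ∈ Finset.Icc 1 N,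
              s n N * ∫ x, bb k (U n x) * bb k (W x) ∂μ) + L := by
      intro N hN
      have hNne : (N : ℝ) ≠ 0 := Nat.cast_ne_zero.mpr (by omega)
      have e1 : ∑ n ∈ Finset.Icc 1 N, s n N * c k n
          = (∑ n ∈ Finset.Icc 1 N, s n N * ∫ x, b2 (U n x) * (1 : ℝ) ∂μ)
            - 2 * (∑ n ∈ Finset.Icc 1 N, s n N * ∫ x, bb k (U n x) * bb k (W x) ∂μ)
            + (∑ n ∈ Finset.Icc 1 N, s n N) * L := by
        calc ∑ n ∈ Finset.Icc 1 N, s n N * c k n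
            = ∑ n ∈ Finset.Icc 1 N, ((s n N * ∫ x, b2 (U n x) * (1 : ℝ) ∂μ)
              - 2 * (s n N * ∫ x, bb k (U n x) * bb k (W x) ∂μ) + s n N * L) :=
              Finset.sum_congr rfl fun n _ => by rw [hexp n]; ring
          _ = _ := by
              rw [Finset.sum_add_distrib, Finset.sum_sub_distrib, ← Finset.mul_sum,
                ← Finset.sum_mul]
      rw [e1, hs_sum N]
      field_simp
    have hcomb : Tendsto (fun N : ℕ =>
        ((1 / (N : ℝ)) * ∑ n ∈ Finset.Icc 1 N, s n N * ∫ x, b2 (U n x) * (1 : ℝ) ∂μ)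
          - 2 * ((1 / (N : ℝ)) * ∑ n ∈ Finset.Icc 1 N,
              s n N * ∫ x, bb k (U n x) * bb k (W x) ∂μ) + L)
        atTop (𝓝 (L - 2 * L + L)) :=
      (hT1.sub (hT2.const_mul 2)).add_const L
    have hzero : L - 2 * L + L = 0 := by ring
    rw [hzero] at hcomb
    refine hcomb.congr' ?_
    refine eventuallyEq_of_mem (Filter.Ici_mem_atTop 1) fun N hN => ?_
    exact (hsum_eq N hN).symm
  -- Step B: extraction of a subsequence along which all the L² distances tend to zero
  set Hf : ℕ → EuclideanSpace ℝ (Fin D) → ℝ := fun n x =>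
    ∑ k ∈ Finset.range (n + 1), (1 / 2 : ℝ) ^ (k + 1)
      * min 1 ((bb k (U n x) - bb k (W x)) ^ 2) with hHfdef
  set Cn : ℕ → ℝ := fun n => ∫ x, Hf n x ∂μ with hCndef
  have hHmeas : ∀ n, Measurable (Hf n) := by
    intro n
    refine Finset.measurable_sum _ (fun k _ => ?_)
    refine Measurable.const_mul (Measurable.min measurable_const ?_) _
    have hmk : Measurable (fun x => bb k (U n x) - bb k (W x)) :=
      (((auxBump_cont D k).measurable).comp (hUmeas n)).sub
        (((auxBump_cont D k).measurable).comp hWmeas)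
    exact hmk.pow_const 2
  have hHnonneg : ∀ n x, 0 ≤ Hf n x := by
    intro n x
    refine Finset.sum_nonneg fun k _ => ?_
    exact mul_nonneg (by positivity) (le_min zero_le_one (sq_nonneg _))
  have hHle : ∀ n x, Hf n x ≤ 1 := by
    intro n x
    calc Hf n x ≤ ∑ k ∈ Finset.range (n + 1), (1 / 2 : ℝ) ^ (k + 1) :=
          Finset.sum_le_sum fun k _ =>
            mul_le_of_le_one_right (by positivity) (min_le_left _ _)
      _ = 1 - (1 / 2 : ℝ) ^ (n + 1) := aux_geom (n + 1)
      _ ≤ 1 := by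
          have : (0:ℝ) ≤ (1 / 2 : ℝ) ^ (n + 1) := by positivity
          linarith
  have hHint : ∀ n, Integrable (Hf n) μ := fun n =>
    hbint _ 1 (hHmeas n) (fun x => abs_le.mpr ⟨by linarith [hHnonneg n x], hHle n x⟩)
  have hCn_nonneg : ∀ n, 0 ≤ Cn n := fun n => integral_nonneg fun x => hHnonneg n x
  have hB : Tendsto (fun N : ℕ =>
      (1 / (N : ℝ)) * ∑ n ∈ Finset.Icc 1 N, s n N * Cn n) atTop (𝓝 0) := by
    set V : ℝ := (μ Set.univ).toReal with hVdef
    have hV0 : 0 ≤ V := ENNReal.toReal_nonneg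
    set M : ℕ → ℕ → ℝ := fun k n =>
      ∫ x, min 1 ((bb k (U n x) - bb k (W x)) ^ 2) ∂μ with hMdef
    have hmindmeas : ∀ k n, Measurable fun x => min 1 ((bb k (U n x) - bb k (W x)) ^ 2) := by
      intro k n
      refine Measurable.min measurable_const ?_
      exact ((((auxBump_cont D k).measurable).comp (hUmeas n)).sub
        (((auxBump_cont D k).measurable).comp hWmeas)).pow_const 2
    have hMint : ∀ k n, Integrable (fun x => min 1 ((bb k (U n x) - bb k (W x)) ^ 2)) μ :=
      fun k n => hbint _ 1 (hmindmeas k n) (fun x => abs_le.mpr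
        ⟨by nlinarith [le_min (zero_le_one' ℝ) (sq_nonneg (bb k (U n x) - bb k (W x)))],
          min_le_left _ _⟩)
    have hsqint : ∀ k n, Integrable (fun x => (bb k (U n x) - bb k (W x)) ^ 2) μ := by
      intro k n
      refine hbint _ 1 (((((auxBump_cont D k).measurable).comp (hUmeas n)).sub
        (((auxBump_cont D k).measurable).comp hWmeas)).pow_const 2) (fun x => ?_)
      have h1 := auxBump_nonneg D k (U n x)
      have h2 := auxBump_le_one D k (U n x)
      have h3 := auxBump_nonneg D k (W x)
      have h4 := auxBump_le_one D k (W x)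
      rw [abs_le]
      constructor <;> nlinarith
    have hM0 : ∀ k n, 0 ≤ M k n := fun k n =>
      integral_nonneg fun x => le_min zero_le_one (sq_nonneg _)
    have hMc : ∀ k n, M k n ≤ c k n := fun k n =>
      integral_mono (hMint k n) (hsqint k n) (fun x => min_le_right _ _)
    have hMV : ∀ k n, M k n ≤ V := by
      intro k n
      calc M k n ≤ ∫ _x, (1 : ℝ) ∂μ :=
            integral_mono (hMint k n) (integrable_const 1) (fun x => min_le_left _ _)
        _ = V := by rw [integral_const, smul_eq_mul, mul_one]; exact rfl
    have hCnM : ∀ n, Cn n = ∑ k ∈ Finset.range (n + 1), (1 / 2 : ℝ) ^ (k + 1) * M k n := by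
      intro n
      rw [hCndef]
      simp only
      rw [hHfdef]
      simp only
      rw [integral_finset_sum _ (fun k _ => (hMint k n).const_mul _)]
      exact Finset.sum_congr rfl fun k _ => integral_const_mul _ _
    set G : ℕ → ℕ → ℝ := fun k N =>
      (1 / (N : ℝ)) * ∑ n ∈ Finset.Icc 1 N, s n N * M k n with hGdef
    have hG0 : ∀ k N, 0 ≤ G k N := fun k N =>
      mul_nonneg (by positivity)
        (Finset.sum_nonneg fun n _ => mul_nonneg (hs0 n N) (hM0 k n))
    have hGtend : ∀ k, Tendsto (fun N => G k N) atTop (𝓝 0) := by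
      intro k
      refine squeeze_zero (fun N => hG0 k N) (fun N => ?_) (hA k)
      refine mul_le_mul_of_nonneg_left ?_ (by positivity)
      exact Finset.sum_le_sum fun n _ => mul_le_mul_of_nonneg_left (hMc k n) (hs0 n N)
    have hGV : ∀ k N, 1 ≤ N → G k N ≤ V := by
      intro k N hN
      have hNpos : (0 : ℝ) < (N : ℝ) := by exact_mod_cast hN
      have h1 : ∑ n ∈ Finset.Icc 1 N, s n N * M k n ≤ ∑ n ∈ Finset.Icc 1 N, s n N * V :=
        Finset.sum_le_sum fun n _ => mul_le_mul_of_nonneg_left (hMV k n) (hs0 n N)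
      have h2 : ∑ n ∈ Finset.Icc 1 N, s n N * V = (N : ℝ) * V := by
        rw [← Finset.sum_mul, hs_sum]
      calc G k N ≤ (1 / (N : ℝ)) * ((N : ℝ) * V) := by
            rw [hGdef]
            exact mul_le_mul_of_nonneg_left (h1.trans h2.le) (by positivity)
        _ = V := by field_simp
    have hmain : ∀ N : ℕ, 1 ≤ N → (1 / (N : ℝ)) * ∑ n ∈ Finset.Icc 1 N, s n N * Cn n
        ≤ ∑ k ∈ Finset.range (N + 1), (1 / 2 : ℝ) ^ (k + 1) * G k N := by
      intro N hN
      have h1 : ∀ n ∈ Finset.Icc 1 N, s n N * Cn n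
          ≤ s n N * ∑ k ∈ Finset.range (N + 1), (1 / 2 : ℝ) ^ (k + 1) * M k n := by
        intro n hn
        refine mul_le_mul_of_nonneg_left ?_ (hs0 n N)
        rw [hCnM n]
        refine Finset.sum_le_sum_of_subset_of_nonneg (Finset.range_subset_range.mpr ?_)
          (fun k _ _ => mul_nonneg (by positivity) (hM0 k n))
        have := (Finset.mem_Icc.mp hn).2
        omega
      have h2 : ∑ n ∈ Finset.Icc 1 N, s n N
            * ∑ k ∈ Finset.range (N + 1), (1 / 2 : ℝ) ^ (k + 1) * M k n
          = ∑ k ∈ Finset.range (N + 1), (1 / 2 : ℝ) ^ (k + 1)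
            * ∑ n ∈ Finset.Icc 1 N, s n N * M k n := by
        simp_rw [Finset.mul_sum]
        rw [Finset.sum_comm]
        exact Finset.sum_congr rfl fun k _ => Finset.sum_congr rfl fun n _ => by ring
      calc (1 / (N : ℝ)) * ∑ n ∈ Finset.Icc 1 N, s n N * Cn n
          ≤ (1 / (N : ℝ)) * ∑ n ∈ Finset.Icc 1 N, s n N
              * ∑ k ∈ Finset.range (N + 1), (1 / 2 : ℝ) ^ (k + 1) * M k n :=
            mul_le_mul_of_nonneg_left (Finset.sum_le_sum h1) (by positivity)
        _ = ∑ k ∈ Finset.range (N + 1), (1 / 2 : ℝ) ^ (k + 1) * G k N := by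
            rw [h2, Finset.mul_sum]
            exact Finset.sum_congr rfl fun k _ => by rw [hGdef]; ring
    have hBnonneg : ∀ N : ℕ, 0 ≤ (1 / (N : ℝ)) * ∑ n ∈ Finset.Icc 1 N, s n N * Cn n :=
      fun N => mul_nonneg (by positivity)
        (Finset.sum_nonneg fun n _ => mul_nonneg (hs0 n N) (hCn_nonneg n))
    rw [Metric.tendsto_atTop]
    intro ε hε
    obtain ⟨K, hK⟩ : ∃ K : ℕ, (1 / 2 : ℝ) ^ K * (V + 1) < ε / 2 := by
      obtain ⟨K, hK⟩ := exists_pow_lt_of_lt_one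
        (show (0 : ℝ) < ε / (2 * (V + 1)) by positivity) (by norm_num : (1 / 2 : ℝ) < 1)
      refine ⟨K, ?_⟩
      have h3 := mul_lt_mul_of_pos_right hK (show (0 : ℝ) < V + 1 by linarith)
      calc (1 / 2 : ℝ) ^ K * (V + 1) < ε / (2 * (V + 1)) * (V + 1) := h3
        _ = ε / 2 := by field_simp
    have hfin : Tendsto (fun N => ∑ k ∈ Finset.range K, (1 / 2 : ℝ) ^ (k + 1) * G k N)
        atTop (𝓝 0) := by
      have h4 := tendsto_finset_sum (Finset.range K)
        (fun k (_ : k ∈ Finset.range K) => (hGtend k).const_mul ((1 / 2 : ℝ) ^ (k + 1)))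
      simpa using h4
    obtain ⟨N₁, hN₁⟩ := (Metric.tendsto_atTop.mp hfin) (ε / 2) (by linarith)
    refine ⟨max (max 1 K) N₁, fun N hNN => ?_⟩
    have hN1 : 1 ≤ N := le_trans (le_trans (le_max_left 1 K) (le_max_left _ N₁)) hNN
    have hNK : K ≤ N := le_trans (le_trans (le_max_right 1 K) (le_max_left _ N₁)) hNN
    have hNN₁ : N₁ ≤ N := le_trans (le_max_right _ N₁) hNN
    -- split the sum over range (N+1)
    have hsubset : Finset.range K ⊆ Finset.range (N + 1) := Finset.range_subset_range.mpr (by omega)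
    have hsplit : ∑ k ∈ Finset.range (N + 1), (1 / 2 : ℝ) ^ (k + 1) * G k N
        = (∑ k ∈ Finset.range (N + 1) \ Finset.range K, (1 / 2 : ℝ) ^ (k + 1) * G k N)
          + ∑ k ∈ Finset.range K, (1 / 2 : ℝ) ^ (k + 1) * G k N :=
      (Finset.sum_sdiff hsubset).symm
    have htail : ∑ k ∈ Finset.range (N + 1) \ Finset.range K, (1 / 2 : ℝ) ^ (k + 1) * G k N
        ≤ (1 / 2 : ℝ) ^ K * (V + 1) := by
      have h5 : ∀ k ∈ Finset.range (N + 1) \ Finset.range K,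
          (1 / 2 : ℝ) ^ (k + 1) * G k N ≤ (1 / 2 : ℝ) ^ (k + 1) * V :=
        fun k _ => mul_le_mul_of_nonneg_left (hGV k N hN1) (by positivity)
      calc ∑ k ∈ Finset.range (N + 1) \ Finset.range K, (1 / 2 : ℝ) ^ (k + 1) * G k N
          ≤ ∑ k ∈ Finset.range (N + 1) \ Finset.range K, (1 / 2 : ℝ) ^ (k + 1) * V :=
            Finset.sum_le_sum h5
        _ = ((∑ k ∈ Finset.range (N + 1), (1 / 2 : ℝ) ^ (k + 1))
            - ∑ k ∈ Finset.range K, (1 / 2 : ℝ) ^ (k + 1)) * V := by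
            rw [← Finset.sum_mul, Finset.sum_sdiff_eq_sub hsubset]
        _ = ((1 - (1 / 2 : ℝ) ^ (N + 1)) - (1 - (1 / 2 : ℝ) ^ K)) * V := by
            rw [aux_geom, aux_geom]
        _ ≤ (1 / 2 : ℝ) ^ K * V := by
            have h6 : (0 : ℝ) ≤ (1 / 2 : ℝ) ^ (N + 1) := by positivity
            nlinarith
        _ ≤ (1 / 2 : ℝ) ^ K * (V + 1) := by
            have h7 : (0 : ℝ) ≤ (1 / 2 : ℝ) ^ K := by positivity
            nlinarith
    have hhead : ∑ k ∈ Finset.range K, (1 / 2 : ℝ) ^ (k + 1) * G k N < ε / 2 := by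
      have h8 := hN₁ N hNN₁
      rw [Real.dist_0_eq_abs] at h8
      calc ∑ k ∈ Finset.range K, (1 / 2 : ℝ) ^ (k + 1) * G k N
          ≤ |∑ k ∈ Finset.range K, (1 / 2 : ℝ) ^ (k + 1) * G k N| := le_abs_self _
        _ < ε / 2 := h8
    rw [Real.dist_0_eq_abs, abs_of_nonneg (hBnonneg N)]
    calc (1 / (N : ℝ)) * ∑ n ∈ Finset.Icc 1 N, s n N * Cn n
        ≤ ∑ k ∈ Finset.range (N + 1), (1 / 2 : ℝ) ^ (k + 1) * G k N := hmain N hN1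
      _ < ε := by rw [hsplit]; linarith
  have hBext : ∀ (l m : ℕ), ∃ n, m ≤ n ∧ Cn n ≤ (1 / 2 : ℝ) ^ l := by
    intro l m
    by_contra hcon
    push_neg at hcon
    set ε : ℝ := (1 / 2 : ℝ) ^ l with hεdef
    have hεpos : 0 < ε := by positivity
    set m' := max m 1 with hm'def
    have hm'1 : 1 ≤ m' := le_max_right _ _
    have hm'm : m ≤ m' := le_max_left _ _
    have hev : ∀ᶠ N : ℕ in atTop,
        (1 / (N : ℝ)) * ∑ n ∈ Finset.Icc 1 N, s n N * Cn n < ε / 2 := by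
      obtain ⟨N₀, hN₀⟩ := (Metric.tendsto_atTop.mp hB) (ε / 2) (by linarith)
      refine eventually_atTop.mpr ⟨N₀, fun N hN => ?_⟩
      have h9 := hN₀ N hN
      rw [Real.dist_0_eq_abs] at h9
      exact (le_abs_self _).trans_lt h9
    have hev2 : ∀ᶠ N : ℕ in atTop, m' ≤ N := eventually_ge_atTop m'
    have hev3 : ∀ᶠ N : ℕ in atTop, 2 * (m' : ℝ) * sbar < (N : ℝ) := by
      obtain ⟨N₂, hN₂⟩ := exists_nat_gt (2 * (m' : ℝ) * sbar)
      refine eventually_atTop.mpr ⟨N₂, fun N hN => lt_of_lt_of_le hN₂ ?_⟩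
      exact_mod_cast hN
    obtain ⟨N, h1, h2, h3⟩ := (hev.and (hev2.and hev3)).exists
    have hN1 : 1 ≤ N := le_trans hm'1 h2
    have hNpos : (0 : ℝ) < (N : ℝ) := by exact_mod_cast hN1
    have hIccsplit : Finset.Icc 1 N = Finset.Icc 1 (m' - 1) ∪ Finset.Icc m' N := by
      ext n
      simp only [Finset.mem_Icc, Finset.mem_union]
      omega
    have hdisj : Disjoint (Finset.Icc 1 (m' - 1)) (Finset.Icc m' N) := by
      rw [Finset.disjoint_left]
      intro a ha ha2
      simp only [Finset.mem_Icc] at ha ha2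
      omega
    have hsum_split : ∑ n ∈ Finset.Icc 1 N, s n N * Cn n
        = (∑ n ∈ Finset.Icc 1 (m' - 1), s n N * Cn n)
          + ∑ n ∈ Finset.Icc m' N, s n N * Cn n := by
      rw [hIccsplit, Finset.sum_union hdisj]
    have hssplit : ∑ n ∈ Finset.Icc m' N, s n N
        = (N : ℝ) - ∑ n ∈ Finset.Icc 1 (m' - 1), s n N := by
      have h10 := hs_sum N
      rw [hIccsplit, Finset.sum_union hdisj] at h10
      linarith
    have hsmall : ∑ n ∈ Finset.Icc 1 (m' - 1), s n N ≤ (m' : ℝ) * sbar := by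
      calc ∑ n ∈ Finset.Icc 1 (m' - 1), s n N ≤ ∑ _n ∈ Finset.Icc 1 (m' - 1), sbar :=
            Finset.sum_le_sum fun n _ => hssbar n N
        _ = ((m' - 1 : ℕ) : ℝ) * sbar := by
            rw [Finset.sum_const, Nat.card_Icc, nsmul_eq_mul]
            norm_num
        _ ≤ (m' : ℝ) * sbar := by
            refine mul_le_mul_of_nonneg_right ?_ hsbar0
            exact_mod_cast Nat.sub_le m' 1
    have hc1 : (N : ℝ) - (m' : ℝ) * sbar ≤ ∑ n ∈ Finset.Icc m' N, s n N := by
      rw [hssplit]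
      linarith
    have hb1 : (∑ n ∈ Finset.Icc m' N, s n N) * ε ≤ ∑ n ∈ Finset.Icc m' N, s n N * Cn n := by
      rw [Finset.sum_mul]
      refine Finset.sum_le_sum fun n hn => ?_
      exact mul_le_mul_of_nonneg_left
        (le_of_lt (hcon n (le_trans hm'm (Finset.mem_Icc.mp hn).1))) (hs0 n N)
    have hb3 : 0 ≤ ∑ n ∈ Finset.Icc 1 (m' - 1), s n N * Cn n :=
      Finset.sum_nonneg fun n _ => mul_nonneg (hs0 n N) (hCn_nonneg n)
    have hge : (1 / (N : ℝ)) * (((N : ℝ) - (m' : ℝ) * sbar) * ε)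
        ≤ (1 / (N : ℝ)) * ∑ n ∈ Finset.Icc 1 N, s n N * Cn n := by
      refine mul_le_mul_of_nonneg_left ?_ (by positivity)
      rw [hsum_split]
      have h11 : ((N : ℝ) - (m' : ℝ) * sbar) * ε ≤ (∑ n ∈ Finset.Icc m' N, s n N) * ε :=
        mul_le_mul_of_nonneg_right hc1 hεpos.le
      linarith
    have hfinal : ε / 2 < (1 / (N : ℝ)) * (((N : ℝ) - (m' : ℝ) * sbar) * ε) := by
      rw [one_div, inv_mul_eq_div, lt_div_iff₀ hNpos]
      nlinarith
    linarith
  obtain ⟨φ, hφmono, hφ⟩ := aux_exists_strictMono hBext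
  -- Step C: almost everywhere convergence along the subsequence
  have haecv : ∀ᵐ x ∂μ, Tendsto (fun j => U (φ j) x) atTop (𝓝 (W x)) := by
    have hgeom_ne_top : (∑' j : ℕ, ENNReal.ofReal ((1 / 2 : ℝ) ^ j)) ≠ ∞ := by
      have heq : ∀ j : ℕ, ENNReal.ofReal ((1 / 2 : ℝ) ^ j) = ENNReal.ofReal (1 / 2) ^ j :=
        fun j => ENNReal.ofReal_pow (by norm_num) j
      rw [tsum_congr heq, ENNReal.tsum_geometric]
      refine ENNReal.inv_ne_top.mpr (fun hcon => ?_)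
      have hcon2 := tsub_eq_zero_iff_le.mp hcon
      have h12 : ENNReal.ofReal (1 / 2 : ℝ) < 1 := by
        rw [show (1 : ℝ≥0∞) = ENNReal.ofReal 1 by simp]
        exact (ENNReal.ofReal_lt_ofReal_iff one_pos).mpr (by norm_num)
      exact absurd hcon2 (not_le.mpr h12)
    have h1 : ∀ᵐ x ∂μ, Tendsto (fun j => ENNReal.ofReal (Hf (φ j) x)) atTop (𝓝 0) := by
      refine aux_ae_tendsto_zero_of_tsum
        (fun j => ((hHmeas (φ j)).ennreal_ofReal).aemeasurable) ?_
      refine ne_top_of_le_ne_top hgeom_ne_top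
        (ENNReal.tsum_le_tsum (fun j => ?_))
      rw [← ofReal_integral_eq_lintegral_ofReal (hHint (φ j))
        (Eventually.of_forall fun x => hHnonneg _ x)]
      exact ENNReal.ofReal_le_ofReal (hφ j)
    filter_upwards [h1] with x hx
    have hH0 : Tendsto (fun j => Hf (φ j) x) atTop (𝓝 0) := by
      have hcont := (ENNReal.tendsto_toReal (by simp : (0 : ℝ≥0∞) ≠ ⊤)).comp hx
      have heq2 : (fun j => (ENNReal.ofReal (Hf (φ j) x)).toReal) = fun j => Hf (φ j) x :=
        funext fun j => ENNReal.toReal_ofReal (hHnonneg _ x)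
      simp only [Function.comp_def] at hcont
      rw [heq2] at hcont
      simpa using hcont
    have h2 : ∀ k, Tendsto (fun j => bb k (U (φ j) x)) atTop (𝓝 (bb k (W x))) := by
      intro k
      have hterm : ∀ j, k ≤ j →
          min 1 ((bb k (U (φ j) x) - bb k (W x)) ^ 2) ≤ (2 : ℝ) ^ (k + 1) * Hf (φ j) x := by
        intro j hkj
        have hmem : k ∈ Finset.range (φ j + 1) :=
          Finset.mem_range.mpr (Nat.lt_succ_of_le (hkj.trans hφmono.le_apply))
        have hle : (1 / 2 : ℝ) ^ (k + 1) * min 1 ((bb k (U (φ j) x) - bb k (W x)) ^ 2)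
            ≤ Hf (φ j) x :=
          Finset.single_le_sum (f := fun kk =>
              (1 / 2 : ℝ) ^ (kk + 1) * min 1 ((bb kk (U (φ j) x) - bb kk (W x)) ^ 2))
            (fun kk _ => mul_nonneg (by positivity) (le_min zero_le_one (sq_nonneg _))) hmem
        have hpow : (2 : ℝ) ^ (k + 1) * (1 / 2 : ℝ) ^ (k + 1) = 1 := by
          rw [← mul_pow]; norm_num
        calc min 1 ((bb k (U (φ j) x) - bb k (W x)) ^ 2)
            = (2 : ℝ) ^ (k + 1) * ((1 / 2 : ℝ) ^ (k + 1)
              * min 1 ((bb k (U (φ j) x) - bb k (W x)) ^ 2)) := by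
              rw [← mul_assoc, hpow, one_mul]
          _ ≤ (2 : ℝ) ^ (k + 1) * Hf (φ j) x :=
              mul_le_mul_of_nonneg_left hle (by positivity)
      have hmin0 : Tendsto (fun j => min 1 ((bb k (U (φ j) x) - bb k (W x)) ^ 2))
          atTop (𝓝 0) := by
        have hup : Tendsto (fun j => (2 : ℝ) ^ (k + 1) * Hf (φ j) x) atTop (𝓝 0) := by
          have := hH0.const_mul ((2 : ℝ) ^ (k + 1))
          simpa using this
        refine tendsto_of_tendsto_of_tendsto_of_le_of_le' tendsto_const_nhds hup ?_ ?_
        · exact Eventually.of_forall fun j => le_min zero_le_one (sq_nonneg _)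
        · exact eventually_atTop.mpr ⟨k, hterm⟩
      rw [Metric.tendsto_atTop]
      intro εk hεk
      set εm := min εk 1 with hεmdef
      have hεm : 0 < εm := lt_min hεk one_pos
      obtain ⟨N, hN⟩ := (Metric.tendsto_atTop.mp hmin0) (εm ^ 2) (by positivity)
      refine ⟨N, fun j hj => ?_⟩
      have h5 := hN j hj
      rw [Real.dist_0_eq_abs,
        abs_of_nonneg (le_min zero_le_one (sq_nonneg _))] at h5
      have hd2 : (bb k (U (φ j) x) - bb k (W x)) ^ 2 < εm ^ 2 := by
        rcases le_or_gt 1 ((bb k (U (φ j) x) - bb k (W x)) ^ 2) with hc | hc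
        · exfalso
          rw [min_eq_left hc] at h5
          have hεm1 : εm ≤ 1 := min_le_right _ _
          nlinarith
        · rwa [min_eq_right hc.le] at h5
      rw [Real.dist_eq]
      have habs : |bb k (U (φ j) x) - bb k (W x)| < εm := by
        nlinarith [abs_nonneg (bb k (U (φ j) x) - bb k (W x)),
          sq_abs (bb k (U (φ j) x) - bb k (W x))]
      exact habs.trans_le (min_le_left _ _)
    exact auxBump_tendsto h2
  -- Step D: uniform integrability via the Vitali-Hahn-Saks argument
  have hUI : ∀ ε : ℝ, 0 < ε → ∃ δ : ℝ, 0 < δ ∧ ∀ (n : ℕ) (A : Set (EuclideanSpace ℝ (Fin D))),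
      MeasurableSet A → μ A ≤ ENNReal.ofReal δ → ∫ x in A, ‖U n x - W x‖ ∂μ ≤ ε := by
    intro ε hε
    by_cases hD : D = 0
    · refine ⟨1, one_pos, fun n A hA hAμ => ?_⟩
      have hzero : ∀ x, ‖U n x - W x‖ = 0 := by
        intro x
        have h0 : U n x - W x = 0 := by
          subst hD
          ext i; exact i.elim0
        rw [h0, norm_zero]
      simp only [hzero, integral_zero]
      exact hε.le
    · have hD1 : 0 < D := Nat.pos_of_ne_zero hD
      set εi := ε / (2 * D) with hεidef
      have hεi : 0 < εi := by positivity
      set fc : Fin D → ℕ → EuclideanSpace ℝ (Fin D) → ℝ :=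
        fun i n x => U n x i - W x i with hfcdef
      have hfcmeas : ∀ i n, Measurable (fc i n) := by
        intro i n
        have h1 : Measurable fun x => U n x i :=
          (EuclideanSpace.proj i).continuous.measurable.comp (hUmeas n)
        have h2 : Measurable fun x => W x i :=
          (EuclideanSpace.proj i).continuous.measurable.comp hWmeas
        exact h1.sub h2
      have hfccoord : ∀ i n x, fc i n x = (U n x - W x) i := fun i n x => rfl
      have hfcint : ∀ i n, Integrable (fc i n) μ := by
        intro i n
        refine Integrable.mono ((hUint n).sub hWint) (hfcmeas i n).aestronglyMeasurable
          (Eventually.of_forall fun x => ?_)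
        rw [Real.norm_eq_abs, hfccoord]
        exact aux_coord_le (U n x - W x) i
      have hsetconv : ∀ (i : Fin D) (A : Set (EuclideanSpace ℝ (Fin D))), MeasurableSet A →
          Tendsto (fun n => ∫ x in A, fc i n x ∂μ) atTop (𝓝 0) := by
        intro i A hA
        set g : EuclideanSpace ℝ (Fin D) → EuclideanSpace ℝ (Fin D) :=
          A.indicator (fun _ => EuclideanSpace.single i (1 : ℝ)) with hgdef
        have hgmeas : Measurable g := measurable_const.indicator hA
        have hgbd : ∃ Cg : ℝ, ∀ᵐ x ∂μ, ‖g x‖ ≤ Cg := by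
          refine ⟨1, Eventually.of_forall fun x => ?_⟩
          by_cases hx : x ∈ A
          · rw [hgdef]
            rw [Set.indicator_of_mem hx, EuclideanSpace.norm_single, norm_one]
          · rw [hgdef]
            rw [Set.indicator_of_notMem hx, norm_zero]
            exact zero_le_one
        have hin : ∀ V : EuclideanSpace ℝ (Fin D) → EuclideanSpace ℝ (Fin D),
            (∫ x, ⟪V x, g x⟫ ∂μ) = ∫ x in A, V x i ∂μ := by
          intro V
          have heq : (fun x => (⟪V x, g x⟫ : ℝ)) = fun x => A.indicator (fun y => V y i) x := by
            funext x
            by_cases hx : x ∈ A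
            · rw [hgdef]
              rw [Set.indicator_of_mem hx, Set.indicator_of_mem hx,
                EuclideanSpace.inner_single_right]
              simp
            · rw [hgdef]
              rw [Set.indicator_of_notMem hx, Set.indicator_of_notMem hx, inner_zero_right]
          rw [heq, integral_indicator hA]
        have h1 := hweak g hgmeas hgbd
        rw [hin Ulim] at h1
        have h2 : ∀ n, (∫ x, ⟪U n x, g x⟫ ∂μ) = ∫ x in A, U n x i ∂μ := fun n => hin (U n)
        simp_rw [h2] at h1
        have h3 : (∫ x in A, Ulim x i ∂μ) = ∫ x in A, W x i ∂μ := by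
          refine setIntegral_congr_ae hA ?_
          filter_upwards [hWae] with x hx _
          rw [hx]
        rw [h3] at h1
        have h4 : ∀ n, (∫ x in A, fc i n x ∂μ)
            = (∫ x in A, U n x i ∂μ) - ∫ x in A, W x i ∂μ := by
          intro n
          rw [hfcdef]
          simp only
          refine integral_sub ?_ ?_
          · refine Integrable.integrableOn ?_
            refine Integrable.mono (hUint n)
              ((EuclideanSpace.proj i).continuous.measurable.comp (hUmeas n)).aestronglyMeasurable
              (Eventually.of_forall fun x => ?_)
            rw [Real.norm_eq_abs]
            exact aux_coord_le (U n x) i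
          · refine Integrable.integrableOn ?_
            refine Integrable.mono hWint
              ((EuclideanSpace.proj i).continuous.measurable.comp hWmeas).aestronglyMeasurable
              (Eventually.of_forall fun x => ?_)
            rw [Real.norm_eq_abs]
            exact aux_coord_le (W x) i
        simp_rw [h4]
        have h5 := h1.sub_const (∫ x in A, W x i ∂μ)
        rwa [sub_self] at h5
      have hvhs : ∀ i : Fin D, ∃ δ : ℝ, 0 < δ ∧ ∀ (n : ℕ) (A : Set (EuclideanSpace ℝ (Fin D))),
          MeasurableSet A → μ A ≤ ENNReal.ofReal δ → |∫ x in A, fc i n x ∂μ| ≤ εi :=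
        fun i => aux_vhs (fun n => hfcint i n) (hsetconv i) hεi
      choose δs hδs hδs' using hvhs
      haveI hne : Nonempty (Fin D) := Fin.pos_iff_nonempty.mp hD1
      refine ⟨Finset.univ.inf' Finset.univ_nonempty δs, ?_, fun n A hA hAμ => ?_⟩
      · rw [Finset.lt_inf'_iff]
        exact fun i _ => hδs i
      have hAi : ∀ i, μ A ≤ ENNReal.ofReal (δs i) := fun i =>
        hAμ.trans (ENNReal.ofReal_le_ofReal (Finset.inf'_le _ (Finset.mem_univ i)))
      have hcoordabs : ∀ i : Fin D, (∫ x in A, |fc i n x| ∂μ) ≤ 2 * εi := by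
        intro i
        set P := A ∩ {x | 0 ≤ fc i n x} with hPdef
        set Ng := A \ {x | 0 ≤ fc i n x} with hNgdef
        have hsm : MeasurableSet {x | 0 ≤ fc i n x} :=
          measurableSet_le measurable_const (hfcmeas i n)
        have hP : MeasurableSet P := hA.inter hsm
        have hNg : MeasurableSet Ng := hA.diff hsm
        have hPμ : μ P ≤ ENNReal.ofReal (δs i) :=
          le_trans (measure_mono Set.inter_subset_left) (hAi i)
        have hNgμ : μ Ng ≤ ENNReal.ofReal (δs i) :=
          le_trans (measure_mono Set.diff_subset) (hAi i)
        have hdisj : Disjoint Ng P :=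
          Set.disjoint_left.mpr (fun x hx hx2 => hx.2 hx2.2)
        have hunion : Ng ∪ P = A := by
          rw [hPdef, hNgdef, Set.union_comm, Set.inter_union_diff]
        have habsint : IntegrableOn (fun x => |fc i n x|) A μ := (hfcint i n).abs.integrableOn
        have hsplit : (∫ x in A, |fc i n x| ∂μ)
            = (∫ x in Ng, |fc i n x| ∂μ) + ∫ x in P, |fc i n x| ∂μ := by
          rw [← setIntegral_union hdisj hP ((hfcint i n).abs.integrableOn)
            ((hfcint i n).abs.integrableOn), hunion]
        have h1 : (∫ x in P, |fc i n x| ∂μ) = ∫ x in P, fc i n x ∂μ := by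
          refine setIntegral_congr_fun hP fun x hx => ?_
          exact abs_of_nonneg hx.2
        have h2 : (∫ x in Ng, |fc i n x| ∂μ) = - ∫ x in Ng, fc i n x ∂μ := by
          rw [← integral_neg]
          refine setIntegral_congr_fun hNg fun x hx => ?_
          exact abs_of_neg (not_le.mp hx.2)
        have e1 : |∫ x in P, fc i n x ∂μ| ≤ εi := hδs' i n P hP hPμ
        have e2 : |∫ x in Ng, fc i n x ∂μ| ≤ εi := hδs' i n Ng hNg hNgμ
        have l1 := abs_le.mp e1
        have l2 := abs_le.mp e2
        rw [hsplit, h1, h2]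
        linarith
      have hnorm : ∀ x, ‖U n x - W x‖ ≤ ∑ i : Fin D, |fc i n x| := by
        intro x
        have := aux_norm_le_sum (U n x - W x)
        simpa [hfccoord] using this
      have hsum_int : Integrable (fun x => ∑ i : Fin D, |fc i n x|) (μ.restrict A) := by
        refine integrable_finset_sum _ fun i _ => ?_
        exact (hfcint i n).abs.integrableOn
      calc ∫ x in A, ‖U n x - W x‖ ∂μ ≤ ∫ x in A, ∑ i : Fin D, |fc i n x| ∂μ := by
            refine integral_mono_ae (((hUint n).sub hWint).norm.integrableOn) hsum_int
              (Eventually.of_forall fun x => hnorm x)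
        _ = ∑ i : Fin D, ∫ x in A, |fc i n x| ∂μ :=
            integral_finset_sum _ fun i _ => (hfcint i n).abs.integrableOn
        _ ≤ ∑ _i : Fin D, 2 * εi := Finset.sum_le_sum fun i _ => hcoordabs i
        _ = (D : ℝ) * (2 * εi) := by
            rw [Finset.sum_const, Finset.card_univ, Fintype.card_fin, nsmul_eq_mul]
        _ = ε := by
            have hDne : (D : ℝ) ≠ 0 := Nat.cast_ne_zero.mpr hD
            rw [hεidef]
            field_simp
  -- conclusion: Vitali convergence theorem
  refine ⟨φ, hφmono, ?_⟩
  have hrw : (fun j => ∫ x in Q, ‖U (φ j) x - Ulim x‖) =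
      fun j => ∫ x, ‖U (φ j) x - W x‖ ∂μ := by
    funext j
    refine integral_congr_ae ?_
    filter_upwards [hWae] with x hx
    rw [hx]
  rw [hrw]
  have hmeasconv : TendstoInMeasure μ (fun j => U (φ j)) atTop W :=
    tendstoInMeasure_of_tendsto_ae (fun j => (hUmeas (φ j)).aestronglyMeasurable) haecv
  rw [Metric.tendsto_atTop]
  intro ε hε
  obtain ⟨δ, hδ, hδ'⟩ := hUI (ε / 4) (by linarith)
  set V := (μ Set.univ).toReal with hVdef
  have hV0 : 0 ≤ V := ENNReal.toReal_nonneg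
  set η := (ε / 4) / (V + 1) with hηdef
  have hηpos : 0 < η := by positivity
  have hev1 : ∀ᶠ j in atTop,
      μ {x | η ≤ dist (U (φ j) x) (W x)} < ENNReal.ofReal δ :=
    (tendstoInMeasure_iff_dist.mp hmeasconv η hηpos).eventually_lt_const (ENNReal.ofReal_pos.mpr hδ)
  obtain ⟨N, hN⟩ := eventually_atTop.mp hev1
  refine ⟨N, fun j hj => ?_⟩
  set Aj := {x | η ≤ dist (U (φ j) x) (W x)} with hAjdef
  have hAjmeas : MeasurableSet Aj :=
    measurableSet_le measurable_const ((hUmeas (φ j)).dist hWmeas)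
  have hAjμ : μ Aj ≤ ENNReal.ofReal δ := (hN j hj).le
  have hIntj : Integrable (fun x => ‖U (φ j) x - W x‖) μ := ((hUint (φ j)).sub hWint).norm
  have hsplit : ∫ x, ‖U (φ j) x - W x‖ ∂μ
      = (∫ x in Aj, ‖U (φ j) x - W x‖ ∂μ) + ∫ x in Ajᶜ, ‖U (φ j) x - W x‖ ∂μ :=
    (integral_add_compl hAjmeas hIntj).symm
  have h1 : ∫ x in Aj, ‖U (φ j) x - W x‖ ∂μ ≤ ε / 4 := hδ' (φ j) Aj hAjmeas hAjμ
  have h2 : ∫ x in Ajᶜ, ‖U (φ j) x - W x‖ ∂μ ≤ η * V := by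
    have hb : ∀ x ∈ Ajᶜ, ‖U (φ j) x - W x‖ ≤ η := by
      intro x hx
      have hlt : dist (U (φ j) x) (W x) < η := not_le.mp hx
      rw [dist_eq_norm] at hlt
      exact hlt.le
    calc ∫ x in Ajᶜ, ‖U (φ j) x - W x‖ ∂μ ≤ ∫ _x in Ajᶜ, η ∂μ :=
          setIntegral_mono_on hIntj.integrableOn
            (integrableOn_const (measure_lt_top _ _).ne) hAjmeas.compl hb
      _ = (μ Ajᶜ).toReal * η := by rw [setIntegral_const]; rw [smul_eq_mul]; rfl
      _ ≤ V * η := by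
          refine mul_le_mul_of_nonneg_right ?_ hηpos.le
          rw [hVdef]
          exact ENNReal.toReal_mono (measure_ne_top _ _) (measure_mono (Set.subset_univ _))
      _ = η * V := mul_comm _ _
  have hηV : η * V ≤ ε / 4 := by
    rw [hηdef, div_mul_eq_mul_div, div_le_iff₀ (by positivity : (0:ℝ) < V + 1)]
    nlinarith
  have hnn : 0 ≤ ∫ x, ‖U (φ j) x - W x‖ ∂μ := integral_nonneg fun x => norm_nonneg _
  rw [Real.dist_0_eq_abs, abs_of_nonneg hnn, hsplit]
  linarith
end

section
/- Let Q ⊂ ℝ^D be a bounded domain, {s_{n,N}} a regular summation method with bound s̄, and V_n, V ∈ L^∞(Q) with max{ sup_n ‖V_n‖_{L^∞(Q)}, ‖V‖_{L^∞(Q)} } ≤ M. For ε > 0 and N ∈ ℕ set K_N(ε) = { (n,m) : n, m ≤ N, s_{n,N} s_{m,N} |∫_Q (V_n − V)(V_m − V) dx| ≥ ε }. Then for every N and every ε > 0: ∫_Q | (1/N) Σ_{n=1}^N s_{n,N} (V_n − V) |² dx ≤ 4 s̄² |Q| M² · (#K_N(ε))/N² + ε, where |Q| denotes the Lebesgue measure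 of Q. -/
open MeasureTheory Filter Finset
open scoped ENNReal

/-- The key estimate in the proof of Lemma 3.2 of the paper:
`∫_Q |(1/N) ∑_{n=1}^N s_{n,N} (V_n − V)|² dx ≤ 4 s̄² |Q| M² #K_N(ε)/N² + ε`,
where `K_N(ε)` is the set of pairs `(n,m)`, `n,m ≤ N`, with
`s_{n,N} s_{m,N} |∫_Q (V_n − V)(V_m − V) dx| ≥ ε`. -/
theorem weighted_average_square_integral_estimate
    {D : ℕ} (Q : Set (EuclideanSpace ℝ (Fin D)))
    (hQopen : IsOpen Q) (hQbdd : Bornology.IsBounded Q)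
    (V : ℕ → EuclideanSpace ℝ (Fin D) → ℝ) (Vlim : EuclideanSpace ℝ (Fin D) → ℝ)
    (hVmeas : ∀ n, Measurable (V n)) (hVlimmeas : Measurable Vlim)
    (M : ℝ)
    (hVbound : ∀ n, ∀ᵐ x ∂(volume.restrict Q), |V n x| ≤ M)
    (hVlimbound : ∀ᵐ x ∂(volume.restrict Q), |Vlim x| ≤ M)
    (s : ℕ → ℕ → ℝ) (sbar : ℝ) (hreg : IsRegularSummation s sbar)
    (N : ℕ) (ε : ℝ) (hε : 0 < ε) :
    ∫ x in Q, ((1 / (N : ℝ)) * ∑ n ∈ Finset.Icc 1 N, s n N * (V n x - Vlim x)) ^ 2 ≤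
      4 * sbar ^ 2 * (volume Q).toReal * M ^ 2 *
        (({p : ℕ × ℕ | 1 ≤ p.1 ∧ p.1 ≤ N ∧ 1 ≤ p.2 ∧ p.2 ≤ N ∧
            ε ≤ s p.1 N * s p.2 N *
              |∫ x in Q, (V p.1 x - Vlim x) * (V p.2 x - Vlim x)|}).ncard : ℝ) / (N : ℝ) ^ 2
      + ε := by
  classical
  obtain ⟨hs0, hsbar, hszero, hsum⟩ := hreg
  have hsb : 0 ≤ sbar := (hs0 0 0).trans (hsbar 0 0)
  set f : ℕ → EuclideanSpace ℝ (Fin D) → ℝ := fun n x => V n x - Vlim x with hfdef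
  have hfapp : ∀ n x, V n x - Vlim x = f n x := fun _ _ => rfl
  simp only [hfapp]
  -- trivial case N = 0
  rcases Nat.eq_zero_or_pos N with hN | hN
  · subst hN
    simp only [Nat.cast_zero, Finset.Icc_eq_empty (by norm_num : ¬(1:ℕ) ≤ 0),
      Finset.sum_empty, mul_zero, ne_eq, OfNat.ofNat_ne_zero, not_false_eq_true,
      zero_pow, integral_zero, zero_pow, div_zero, mul_zero, zero_add]
    positivity
  have hNpos : (0:ℝ) < (N:ℝ)^2 := by positivity
  -- finiteness of the measure
  have hQfin : volume Q < ⊤ := hQbdd.measure_lt_top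
  haveI : IsFiniteMeasure (volume.restrict Q) :=
    ⟨by simpa [Measure.restrict_apply_univ] using hQfin⟩
  -- trivial case: measure zero
  by_cases hQ0 : volume Q = 0
  · have hrestr : volume.restrict Q = 0 := Measure.restrict_eq_zero.mpr hQ0
    rw [hrestr]
    simp only [integral_zero_measure, hQ0, ENNReal.toReal_zero, mul_zero, zero_mul,
      zero_div, zero_add]
    positivity
  -- from here measure is positive
  have hMnn : 0 ≤ M := by
    have hne : volume.restrict Q ≠ 0 := fun h => hQ0 (Measure.restrict_eq_zero.mp h)
    haveI := ae_neBot.mpr hne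
    obtain ⟨x, hx⟩ := (hVbound 0).exists
    exact (abs_nonneg _).trans hx
  -- measurability and bounds
  have hfm : ∀ n, AEStronglyMeasurable (f n) (volume.restrict Q) :=
    fun n => ((hVmeas n).sub hVlimmeas).aestronglyMeasurable
  have hfb : ∀ n, ∀ᵐ x ∂(volume.restrict Q), |f n x| ≤ 2 * M := by
    intro n
    filter_upwards [hVbound n, hVlimbound] with x h1 h2
    calc |V n x - Vlim x| ≤ |V n x| + |Vlim x| := abs_sub _ _
      _ ≤ 2 * M := by linarith
  have hint : ∀ n m, Integrable (fun x => f n x * f m x) (volume.restrict Q) := by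
    intro n m
    refine Integrable.mono' (integrable_const ((2*M)*(2*M))) ((hfm n).mul (hfm m)) ?_
    filter_upwards [hfb n, hfb m] with x h1 h2
    rw [Real.norm_eq_abs, abs_mul]
    exact mul_le_mul h1 h2 (abs_nonneg _) (by linarith)
  -- bound on each integral
  have hIb : ∀ n m, |∫ x in Q, f n x * f m x| ≤ (volume Q).toReal * (4 * M^2) := by
    intro n m
    calc |∫ x in Q, f n x * f m x| ≤ ∫ x in Q, |f n x * f m x| := by
          simpa only [Real.norm_eq_abs] using
            norm_integral_le_integral_norm (μ := volume.restrict Q)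
              (fun x => f n x * f m x)
      _ ≤ ∫ x in Q, 4 * M^2 := by
          refine integral_mono_ae (hint n m).abs (integrable_const _) ?_
          filter_upwards [hfb n, hfb m] with x h1 h2
          rw [abs_mul]
          calc |f n x| * |f m x| ≤ (2*M) * (2*M) :=
                mul_le_mul h1 h2 (abs_nonneg _) (by linarith)
            _ = 4 * M^2 := by ring
      _ = (volume Q).toReal * (4 * M^2) := by
          rw [setIntegral_const, smul_eq_mul]
          rfl
  set T : Finset (ℕ × ℕ) := Finset.Icc 1 N ×ˢ Finset.Icc 1 N with hT
  set I : ℕ × ℕ → ℝ := fun p => ∫ x in Q, f p.1 x * f p.2 x with hI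
  -- expansion of the square
  have hexp : ∫ x in Q, (∑ n ∈ Finset.Icc 1 N, s n N * f n x)^2
      = ∑ p ∈ T, s p.1 N * s p.2 N * I p := by
    have h1 : ∀ x, (∑ n ∈ Finset.Icc 1 N, s n N * f n x)^2
        = ∑ p ∈ T, (s p.1 N * s p.2 N) * (f p.1 x * f p.2 x) := by
      intro x
      rw [sq, Finset.sum_mul_sum, hT, ← Finset.sum_product']
      exact Finset.sum_congr rfl fun p _ => by ring
    simp_rw [h1]
    rw [integral_finset_sum _ (fun p _ => ((hint p.1 p.2).const_mul _))]
    exact Finset.sum_congr rfl fun p _ => integral_const_mul _ _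
  -- the bad set as a finset
  set Kf : Finset (ℕ × ℕ) := T.filter (fun p => ε ≤ s p.1 N * s p.2 N * |I p|) with hKf
  have hKset : {p : ℕ × ℕ | 1 ≤ p.1 ∧ p.1 ≤ N ∧ 1 ≤ p.2 ∧ p.2 ≤ N ∧
      ε ≤ s p.1 N * s p.2 N * |∫ x in Q, f p.1 x * f p.2 x|} = ↑Kf := by
    ext p
    simp only [hKf, hT, Set.mem_setOf_eq, Finset.coe_filter, Finset.mem_product,
      Finset.mem_Icc, Set.mem_setOf_eq, hI]
    tauto
  rw [hKset, Set.ncard_coe_finset]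
  -- the main sum estimate
  set C : ℝ := 4 * sbar^2 * (volume Q).toReal * M^2 with hC
  have hCnn : 0 ≤ C := by positivity
  have hterm_bad : ∀ p ∈ Kf, s p.1 N * s p.2 N * I p ≤ C := by
    intro p _
    calc s p.1 N * s p.2 N * I p ≤ s p.1 N * s p.2 N * |I p| :=
          mul_le_mul_of_nonneg_left (le_abs_self _) (mul_nonneg (hs0 _ _) (hs0 _ _))
      _ ≤ (sbar * sbar) * ((volume Q).toReal * (4 * M^2)) := by
          refine mul_le_mul ?_ (hIb _ _) (abs_nonneg _) (by positivity)
          exact mul_le_mul (hsbar _ _) (hsbar _ _) (hs0 _ _) hsb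
      _ = C := by rw [hC]; ring
  have hterm_good : ∀ p ∈ T.filter (fun p => ¬ ε ≤ s p.1 N * s p.2 N * |I p|),
      s p.1 N * s p.2 N * I p ≤ ε := by
    intro p hp
    have hlt : s p.1 N * s p.2 N * |I p| < ε := by
      have := (Finset.mem_filter.mp hp).2
      linarith [not_le.mp this]
    calc s p.1 N * s p.2 N * I p ≤ s p.1 N * s p.2 N * |I p| :=
          mul_le_mul_of_nonneg_left (le_abs_self _) (mul_nonneg (hs0 _ _) (hs0 _ _))
      _ ≤ ε := hlt.le
  have hTcard : (T.card : ℝ) = (N:ℝ)^2 := by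
    have h : T.card = N * N := by simp [hT, Nat.card_Icc]
    rw [h]; push_cast; ring
  have hsum_le : ∑ p ∈ T, s p.1 N * s p.2 N * I p
      ≤ (Kf.card : ℝ) * C + (N:ℝ)^2 * ε := by
    rw [← Finset.sum_filter_add_sum_filter_not T (fun p => ε ≤ s p.1 N * s p.2 N * |I p|)]
    have h1 : ∑ p ∈ Kf, s p.1 N * s p.2 N * I p ≤ (Kf.card : ℝ) * C := by
      calc ∑ p ∈ Kf, s p.1 N * s p.2 N * I p ≤ ∑ _p ∈ Kf, C :=
            Finset.sum_le_sum hterm_bad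
        _ = (Kf.card : ℝ) * C := by rw [Finset.sum_const, nsmul_eq_mul]
    have h2 : ∑ p ∈ T.filter (fun p => ¬ ε ≤ s p.1 N * s p.2 N * |I p|),
        s p.1 N * s p.2 N * I p ≤ (N:ℝ)^2 * ε := by
      calc ∑ p ∈ T.filter (fun p => ¬ ε ≤ s p.1 N * s p.2 N * |I p|),
            s p.1 N * s p.2 N * I p
          ≤ ∑ _p ∈ T.filter (fun p => ¬ ε ≤ s p.1 N * s p.2 N * |I p|), ε :=
            Finset.sum_le_sum hterm_good
        _ = ((T.filter (fun p => ¬ ε ≤ s p.1 N * s p.2 N * |I p|)).card : ℝ) * ε := by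
            rw [Finset.sum_const, nsmul_eq_mul]
        _ ≤ (N:ℝ)^2 * ε := by
            refine mul_le_mul_of_nonneg_right ?_ hε.le
            rw [← hTcard]
            exact_mod_cast Finset.card_filter_le _ _
    linarith
  -- put everything together
  have hLHS : ∫ x in Q, ((1 / (N : ℝ)) * ∑ n ∈ Finset.Icc 1 N, s n N * f n x) ^ 2
      = (1/(N:ℝ))^2 * ∑ p ∈ T, s p.1 N * s p.2 N * I p := by
    simp_rw [mul_pow]
    rw [integral_const_mul, hexp]
  rw [hLHS]
  calc (1/(N:ℝ))^2 * ∑ p ∈ T, s p.1 N * s p.2 N * I p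
      ≤ (1/(N:ℝ))^2 * ((Kf.card : ℝ) * C + (N:ℝ)^2 * ε) :=
        mul_le_mul_of_nonneg_left hsum_le (by positivity)
    _ = C * (Kf.card : ℝ) / (N:ℝ)^2 + ε := by
        rw [one_div_pow, mul_add, ← mul_assoc (1/(N:ℝ)^2) ((N:ℝ)^2) ε, one_div_mul_cancel hNpos.ne', one_mul]
        ring
end

section
/- Let H be a real Hilbert space and let {v_n} be a bounded sequence in H converging weakly to v ∈ H. Then there exists a subsequence {v_{n_j}} such that for every further subsequence {v_{n_{j_l}}}_{l≥1} of {v_{n_j}} and for every regular summation method {s_{l,N}}, the weighted averages (1/N) Σ_{l=1}^N s_{l,N} v_{n_{j_l}} converge in the norm of H to v as N → ∞. -/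
open Filter Finset
open scoped RealInnerProductSpace

/-- Extraction lemma: from a weakly null sequence, extract a subsequence with
rapidly decaying pairwise inner products. -/
lemma banachSaks_extraction {H : Type*} [NormedAddCommGroup H] [InnerProductSpace ℝ H]
    (u : ℕ → H) (hu : ∀ w : H, Filter.Tendsto (fun n : ℕ => ⟪u n, w⟫) Filter.atTop (nhds 0)) :
    ∃ φ : ℕ → ℕ, StrictMono φ ∧ ∀ i j, i < j → |⟪u (φ i), u (φ j)⟫| ≤ (1/4 : ℝ) ^ j := by
  have hstep : ∀ m j : ℕ, ∃ n, m < n ∧ ∀ k ≤ m, |⟪u k, u n⟫| ≤ (1/4 : ℝ) ^ j := by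
    intro m j
    have hpos : (0 : ℝ) < (1/4 : ℝ) ^ j := by positivity
    have key : ∀ k : ℕ, ∀ᶠ n in atTop, |⟪u k, u n⟫| ≤ (1/4 : ℝ) ^ j := by
      intro k
      have h := hu (u k)
      have h2 : ∀ᶠ n in atTop, |⟪u n, u k⟫| < (1/4 : ℝ) ^ j := by
        have := Metric.tendsto_nhds.mp h _ hpos
        simpa [Real.dist_eq] using this
      filter_upwards [h2] with n hn
      rw [real_inner_comm]
      exact hn.le
    have hall : ∀ᶠ n in atTop, ∀ k ∈ Finset.range (m + 1), |⟪u k, u n⟫| ≤ (1/4 : ℝ) ^ j :=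
      (Filter.eventually_all_finset _).mpr fun k _ => key k
    obtain ⟨n, hn1, hn2⟩ := ((eventually_gt_atTop m).and hall).exists
    exact ⟨n, hn1, fun k hk => hn2 k (Finset.mem_range.mpr (Nat.lt_succ_of_le hk))⟩
  choose next hnext1 hnext2 using hstep
  set φ : ℕ → ℕ := fun j => Nat.rec 0 (fun j ih => next ih (j + 1)) j with hφdef
  have hφsucc : ∀ j, φ (j + 1) = next (φ j) (j + 1) := fun j => rfl
  have hmono : StrictMono φ := strictMono_nat_of_lt_succ fun j => by
    rw [hφsucc]; exact hnext1 _ _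
  refine ⟨φ, hmono, ?_⟩
  intro i j hij
  obtain ⟨j', rfl⟩ := Nat.exists_eq_add_of_lt hij
  have hij' : i ≤ i + j' := Nat.le_add_right _ _
  have : φ i ≤ φ (i + j') := hmono.monotone hij'
  rw [hφsucc]
  exact hnext2 (φ (i + j')) (i + j' + 1) (φ i) this

/-- Banach–Saks property combined with Rosenthal's alternative: a bounded weakly
convergent sequence in a real Hilbert space has a subsequence all of whose further
subsequences have norm-convergent weighted averages (for every regular summation
method), with limit the weak limit `v`. -/
theorem banachSaks_rosenthal
    {H : Type*} [NormedAddCommGroup H] [InnerProductSpace ℝ H] [CompleteSpace H]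
    (v : ℕ → H) (hbdd : ∃ C : ℝ, ∀ n, ‖v n‖ ≤ C) (vlim : H)
    (hweak : ∀ w : H, Filter.Tendsto (fun n : ℕ => ⟪v n, w⟫) Filter.atTop
      (nhds ⟪vlim, w⟫)) :
    ∃ φ : ℕ → ℕ, StrictMono φ ∧
      ∀ ψ : ℕ → ℕ, StrictMono ψ →
        ∀ (s : ℕ → ℕ → ℝ) (sbar : ℝ), IsRegularSummation s sbar →
          Filter.Tendsto
            (fun N : ℕ => (1 / (N : ℝ)) • ∑ l ∈ Finset.Icc 1 N, s l N • v (φ (ψ l)))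
            Filter.atTop (nhds vlim) := by
  obtain ⟨C, hC⟩ := hbdd
  set u : ℕ → H := fun n => v n - vlim with hu_def
  have hu : ∀ w : H, Filter.Tendsto (fun n : ℕ => ⟪u n, w⟫) Filter.atTop (nhds 0) := by
    intro w
    have h := (hweak w).sub_const ⟪vlim, w⟫
    simpa [hu_def, inner_sub_left, sub_self] using h
  set C' : ℝ := C + ‖vlim‖ with hC'_def
  have hC' : ∀ n, ‖u n‖ ≤ C' := fun n =>
    (norm_sub_le _ _).trans (add_le_add_left (hC n) _)
  have hC'0 : (0 : ℝ) ≤ C' := (norm_nonneg _).trans (hC' 0)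
  obtain ⟨φ, hφ, hinner⟩ := banachSaks_extraction u hu
  refine ⟨φ, hφ, ?_⟩
  intro ψ hψ s sbar ⟨hs0, hsb, _hszero, hssum⟩
  have hsbar0 : (0 : ℝ) ≤ sbar := (hs0 0 0).trans (hsb 0 0)
  -- pairwise bound along the subsequence
  have hpair : ∀ l m : ℕ, l ≠ m →
      |⟪u (φ (ψ l)), u (φ (ψ m))⟫| ≤ (1/2 : ℝ) ^ l * (1/2 : ℝ) ^ m := by
    have base : ∀ l m : ℕ, l < m →
        |⟪u (φ (ψ l)), u (φ (ψ m))⟫| ≤ (1/2 : ℝ) ^ l * (1/2 : ℝ) ^ m := by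
      intro l m hlm
      have h1 : |⟪u (φ (ψ l)), u (φ (ψ m))⟫| ≤ (1/4 : ℝ) ^ (ψ m) :=
        hinner _ _ (hψ hlm)
      have h2 : ((1:ℝ)/4) ^ (ψ m) ≤ (1/4 : ℝ) ^ m :=
        pow_le_pow_of_le_one (by norm_num) (by norm_num) (hψ.le_apply)
      have h3 : ((1:ℝ)/4) ^ m = (1/2 : ℝ) ^ m * (1/2 : ℝ) ^ m := by
        rw [← mul_pow]; norm_num
      have h4 : ((1:ℝ)/2) ^ m ≤ (1/2 : ℝ) ^ l :=
        pow_le_pow_of_le_one (by norm_num) (by norm_num) hlm.le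
      calc |⟪u (φ (ψ l)), u (φ (ψ m))⟫| ≤ (1/4 : ℝ) ^ (ψ m) := h1
        _ ≤ (1/4 : ℝ) ^ m := h2
        _ = (1/2 : ℝ) ^ m * (1/2 : ℝ) ^ m := h3
        _ ≤ (1/2 : ℝ) ^ l * (1/2 : ℝ) ^ m := by
            apply mul_le_mul_of_nonneg_right h4 (by positivity)
    intro l m h
    rcases h.lt_or_gt with h | h
    · exact base l m h
    · rw [real_inner_comm, mul_comm]
      exact base m l h
  -- the centered partial sums
  set SN : ℕ → H := fun N => ∑ l ∈ Finset.Icc 1 N, s l N • u (φ (ψ l)) with hSN_def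
  set K : ℝ := sbar ^ 2 * C' ^ 2 + 4 * sbar ^ 2 with hK_def
  have hK0 : (0 : ℝ) ≤ K := by positivity
  have hnormsq : ∀ N : ℕ, ‖SN N‖ ^ 2 ≤ sbar ^ 2 * C' ^ 2 * N + 4 * sbar ^ 2 := by
    intro N
    have hexp : ‖SN N‖ ^ 2 = ∑ l ∈ Finset.Icc 1 N, ∑ m ∈ Finset.Icc 1 N,
        s l N * s m N * ⟪u (φ (ψ l)), u (φ (ψ m))⟫ := by
      rw [← real_inner_self_eq_norm_sq, hSN_def, sum_inner]
      refine Finset.sum_congr rfl fun l _ => ?_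
      rw [inner_sum]
      refine Finset.sum_congr rfl fun m _ => ?_
      rw [real_inner_smul_left, real_inner_smul_right]; ring
    rw [hexp]
    have hbound : ∀ l ∈ Finset.Icc 1 N, ∀ m ∈ Finset.Icc 1 N,
        s l N * s m N * ⟪u (φ (ψ l)), u (φ (ψ m))⟫ ≤
          (if l = m then sbar ^ 2 * C' ^ 2 else 0) +
            sbar ^ 2 * ((1/2 : ℝ) ^ l * (1/2 : ℝ) ^ m) := by
      intro l _ m _
      have hss : s l N * s m N ≤ sbar ^ 2 := by
        have := mul_le_mul (hsb l N) (hsb m N) (hs0 m N) hsbar0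
        simpa [sq] using this
      have hss0 : 0 ≤ s l N * s m N := mul_nonneg (hs0 l N) (hs0 m N)
      by_cases hlm : l = m
      · subst hlm
        simp only [if_pos rfl]
        have h1 : ⟪u (φ (ψ l)), u (φ (ψ l))⟫ = ‖u (φ (ψ l))‖ ^ 2 :=
          real_inner_self_eq_norm_sq _
        have h2 : ‖u (φ (ψ l))‖ ^ 2 ≤ C' ^ 2 := by
          have := hC' (φ (ψ l))
          nlinarith [norm_nonneg (u (φ (ψ l)))]
        have h3 : s l N * s l N * ⟪u (φ (ψ l)), u (φ (ψ l))⟫ ≤ sbar ^ 2 * C' ^ 2 := by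
          rw [h1]
          exact mul_le_mul hss h2 (by positivity) (by positivity)
        simp only [if_true]
        have h4 : (0:ℝ) ≤ sbar ^ 2 * ((1/2 : ℝ) ^ l * (1/2 : ℝ) ^ l) := by positivity
        exact h3.trans (le_add_of_nonneg_right h4)
      · simp only [if_neg hlm, zero_add]
        have h1 := hpair l m hlm
        calc s l N * s m N * ⟪u (φ (ψ l)), u (φ (ψ m))⟫
            ≤ s l N * s m N * |⟪u (φ (ψ l)), u (φ (ψ m))⟫| := by
              exact mul_le_mul_of_nonneg_left (le_abs_self _) hss0
          _ ≤ sbar ^ 2 * ((1/2 : ℝ) ^ l * (1/2 : ℝ) ^ m) := by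
              apply mul_le_mul hss h1 (abs_nonneg _) (by positivity)
    calc ∑ l ∈ Finset.Icc 1 N, ∑ m ∈ Finset.Icc 1 N,
          s l N * s m N * ⟪u (φ (ψ l)), u (φ (ψ m))⟫
        ≤ ∑ l ∈ Finset.Icc 1 N, ∑ m ∈ Finset.Icc 1 N,
            ((if l = m then sbar ^ 2 * C' ^ 2 else 0) +
              sbar ^ 2 * ((1/2 : ℝ) ^ l * (1/2 : ℝ) ^ m)) := by
          refine Finset.sum_le_sum fun l hl => Finset.sum_le_sum fun m hm => ?_
          exact hbound l hl m hm
      _ = (∑ l ∈ Finset.Icc 1 N, ∑ m ∈ Finset.Icc 1 N,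
            (if l = m then sbar ^ 2 * C' ^ 2 else 0)) +
          sbar ^ 2 * ((∑ l ∈ Finset.Icc 1 N, (1/2 : ℝ) ^ l) *
            (∑ m ∈ Finset.Icc 1 N, (1/2 : ℝ) ^ m)) := by
          simp only [Finset.sum_add_distrib]
          congr 1
          rw [Finset.sum_mul_sum, Finset.mul_sum]
          refine Finset.sum_congr rfl fun l _ => ?_
          rw [Finset.mul_sum]
      _ ≤ sbar ^ 2 * C' ^ 2 * N + 4 * sbar ^ 2 := by
          have hgeo : ∑ l ∈ Finset.Icc 1 N, (1/2 : ℝ) ^ l ≤ 2 := by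
            calc ∑ l ∈ Finset.Icc 1 N, (1/2 : ℝ) ^ l
                ≤ ∑ l ∈ Finset.range (N + 1), (1/2 : ℝ) ^ l := by
                  apply Finset.sum_le_sum_of_subset_of_nonneg
                  · intro x hx
                    rw [Finset.mem_range]
                    exact Nat.lt_succ_of_le (Finset.mem_Icc.mp hx).2
                  · intros; positivity
              _ ≤ 2 := by
                  have := sum_geometric_two_le (N + 1)
                  simpa using this
          have hgeo0 : (0:ℝ) ≤ ∑ l ∈ Finset.Icc 1 N, (1/2 : ℝ) ^ l :=
            Finset.sum_nonneg fun _ _ => by positivity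
          have hdiag : ∑ l ∈ Finset.Icc 1 N, ∑ m ∈ Finset.Icc 1 N,
              (if l = m then sbar ^ 2 * C' ^ 2 else 0) = sbar ^ 2 * C' ^ 2 * N := by
            have : ∀ l ∈ Finset.Icc 1 N, ∑ m ∈ Finset.Icc 1 N,
                (if l = m then sbar ^ 2 * C' ^ 2 else 0) = sbar ^ 2 * C' ^ 2 := by
              intro l hl
              rw [Finset.sum_ite_eq (Finset.Icc 1 N) l fun _ => sbar ^ 2 * C' ^ 2]
              simp [hl]
            rw [Finset.sum_congr rfl this, Finset.sum_const, Nat.card_Icc]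
            simp [mul_comm]
          rw [hdiag]
          have : sbar ^ 2 * ((∑ l ∈ Finset.Icc 1 N, (1/2 : ℝ) ^ l) *
              (∑ m ∈ Finset.Icc 1 N, (1/2 : ℝ) ^ m)) ≤ 4 * sbar ^ 2 := by
            have h5 : (∑ l ∈ Finset.Icc 1 N, (1/2 : ℝ) ^ l) *
                (∑ m ∈ Finset.Icc 1 N, (1/2 : ℝ) ^ m) ≤ 2 * 2 :=
              mul_le_mul hgeo hgeo hgeo0 (by norm_num)
            nlinarith [sq_nonneg sbar]
          linarith
  -- the averaged centered sums tend to 0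
  set w : ℕ → H := fun N => (1 / (N : ℝ)) • SN N with hw_def
  have hwsq : ∀ N : ℕ, 1 ≤ N → ‖w N‖ ^ 2 ≤ K / N := by
    intro N hN
    have hN0 : (0 : ℝ) < N := by exact_mod_cast hN
    have h1 : ‖w N‖ ^ 2 = (1 / (N:ℝ)) ^ 2 * ‖SN N‖ ^ 2 := by
      rw [hw_def]
      simp only [norm_smul, Real.norm_eq_abs, mul_pow]
      rw [abs_of_nonneg (by positivity)]
    rw [h1]
    have h2 : ((1:ℝ) / N) ^ 2 * ‖SN N‖ ^ 2 ≤ (1 / N) ^ 2 * (sbar ^ 2 * C' ^ 2 * N + 4 * sbar ^ 2) :=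
      mul_le_mul_of_nonneg_left (hnormsq N) (by positivity)
    refine h2.trans ?_
    rw [div_pow, one_pow, hK_def]
    rw [div_mul_eq_mul_div, one_mul, div_le_div_iff₀ (by positivity) hN0]
    have hN1 : (1:ℝ) ≤ N := by exact_mod_cast hN
    nlinarith [mul_nonneg (sq_nonneg sbar) (mul_nonneg (sub_nonneg.2 hN1) hN0.le),
      sq_nonneg (sbar * C')]
  have hwlim : Filter.Tendsto w Filter.atTop (nhds 0) := by
    rw [tendsto_zero_iff_norm_tendsto_zero]
    have hle : ∀ᶠ N : ℕ in Filter.atTop, ‖w N‖ ≤ Real.sqrt (K / N) := by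
      filter_upwards [eventually_ge_atTop 1] with N hN
      have h := hwsq N hN
      have h2 : ‖w N‖ = Real.sqrt (‖w N‖ ^ 2) := by
        rw [Real.sqrt_sq (norm_nonneg _)]
      rw [h2]
      exact Real.sqrt_le_sqrt h
    have hg : Filter.Tendsto (fun N : ℕ => Real.sqrt (K / N)) Filter.atTop (nhds 0) := by
      have h1 : Filter.Tendsto (fun N : ℕ => K / (N : ℝ)) Filter.atTop (nhds 0) :=
        tendsto_const_div_atTop_nhds_zero_nat K
      have h2 := h1.sqrt
      simpa using h2
    exact squeeze_zero' (Filter.Eventually.of_forall fun N => norm_nonneg _) hle hg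
  -- conclude
  have heq : (fun N : ℕ =>
      (1 / (N : ℝ)) • ∑ l ∈ Finset.Icc 1 N, s l N • v (φ (ψ l))) =ᶠ[Filter.atTop]
      (fun N : ℕ => w N + vlim) := by
    filter_upwards [eventually_ge_atTop 1] with N hN
    have hN0 : (N : ℝ) ≠ 0 := by positivity
    have hsum : ∑ l ∈ Finset.Icc 1 N, s l N • v (φ (ψ l)) =
        SN N + (N : ℝ) • vlim := by
      rw [hSN_def]
      rw [← hssum N, Finset.sum_smul, ← Finset.sum_add_distrib]
      refine Finset.sum_congr rfl fun l _ => ?_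
      rw [hu_def]
      simp [smul_sub]
    rw [hsum, smul_add, hw_def, smul_smul]
    rw [one_div_mul_cancel hN0, one_smul]
  have : Filter.Tendsto (fun N : ℕ => w N + vlim) Filter.atTop (nhds (0 + vlim)) :=
    hwlim.add_const vlim
  rw [zero_add] at this
  exact Filter.Tendsto.congr' heq.symm this
end
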